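/- arXiv:1112.3981 — 4 statements merged into one kernel-verified Lean document; each statement's English description precedes it below -/
import Mathlib

section
/- Let Γ be an n-space group whose center Z(Γ) is trivial, and let N_E(Γ) be the normalizer of Γ in Isom(E^n). Then Γ has finite index in N_E(Γ), and N_E(Γ) is itself an n-space group, i.e. the action of N_E(Γ) on E^n is properly discontinuous and cocompact. -/
noncomputable section

abbrev Euc (n : ℕ) : Type := EuclideanSpace ℝ (Fin n)

abbrev AffG (n : ℕ) : Type := Euc n ≃ᵃ[ℝ] Euc n

/-- The translation `x ↦ a + x` as an affinity of `Eⁿ`. -/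
def transl {n : ℕ} (a : Euc n) : AffG n := AffineEquiv.constVAdd ℝ (Euc n) a

/-- `Span(H)` : the linear span of the translation vectors of `H`. -/
def spanOf {n : ℕ} (H : Subgroup (AffG n)) : Submodule ℝ (Euc n) :=
  Submodule.span ℝ {a : Euc n | transl a ∈ H}

/-- An `n`-space group: a group of isometries acting properly discontinuously
and cocompactly on `Eⁿ`. -/
def IsSpaceGroup {n : ℕ} (Γ : Subgroup (AffG n)) : Prop :=
  (∀ f ∈ Γ, Isometry (⇑f)) ∧
  (∀ K : Set (Euc n), IsCompact K →
    {γ : AffG n | γ ∈ Γ ∧ ((⇑γ '' K) ∩ K).Nonempty}.Finite) ∧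
  (∃ K : Set (Euc n), IsCompact K ∧ ∀ x : Euc n, ∃ γ ∈ Γ, γ x ∈ K)

/-- `N` is a complete normal subgroup of `Γ`:  it is normal in `Γ` and
equals `{a+A ∈ Γ : a ∈ V ∧ V^⊥ ⊆ Fix A}` where `V = Span N`
(for `f = a + A` we have `a = f 0` and `A = f.linear`). -/
def IsCompleteNormal {n : ℕ} (N Γ : Subgroup (AffG n)) : Prop :=
  N ≤ Γ ∧ (∀ γ ∈ Γ, ∀ ν ∈ N, γ * ν * γ⁻¹ ∈ N) ∧
  (∀ f : AffG n, f ∈ N ↔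
    f ∈ Γ ∧ f 0 ∈ spanOf N ∧ ∀ x ∈ (spanOf N)ᗮ, f.linear x = x)

/-- Membership in the kernel `K = {b+B ∈ Γ : b ∈ V^⊥ ∧ V ⊆ Fix B}`
of the action of `Γ` on `V`. -/
def InKernel {n : ℕ} (Γ : Subgroup (AffG n)) (V : Submodule ℝ (Euc n)) (f : AffG n) : Prop :=
  f ∈ Γ ∧ f 0 ∈ Vᗮ ∧ ∀ x ∈ V, f.linear x = x

end



noncomputable section
open scoped RealInnerProductSpace

namespace SG2
variable {E : Type*} [NormedAddCommGroup E] [NormedSpace ℝ E]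

abbrev CLM (E : Type*) [NormedAddCommGroup E] [NormedSpace ℝ E] := E →L[ℝ] E

/-- pointwise norm preserving -/
def NP (U : CLM E) : Prop := ∀ x, ‖U x‖ = ‖x‖

lemma NP.mul {U V : CLM E} (hU : NP U) (hV : NP V) : NP (U * V) := by
  intro x; have : (U * V) x = U (V x) := rfl
  rw [this, hU, hV]

lemma NP.pow {U : CLM E} (hU : NP U) (j : ℕ) : NP (U ^ j) := by
  induction j with
  | zero => intro x; simp
  | succ k ih => rw [pow_succ]; exact ih.mul hU

lemma NP.norm_mul_le {U : CLM E} (hU : NP U) (M : CLM E) : ‖M * U‖ ≤ ‖M‖ := by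
  apply ContinuousLinearMap.opNorm_le_bound _ (norm_nonneg M)
  intro x
  have : (M * U) x = M (U x) := rfl
  rw [this]
  calc ‖M (U x)‖ ≤ ‖M‖ * ‖U x‖ := M.le_opNorm _
  _ = ‖M‖ * ‖x‖ := by rw [hU x]

lemma NP.norm_le_one {U : CLM E} (hU : NP U) : ‖U‖ ≤ 1 :=
  ContinuousLinearMap.opNorm_le_bound _ zero_le_one (fun x => by rw [hU x, one_mul])

lemma comm_est' (A B : CLM E) : ‖A * B - B * A‖ ≤ 2 * ‖A - 1‖ * ‖B - 1‖ := by
  have key : A * B - B * A = (A - 1) * (B - 1) - (B - 1) * (A - 1) := by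
    simp only [mul_sub, sub_mul, mul_one, one_mul]; abel
  rw [key]
  calc ‖(A - 1) * (B - 1) - (B - 1) * (A - 1)‖
      ≤ ‖(A - 1) * (B - 1)‖ + ‖(B - 1) * (A - 1)‖ := norm_sub_le _ _
  _ ≤ ‖A - 1‖ * ‖B - 1‖ + ‖B - 1‖ * ‖A - 1‖ := by
      gcongr <;> exact norm_mul_le _ _
  _ = 2 * ‖A - 1‖ * ‖B - 1‖ := by ring

/-- Key rotation lemma (Claim C''): if `D = [A,T]` commutes with `A`, `T` close to `1`,
then `D = 1`. -/
theorem rot_key {A A' T T' : CLM E}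
    (hA : NP A) (hA' : NP A') (hT : NP T) (hT' : NP T')
    (hAA' : A * A' = 1) (hA'A : A' * A = 1) (hTT' : T * T' = 1) (hT'T : T' * T = 1)
    (hTnorm : ‖T - 1‖ ≤ 1/8)
    (hcomm : A * (A * T * A' * T') = (A * T * A' * T') * A) :
    A * T * A' * T' = 1 := by
  set D : CLM E := A * T * A' * T' with hD
  have hDT : D * T = A * T * A' := by
    rw [hD, mul_assoc, hT'T, mul_one]
  have hcommD : Commute A D := hcomm
  -- T_j = A^j * T * A'^j = D^j * T
  have hpowinv : ∀ j : ℕ, A ^ j * A' ^ j = 1 := by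
    intro j
    induction j with
    | zero => simp
    | succ k ih =>
      rw [pow_succ, pow_succ']
      calc A ^ k * A * (A' * A' ^ k) = A ^ k * (A * A') * A' ^ k := by
            simp only [mul_assoc]
      _ = 1 := by rw [hAA', mul_one, ih]
  have hTj : ∀ j : ℕ, A ^ j * T * A' ^ j = D ^ j * T := by
    intro j
    induction j with
    | zero => simp
    | succ k ih =>
      have step : A ^ (k+1) * T * A' ^ (k+1) = A * (A ^ k * T * A' ^ k) * A' := by
        rw [pow_succ', pow_succ]
        simp only [mul_assoc]
      rw [step, ih]
      have : A * (D ^ k * T) * A' = D ^ k * (A * T * A') := by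
        rw [← mul_assoc, (hcommD.pow_right k).eq, mul_assoc, mul_assoc, mul_assoc]
      rw [this, ← hDT, ← mul_assoc, ← pow_succ]
  -- norm bound on D^j - 1
  have hbound : ∀ j : ℕ, ‖D ^ j - 1‖ ≤ 1/2 := by
    intro j
    have e1 : D ^ j - 1 = (A ^ j * T * A' ^ j - T) * T' := by
      have : D ^ j = D ^ j * T * T' := by rw [mul_assoc, hTT', mul_one]
      rw [this, ← hTj, sub_mul, hTT']
    have e2 : A ^ j * T * A' ^ j - T = (A ^ j * T - T * A ^ j) * A' ^ j := by
      rw [sub_mul, mul_assoc T _ _, hpowinv, mul_one]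
    rw [e1, e2]
    calc ‖(A ^ j * T - T * A ^ j) * A' ^ j * T'‖
        ≤ ‖(A ^ j * T - T * A ^ j) * A' ^ j‖ := hT'.norm_mul_le _
    _ ≤ ‖A ^ j * T - T * A ^ j‖ := (hA'.pow j).norm_mul_le _
    _ ≤ 2 * ‖A ^ j - 1‖ * ‖T - 1‖ := comm_est' _ _
    _ ≤ 2 * 2 * (1/8) := by
        have h2 : ‖A ^ j - 1‖ ≤ 2 := by
          calc ‖A ^ j - 1‖ ≤ ‖A ^ j‖ + ‖(1 : CLM E)‖ := norm_sub_le _ _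
          _ ≤ 1 + 1 := by
              gcongr
              · exact (hA.pow j).norm_le_one
              · exact ContinuousLinearMap.norm_id_le
          _ = 2 := by norm_num
        have ht : (0:ℝ) ≤ ‖T - 1‖ := norm_nonneg _
        nlinarith [norm_nonneg (A ^ j - 1)]
    _ = 1/2 := by norm_num
  -- sup argument
  set S : Set ℝ := Set.range (fun j : ℕ => ‖D ^ j - 1‖) with hS
  have hne : S.Nonempty := ⟨‖D ^ 0 - 1‖, ⟨0, rfl⟩⟩
  have hbdd : BddAbove S := by
    refine ⟨1/2, ?_⟩; rintro x ⟨j, rfl⟩; exact hbound j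
  set m : ℝ := sSup S with hm
  have hmle : m ≤ 1/2 := csSup_le hne (by rintro x ⟨j, rfl⟩; exact hbound j)
  have hxle : ∀ j : ℕ, ‖D ^ j - 1‖ ≤ m := fun j => le_csSup hbdd ⟨j, rfl⟩
  have hsq : ∀ j : ℕ, 2 * ‖D ^ j - 1‖ - ‖D ^ j - 1‖ ^ 2 ≤ m := by
    intro j
    set X := D ^ j - 1 with hX
    have e : D ^ (2 * j) - 1 = (X + X) + X * X := by
      have h2j : D ^ (2 * j) = D ^ j * D ^ j := by rw [two_mul, pow_add]
      rw [h2j, hX]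
      simp only [mul_sub, sub_mul, mul_one, one_mul]
      abel
    have hub := hxle (2 * j)
    rw [e] at hub
    have h1 : ‖X + X‖ ≤ ‖X + X + X * X‖ + ‖X * X‖ := by
      calc ‖X + X‖ = ‖(X + X + X * X) + (-(X * X))‖ := by rw [add_neg_cancel_right]
      _ ≤ ‖X + X + X * X‖ + ‖-(X * X)‖ := norm_add_le _ _
      _ = ‖X + X + X * X‖ + ‖X * X‖ := by rw [norm_neg]
    have h2 : ‖X + X‖ = 2 * ‖X‖ := by
      rw [← two_smul ℝ X, norm_smul]; simp
    have h3 : ‖X * X‖ ≤ ‖X‖ ^ 2 := by rw [sq]; exact norm_mul_le _ _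
    nlinarith [hub, h1, h2, h3]
  have hm0 : m ≤ 0 := by
    by_contra hpos
    push_neg at hpos
    -- ∀ j, x_j ≤ (m + m^2)/2, so m ≤ (m+m^2)/2, so m ≥ 1
    have key : ∀ j : ℕ, ‖D ^ j - 1‖ ≤ (m + m ^ 2) / 2 := by
      intro j
      have h := hsq j
      have hx := hxle j
      have hx0 : (0:ℝ) ≤ ‖D ^ j - 1‖ := norm_nonneg _
      nlinarith
    have : m ≤ (m + m ^ 2) / 2 := csSup_le hne (by rintro x ⟨j, rfl⟩; exact key j)
    nlinarith
  have hD1 : ‖D - 1‖ ≤ 0 := by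
    have := hxle 1; rw [pow_one] at this; linarith
  have hz : D - 1 = 0 := by
    have hnn := norm_nonneg (D - 1)
    exact norm_eq_zero.mp (le_antisymm hD1 hnn)
  exact sub_eq_zero.mp hz

end SG2

namespace SG
open SG2
variable {n : ℕ}
/-- linear part as a continuous linear map -/
def Rt (γ : AffG n) : Euc n →L[ℝ] Euc n :=
  LinearMap.toContinuousLinearMap (γ.linear : Euc n →ₗ[ℝ] Euc n)

lemma Rt_apply (γ : AffG n) (x : Euc n) : Rt γ x = γ.linear x := rfl

lemma decomp (γ : AffG n) (x : Euc n) : γ x = Rt γ x + γ 0 := by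
  have h := AffineMap.decomp (γ : Euc n →ᵃ[ℝ] Euc n)
  have : γ x = ((γ : Euc n →ᵃ[ℝ] Euc n) : Euc n → Euc n) x := rfl
  rw [this, h]; rfl

lemma mul_apply (γ δ : AffG n) (x : Euc n) : (γ * δ) x = γ (δ x) := rfl

lemma one_apply (x : Euc n) : (1 : AffG n) x = x := rfl

lemma inv_apply_self (γ : AffG n) (x : Euc n) : γ⁻¹ (γ x) = x := γ.symm_apply_apply x
lemma apply_inv_self (γ : AffG n) (x : Euc n) : γ (γ⁻¹ x) = x := γ.apply_symm_apply x

lemma Rt_mul (γ δ : AffG n) : Rt (γ * δ) = Rt γ * Rt δ := by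
  apply ContinuousLinearMap.ext; intro x
  show (γ * δ).linear x = γ.linear (δ.linear x)
  rfl

lemma Rt_one : Rt (1 : AffG n) = 1 := by
  apply ContinuousLinearMap.ext; intro x; rfl

lemma Rt_inv_mul (γ : AffG n) : Rt γ⁻¹ * Rt γ = 1 := by
  rw [← Rt_mul, inv_mul_cancel, Rt_one]

lemma Rt_mul_inv (γ : AffG n) : Rt γ * Rt γ⁻¹ = 1 := by
  rw [← Rt_mul, mul_inv_cancel, Rt_one]

lemma Rt_inv_apply_apply (γ : AffG n) (x : Euc n) : Rt γ⁻¹ (Rt γ x) = x := by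
  have := congrArg (fun M : Euc n →L[ℝ] Euc n => M x) (Rt_inv_mul γ)
  simpa using this

lemma Rt_apply_inv_apply (γ : AffG n) (x : Euc n) : Rt γ (Rt γ⁻¹ x) = x := by
  have := congrArg (fun M : Euc n →L[ℝ] Euc n => M x) (Rt_mul_inv γ)
  simpa using this

lemma ext' {γ δ : AffG n} (h1 : Rt γ = Rt δ) (h2 : γ 0 = δ 0) : γ = δ := by
  apply AffineEquiv.toAffineMap_injective
  apply AffineMap.ext; intro x
  have e1 := decomp γ x; have e2 := decomp δ x
  show γ x = δ x
  rw [e1, e2, h1, h2]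

lemma transl_apply (a x : Euc n) : transl a x = a + x := rfl
lemma transl_zero' (a : Euc n) : transl a 0 = a := by simp [transl_apply]
lemma Rt_transl (a : Euc n) : Rt (transl a) = 1 := by
  apply ContinuousLinearMap.ext; intro x; rfl

lemma transl_add (a b : Euc n) : transl (a + b) = transl a * transl b := by
  apply ext'
  · rw [Rt_transl, Rt_mul, Rt_transl, Rt_transl, one_mul]
  · simp [mul_apply, transl_apply]
lemma transl_zero : transl (0 : Euc n) = 1 := by
  apply ext' <;> simp [Rt_transl, Rt_one, transl_apply, one_apply]
lemma transl_neg (a : Euc n) : transl (-a) = (transl a)⁻¹ := by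
  have : transl (-a) * transl a = 1 := by rw [← transl_add]; simp [transl_zero]
  exact eq_inv_of_mul_eq_one_left this
lemma transl_inj {a b : Euc n} (h : transl a = transl b) : a = b := by
  have := congrArg (fun f : AffG n => f 0) h
  simpa [transl_zero'] using this

lemma eq_transl_of_Rt_eq_one {γ : AffG n} (h : Rt γ = 1) : γ = transl (γ 0) := by
  apply ext'
  · rw [h, Rt_transl]
  · simp [transl_zero']

lemma inv_zero' (γ : AffG n) : γ⁻¹ 0 = -(Rt γ⁻¹ (γ 0)) := by
  have h : γ⁻¹ (γ 0) = 0 := inv_apply_self γ 0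
  rw [decomp γ⁻¹ (γ 0)] at h
  linear_combination (norm := module) h

/-- norm-preserving linear part -/
def NI (γ : AffG n) : Prop := ∀ x : Euc n, ‖Rt γ x‖ = ‖x‖

lemma NI_of_isometry {γ : AffG n} (h : Isometry ⇑γ) : NI γ := by
  intro x
  have h0 := h.dist_eq x 0
  rw [dist_eq_norm, dist_eq_norm, decomp γ x, decomp γ 0] at h0
  simpa using h0

lemma NI_inner {γ : AffG n} (h : NI γ) (x y : Euc n) : ⟪Rt γ x, Rt γ y⟫ = ⟪x, y⟫ := by
  rw [real_inner_eq_norm_add_mul_self_sub_norm_mul_self_sub_norm_mul_self_div_two,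
      real_inner_eq_norm_add_mul_self_sub_norm_mul_self_sub_norm_mul_self_div_two x y,
      ← map_add, h, h, h]

lemma NI_norm_le (γ : AffG n) (h : NI γ) : ‖Rt γ‖ ≤ 1 := by
  apply ContinuousLinearMap.opNorm_le_bound _ zero_le_one
  intro x; rw [h x, one_mul]

lemma norm_mul_isom_le {γ : AffG n} (h : NI γ) (M : Euc n →L[ℝ] Euc n) :
    ‖M * Rt γ‖ ≤ ‖M‖ := by
  apply ContinuousLinearMap.opNorm_le_bound _ (norm_nonneg M)
  intro x
  have : (M * Rt γ) x = M (Rt γ x) := rfl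
  rw [this]
  calc ‖M (Rt γ x)‖ ≤ ‖M‖ * ‖Rt γ x‖ := M.le_opNorm _
  _ = ‖M‖ * ‖x‖ := by rw [h x]

lemma norm_isom_mul_le {γ : AffG n} (h : NI γ) (M : Euc n →L[ℝ] Euc n) :
    ‖Rt γ * M‖ ≤ ‖M‖ := by
  apply ContinuousLinearMap.opNorm_le_bound _ (norm_nonneg M)
  intro x
  have : (Rt γ * M) x = Rt γ (M x) := rfl
  rw [this, h (M x)]
  exact M.le_opNorm _

lemma comm_est (A B : Euc n →L[ℝ] Euc n) :
    ‖A * B - B * A‖ ≤ 2 * ‖A - 1‖ * ‖B - 1‖ := by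
  have key : A * B - B * A = (A - 1) * (B - 1) - (B - 1) * (A - 1) := by simp only [mul_sub, sub_mul, mul_one, one_mul]; abel
  rw [key]
  calc ‖(A - 1) * (B - 1) - (B - 1) * (A - 1)‖
      ≤ ‖(A - 1) * (B - 1)‖ + ‖(B - 1) * (A - 1)‖ := norm_sub_le _ _
  _ ≤ ‖A - 1‖ * ‖B - 1‖ + ‖B - 1‖ * ‖A - 1‖ := by
      gcongr <;> exact norm_mul_le _ _
  _ = 2 * ‖A - 1‖ * ‖B - 1‖ := by ring

end SG

namespace SG
open SG2
variable {n : ℕ}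

lemma NI_inv {γ : AffG n} (h : NI γ) : NI γ⁻¹ := by
  intro x
  conv_rhs => rw [← Rt_apply_inv_apply γ x]
  rw [h (Rt γ⁻¹ x)]

lemma NI_mul {γ δ : AffG n} (hγ : NI γ) (hδ : NI δ) : NI (γ * δ) := by
  intro x; rw [Rt_mul]
  have : (Rt γ * Rt δ) x = Rt γ (Rt δ x) := rfl
  rw [this, hγ, hδ]

lemma NI_one : NI (1 : AffG n) := by intro x; rw [Rt_one]; rfl

lemma NI_transl (a : Euc n) : NI (transl a) := by intro x; rw [Rt_transl]; rfl

/-- the commutator -/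
def com (α β : AffG n) : AffG n := α * β * α⁻¹ * β⁻¹

lemma com_mem {Γ : Subgroup (AffG n)} {α β : AffG n} (hα : α ∈ Γ) (hβ : β ∈ Γ) :
    com α β ∈ Γ :=
  mul_mem (mul_mem (mul_mem hα hβ) (inv_mem hα)) (inv_mem hβ)

lemma Rt_com (α β : AffG n) : Rt (com α β) = Rt α * Rt β * Rt α⁻¹ * Rt β⁻¹ := by
  rw [com, Rt_mul, Rt_mul, Rt_mul]

lemma norm_Rt_inv_sub_one_le {α : AffG n} (hα : NI α) :
    ‖Rt α⁻¹ - 1‖ ≤ ‖Rt α - 1‖ := by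
  have key : Rt α⁻¹ - 1 = -((Rt α - 1) * Rt α⁻¹) := by
    rw [sub_mul, Rt_mul_inv, one_mul, neg_sub]
  rw [key, norm_neg]
  exact NP.norm_mul_le (NI_inv hα) _

lemma rot_com_est {α β : AffG n} (hα : NI α) (hβ : NI β) :
    ‖Rt (com α β) - 1‖ ≤ 2 * ‖Rt α - 1‖ * ‖Rt β - 1‖ := by
  have key : Rt (com α β) - 1 = (Rt α * Rt β - Rt β * Rt α) * Rt α⁻¹ * Rt β⁻¹ := by
    rw [Rt_com]
    rw [sub_mul, sub_mul]
    have h1 : Rt β * Rt α * Rt α⁻¹ * Rt β⁻¹ = 1 := by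
      rw [mul_assoc (Rt β) (Rt α) (Rt α⁻¹), Rt_mul_inv, mul_one, Rt_mul_inv]
    rw [h1]
  rw [key]
  calc ‖(Rt α * Rt β - Rt β * Rt α) * Rt α⁻¹ * Rt β⁻¹‖
      ≤ ‖(Rt α * Rt β - Rt β * Rt α) * Rt α⁻¹‖ := NP.norm_mul_le (NI_inv hβ) _
  _ ≤ ‖Rt α * Rt β - Rt β * Rt α‖ := NP.norm_mul_le (NI_inv hα) _
  _ ≤ 2 * ‖Rt α - 1‖ * ‖Rt β - 1‖ := comm_est' _ _

lemma com_zero (α β : AffG n) :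
    (com α β) 0
      = α 0 + Rt α (β 0) - Rt α (Rt β (Rt α⁻¹ (α 0))) - Rt α (Rt β (Rt α⁻¹ (Rt β⁻¹ (β 0)))) := by
  have h1 : (com α β) 0 = α (β (α⁻¹ (β⁻¹ 0))) := rfl
  rw [h1, inv_zero' β]
  rw [decomp α⁻¹ (-(Rt β⁻¹ (β 0))), inv_zero' α]
  rw [decomp β, decomp α]
  simp only [map_neg, map_add]
  abel

lemma com_zero_bound {α β : AffG n} (hα : NI α) (hβ : NI β) :
    ‖(com α β) 0‖ ≤ ‖Rt β - 1‖ * ‖α 0‖ + ‖Rt α - 1‖ * ‖β 0‖ := by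
  rw [com_zero]
  have e : α 0 + Rt α (β 0) - Rt α (Rt β (Rt α⁻¹ (α 0))) - Rt α (Rt β (Rt α⁻¹ (Rt β⁻¹ (β 0))))
      = (α 0 - Rt α (Rt β (Rt α⁻¹ (α 0)))) + (Rt α (β 0) - Rt α (Rt β (Rt α⁻¹ (Rt β⁻¹ (β 0))))) := by
    abel
  rw [e]
  have t1 : ‖α 0 - Rt α (Rt β (Rt α⁻¹ (α 0)))‖ ≤ ‖Rt β - 1‖ * ‖α 0‖ := by
    have e1 : α 0 - Rt α (Rt β (Rt α⁻¹ (α 0)))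
        = Rt α ((Rt α⁻¹ (α 0)) - Rt β (Rt α⁻¹ (α 0))) := by
      rw [map_sub, Rt_apply_inv_apply]
    rw [e1, hα]
    have e2 : Rt α⁻¹ (α 0) - Rt β (Rt α⁻¹ (α 0)) = -((Rt β - 1) (Rt α⁻¹ (α 0))) := by
      simp [ContinuousLinearMap.sub_apply]
    rw [e2, norm_neg]
    calc ‖(Rt β - 1) (Rt α⁻¹ (α 0))‖ ≤ ‖Rt β - 1‖ * ‖Rt α⁻¹ (α 0)‖ :=
          (Rt β - 1).le_opNorm _
    _ = ‖Rt β - 1‖ * ‖α 0‖ := by rw [NI_inv hα]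
  have t2 : ‖Rt α (β 0) - Rt α (Rt β (Rt α⁻¹ (Rt β⁻¹ (β 0))))‖ ≤ ‖Rt α - 1‖ * ‖β 0‖ := by
    have e1 : Rt α (β 0) - Rt α (Rt β (Rt α⁻¹ (Rt β⁻¹ (β 0))))
        = Rt α (Rt β ((Rt β⁻¹ (β 0)) - Rt α⁻¹ (Rt β⁻¹ (β 0)))) := by
      rw [map_sub, map_sub, Rt_apply_inv_apply]
    rw [e1, hα, hβ]
    have e2 : Rt β⁻¹ (β 0) - Rt α⁻¹ (Rt β⁻¹ (β 0)) = -((Rt α⁻¹ - 1) (Rt β⁻¹ (β 0))) := by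
      simp [ContinuousLinearMap.sub_apply]
    rw [e2, norm_neg]
    calc ‖(Rt α⁻¹ - 1) (Rt β⁻¹ (β 0))‖ ≤ ‖Rt α⁻¹ - 1‖ * ‖Rt β⁻¹ (β 0)‖ :=
          (Rt α⁻¹ - 1).le_opNorm _
    _ ≤ ‖Rt α - 1‖ * ‖β 0‖ := by
        gcongr
        · exact norm_Rt_inv_sub_one_le hα
        · rw [NI_inv hβ]
  calc ‖(α 0 - Rt α (Rt β (Rt α⁻¹ (α 0)))) + (Rt α (β 0) - Rt α (Rt β (Rt α⁻¹ (Rt β⁻¹ (β 0)))))‖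
      ≤ ‖α 0 - Rt α (Rt β (Rt α⁻¹ (α 0)))‖ + ‖Rt α (β 0) - Rt α (Rt β (Rt α⁻¹ (Rt β⁻¹ (β 0))))‖ :=
        norm_add_le _ _
  _ ≤ ‖Rt β - 1‖ * ‖α 0‖ + ‖Rt α - 1‖ * ‖β 0‖ := add_le_add t1 t2

lemma com_zero_comm {α β : AffG n} (hcomm : Rt α * Rt β = Rt β * Rt α) :
    (com α β) 0 = (α 0 - Rt β (α 0)) + (Rt α (β 0) - β 0) := by
  rw [com_zero]
  have h1 : Rt α (Rt β (Rt α⁻¹ (α 0))) = Rt β (α 0) := by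
    have : Rt α * Rt β * Rt α⁻¹ = Rt β := by
      rw [hcomm, mul_assoc, Rt_mul_inv, mul_one]
    have h := congrArg (fun M : Euc n →L[ℝ] Euc n => M (α 0)) this
    simpa using h
  have h2 : Rt α (Rt β (Rt α⁻¹ (Rt β⁻¹ (β 0)))) = β 0 := by
    have e : Rt α * Rt β * Rt α⁻¹ * Rt β⁻¹ = 1 := by
      rw [hcomm, mul_assoc (Rt β), Rt_mul_inv, mul_one, Rt_mul_inv]
    have h := congrArg (fun M : Euc n →L[ℝ] Euc n => M (β 0)) e
    simpa using h
  rw [h1, h2]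
  abel

end SG

namespace SG
open SG2
variable {n : ℕ}

lemma mul_assoc4 (A B C D : SG2.CLM (Euc n)) : A * B * C * D = A * (B * C * D) := by
  simp only [mul_assoc]

lemma rot_conj_eq_one {A B A' B' : SG2.CLM (Euc n)}
    (hA'A : A' * A = 1) (hB'B : B' * B = 1) (h : A * B * A' * B' = 1) : A * B = B * A := by
  have h1 : A * B * A' = B := by
    rw [← mul_one (A * B * A'), ← hB'B, ← mul_assoc, h, one_mul]
  rw [← mul_one (A * B), ← hA'A, ← mul_assoc, h1]

/-- The descent lemma: for elements of a discrete group with small rotation parts,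
either `β` is a translation or the rotations commute. -/
lemma descent {Γ : Subgroup (AffG n)} (hiso : ∀ γ ∈ Γ, Isometry (⇑γ))
    {ε₀ : ℝ} (hε₀pos : 0 < ε₀)
    (hD1 : ∀ γ ∈ Γ, ‖γ 0‖ ≤ ε₀ → ‖Rt γ - 1‖ ≤ ε₀ → γ = 1)
    {α β : AffG n} (hαΓ : α ∈ Γ) (hβΓ : β ∈ Γ)
    (hd : ‖Rt α - 1‖ ≤ 1/8) (hε : ‖Rt β - 1‖ ≤ 1/8) :
    Rt β = 1 ∨ Rt α * Rt β = Rt β * Rt α := by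
  classical
  have hNI : ∀ γ ∈ Γ, NI γ := fun γ hγ => NI_of_isometry (hiso γ hγ)
  set γseq : ℕ → AffG n := fun k => Nat.rec β (fun _ g => com α g) k with hγseq
  have hseq0 : γseq 0 = β := rfl
  have hseqS : ∀ k, γseq (k+1) = com α (γseq k) := fun k => rfl
  have hmem : ∀ k, γseq k ∈ Γ := by
    intro k; induction k with
    | zero => exact hβΓ
    | succ k ih => rw [hseqS]; exact com_mem hαΓ ih
  have hNIseq : ∀ k, NI (γseq k) := fun k => hNI _ (hmem k)
  have hNIα : NI α := hNI _ hαΓ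
  -- rotation bound
  have hu : ∀ k, ‖Rt (γseq k) - 1‖ ≤ (1/8) * (1/4)^k := by
    intro k; induction k with
    | zero => rw [hseq0, pow_zero, mul_one]; exact hε
    | succ k ih =>
      rw [hseqS]
      have h1 : (0:ℝ) ≤ ‖Rt (γseq k) - 1‖ := norm_nonneg _
      have hp : ‖Rt α - 1‖ * ‖Rt (γseq k) - 1‖ ≤ (1/8) * ((1/8) * (1/4)^k) :=
        mul_le_mul hd ih h1 (by norm_num)
      calc ‖Rt (com α (γseq k)) - 1‖ ≤ 2 * ‖Rt α - 1‖ * ‖Rt (γseq k) - 1‖ :=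
            rot_com_est hNIα (hNIseq k)
      _ ≤ (1/8) * (1/4)^(k+1) := by rw [mul_assoc]; rw [pow_succ]; nlinarith
  -- translation bound
  set K : ℝ := ‖β 0‖ + ‖α 0‖ with hK
  have hKnn : 0 ≤ K := by positivity
  have hb : ∀ k, ‖(γseq k) 0‖ ≤ K * (1/4)^k := by
    intro k; induction k with
    | zero =>
      rw [hseq0, pow_zero, mul_one, hK]
      have := norm_nonneg (α 0); linarith
    | succ k ih =>
      rw [hseqS]
      have e1 : ‖Rt (γseq k) - 1‖ * ‖α 0‖ ≤ ((1/8) * (1/4)^k) * ‖α 0‖ :=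
        mul_le_mul_of_nonneg_right (hu k) (norm_nonneg _)
      have e2 : ‖Rt α - 1‖ * ‖(γseq k) 0‖ ≤ (1/8) * (K * (1/4)^k) :=
        mul_le_mul hd ih (norm_nonneg _) (by norm_num)
      have hMK : ‖α 0‖ ≤ K := by rw [hK]; have := norm_nonneg (β 0); linarith
      have h4 : (0:ℝ) ≤ (1/4)^k := by positivity
      calc ‖(com α (γseq k)) 0‖
          ≤ ‖Rt (γseq k) - 1‖ * ‖α 0‖ + ‖Rt α - 1‖ * ‖(γseq k) 0‖ :=
            com_zero_bound hNIα (hNIseq k)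
      _ ≤ K * (1/4)^(k+1) := by rw [pow_succ]; nlinarith
  -- termination
  have hterm : ∃ k, Rt (γseq k) = 1 := by
    obtain ⟨k, hk⟩ : ∃ k : ℕ, ((1:ℝ)/4) ^ k < ε₀ / (K + 1/8 + 1) :=
      exists_pow_lt_of_lt_one (by positivity) (by norm_num)
    refine ⟨k, ?_⟩
    have hK1 : (0:ℝ) < K + 1/8 + 1 := by linarith
    have hkey : (K + 1/8) * (1/4)^k < ε₀ := by
      have h2 : (0:ℝ) ≤ (1/4:ℝ)^k := by positivity
      have h3 : (K + 1/8 + 1) * ((1/4:ℝ)^k) < (K + 1/8 + 1) * (ε₀ / (K + 1/8 + 1)) :=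
        mul_lt_mul_of_pos_left hk hK1
      rw [mul_div_cancel₀ _ (ne_of_gt hK1)] at h3
      nlinarith
    have h2 : (0:ℝ) ≤ (1/4:ℝ)^k := by positivity
    have h1 : γseq k = 1 := by
      apply hD1 _ (hmem k)
      · have := hb k
        nlinarith [hu k, norm_nonneg (Rt (γseq k) - 1)]
      · have := hu k
        nlinarith [hb k, norm_nonneg ((γseq k) 0)]
    rw [h1, Rt_one]
  set k₀ := Nat.find hterm with hk₀
  have hk₀P : Rt (γseq k₀) = 1 := Nat.find_spec hterm
  have hk₀min : ∀ j < k₀, ¬ (Rt (γseq j) = 1) := fun j hj => Nat.find_min hterm hj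
  -- case analysis on k₀
  match hk0 : k₀ with
  | 0 => left; rw [hseq0] at hk₀P; exact hk₀P
  | 1 =>
    right
    have hP : Rt (com α β) = 1 := hk₀P
    rw [Rt_com] at hP
    exact rot_conj_eq_one (Rt_inv_mul α) (Rt_inv_mul β) hP
  | (m+2) =>
    exfalso
    set g := γseq m with hg
    set h := γseq (m+1) with hh
    have hhcom : h = com α g := rfl
    have hDne : ¬ (Rt h = 1) := hk₀min (m+1) (by omega)
    -- rotation commutation from step k₀
    have hstep : Rt (com α h) = 1 := hk₀P
    have hstep' : Rt α * Rt h * Rt α⁻¹ * Rt h⁻¹ = 1 := by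
      rw [← Rt_com]; exact hstep
    have hAD : Rt α * Rt h = Rt h * Rt α :=
      rot_conj_eq_one (Rt_inv_mul α) (Rt_inv_mul h) hstep'
    -- apply rot_key with T := Rt g
    have hTnorm : ‖Rt g - 1‖ ≤ 1/8 := by
      have := hu m
      have h2 : (0:ℝ) ≤ (1/4)^m := by positivity
      have h3 : ((1:ℝ)/4)^m ≤ 1 := pow_le_one₀ (by norm_num) (by norm_num)
      nlinarith
    have hDval : Rt h = Rt α * Rt g * Rt α⁻¹ * Rt g⁻¹ := by
      rw [hhcom, Rt_com]
    have hcomm' : Rt α * (Rt α * Rt g * Rt α⁻¹ * Rt g⁻¹) =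
        (Rt α * Rt g * Rt α⁻¹ * Rt g⁻¹) * Rt α := by
      rw [← hDval]; exact hAD
    have hres := rot_key (E := Euc n)
      (hNIα) (NI_inv hNIα) (hNIseq m) (NI_inv (hNIseq m))
      (Rt_mul_inv α) (Rt_inv_mul α) (Rt_mul_inv g) (Rt_inv_mul g)
      hTnorm hcomm'
    exact hDne (by rw [hDval]; exact hres)

end SG

namespace SG
open SG2
variable {n : ℕ}

lemma isometry_inv {γ : AffG n} (h : Isometry ⇑γ) : Isometry ⇑γ⁻¹ := by
  intro u w
  have h1 : γ (γ⁻¹ u) = u := apply_inv_self γ u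
  have h2 : γ (γ⁻¹ w) = w := apply_inv_self γ w
  calc edist (γ⁻¹ u) (γ⁻¹ w) = edist (γ (γ⁻¹ u)) (γ (γ⁻¹ w)) := (h _ _).symm
  _ = edist u w := by rw [h1, h2]

lemma orbit_finite {Γ : Subgroup (AffG n)}
    (hpd : ∀ K : Set (Euc n), IsCompact K →
      {γ : AffG n | γ ∈ Γ ∧ ((⇑γ '' K) ∩ K).Nonempty}.Finite) (c : ℝ) :
    {γ : AffG n | γ ∈ Γ ∧ ‖γ 0‖ ≤ c}.Finite := by
  rcases le_or_gt 0 c with hc | hc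
  · apply Set.Finite.subset (hpd (Metric.closedBall 0 c) (isCompact_closedBall 0 c))
    rintro γ ⟨hγ, hn⟩
    refine ⟨hγ, ⟨γ 0, ⟨⟨0, ?_, rfl⟩, ?_⟩⟩⟩
    · simpa [Metric.mem_closedBall] using hc
    · simpa [Metric.mem_closedBall, dist_zero_right] using hn
  · convert Set.finite_empty
    ext γ
    simp only [Set.mem_setOf_eq, Set.mem_empty_iff_false, iff_false, not_and]
    intro _ h
    have := norm_nonneg (γ 0); linarith [h]

lemma exists_D1 {Γ : Subgroup (AffG n)}
    (hfin : ∀ c : ℝ, {γ : AffG n | γ ∈ Γ ∧ ‖γ 0‖ ≤ c}.Finite) :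
    ∃ ε₀ : ℝ, 0 < ε₀ ∧ ε₀ ≤ 1 ∧
      ∀ γ ∈ Γ, ‖γ 0‖ ≤ ε₀ → ‖Rt γ - 1‖ ≤ ε₀ → γ = 1 := by
  classical
  have hS : {γ : AffG n | γ ∈ Γ ∧ ‖γ 0‖ ≤ 1}.Finite := hfin 1
  set F : Finset (AffG n) := hS.toFinset.filter (fun γ => γ ≠ 1) with hF
  have hvpos : ∀ γ ∈ F, 0 < ‖γ 0‖ + ‖Rt γ - 1‖ := by
    intro γ hγ
    have hne : γ ≠ 1 := by
      rw [hF] at hγ; exact (Finset.mem_filter.mp hγ).2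
    rcases lt_or_eq_of_le (by positivity : (0:ℝ) ≤ ‖γ 0‖ + ‖Rt γ - 1‖) with h | h
    · exact h
    · exfalso
      have h1 : ‖γ 0‖ = 0 := by
        have := norm_nonneg (γ 0); have := norm_nonneg (Rt γ - 1); linarith
      have h2 : ‖Rt γ - 1‖ = 0 := by
        have := norm_nonneg (γ 0); have := norm_nonneg (Rt γ - 1); linarith
      have hγ0 : γ 0 = 0 := norm_eq_zero.mp h1
      have hRt : Rt γ = 1 := sub_eq_zero.mp (norm_eq_zero.mp h2)
      apply hne
      have := eq_transl_of_Rt_eq_one hRt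
      rw [hγ0, transl_zero] at this
      exact this
  by_cases hFe : F.Nonempty
  · set m := (F.image (fun γ => ‖γ 0‖ + ‖Rt γ - 1‖)).min' (hFe.image _) with hm
    have hmpos : 0 < m := by
      obtain ⟨y, hy, hym⟩ := Finset.mem_image.mp
        ((F.image (fun γ => ‖γ 0‖ + ‖Rt γ - 1‖)).min'_mem (hFe.image _))
      rw [hm, ← hym]
      exact hvpos y hy
    refine ⟨min (1/2) (m/3), by positivity, le_trans (min_le_left _ _) (by norm_num), ?_⟩
    intro γ hγ h1 h2
    by_contra hne
    have hγF : γ ∈ F := by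
      rw [hF, Finset.mem_filter, Set.Finite.mem_toFinset]
      refine ⟨⟨hγ, ?_⟩, hne⟩
      calc ‖γ 0‖ ≤ min (1/2) (m/3) := h1
      _ ≤ 1/2 := min_le_left _ _
      _ ≤ 1 := by norm_num
    have hmle : m ≤ ‖γ 0‖ + ‖Rt γ - 1‖ :=
      Finset.min'_le _ _ (Finset.mem_image_of_mem _ hγF)
    have : ‖γ 0‖ + ‖Rt γ - 1‖ ≤ 2 * (m/3) := by
      have e1 : min (1/2) (m/3) ≤ m/3 := min_le_right _ _
      linarith [h1, h2, e1]
    linarith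
  · refine ⟨1/2, by norm_num, by norm_num, ?_⟩
    intro γ hγ h1 h2
    by_contra hne
    apply hFe
    refine ⟨γ, ?_⟩
    rw [hF, Finset.mem_filter, Set.Finite.mem_toFinset]
    exact ⟨⟨hγ, le_trans h1 (by norm_num)⟩, hne⟩

lemma exists_coc_radius {Γ : Subgroup (AffG n)}
    (hcoc : ∃ K : Set (Euc n), IsCompact K ∧ ∀ x : Euc n, ∃ γ ∈ Γ, γ x ∈ K) :
    ∃ D : ℝ, 1 ≤ D ∧ ∀ x : Euc n, ∃ γ ∈ Γ, ‖γ x‖ ≤ D := by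
  obtain ⟨K, hKc, hK⟩ := hcoc
  obtain ⟨r, hr⟩ := hKc.isBounded.subset_closedBall 0
  refine ⟨max r 1, le_max_right _ _, fun x => ?_⟩
  obtain ⟨γ, hγ, hx⟩ := hK x
  refine ⟨γ, hγ, ?_⟩
  have := hr hx
  rw [Metric.mem_closedBall, dist_zero_right] at this
  exact le_trans this (le_max_left _ _)

lemma supply {Γ : Subgroup (AffG n)} (hiso : ∀ γ ∈ Γ, Isometry (⇑γ))
    {D : ℝ} (hcoc : ∀ x : Euc n, ∃ γ ∈ Γ, ‖γ x‖ ≤ D) {ε : ℝ} (hε : 0 < ε) :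
    ∃ R : ℝ, 0 ≤ R ∧ ∀ x : Euc n, ∃ β ∈ Γ,
      ‖Rt β - 1‖ ≤ ε ∧ ‖β 0 - x‖ ≤ R + ε * ‖x‖ := by
  classical
  have hNI : ∀ γ ∈ Γ, NI γ := fun γ hγ => NI_of_isometry (hiso γ hγ)
  -- totally bounded rotation set
  set 𝒜 : Set (Euc n →L[ℝ] Euc n) := (fun γ => Rt γ) '' {γ : AffG n | γ ∈ Γ} with h𝒜
  have h𝒜sub : 𝒜 ⊆ Metric.closedBall 0 1 := by
    rintro _ ⟨γ, hγ, rfl⟩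
    rw [Metric.mem_closedBall, dist_zero_right]
    exact NI_norm_le γ (hNI γ hγ)
  have htb : TotallyBounded 𝒜 :=
    (isCompact_closedBall (0 : Euc n →L[ℝ] Euc n) 1).totallyBounded.subset h𝒜sub
  obtain ⟨t, hts, htf, hcover⟩ :=
    (EMetric.totallyBounded_iff'.mp htb) (ENNReal.ofReal ε) (by simpa using hε)
  -- choose representatives
  have hrep : ∀ y, y ∈ t → ∃ φ : AffG n, φ ∈ Γ ∧ Rt φ = y := by
    intro y hy
    obtain ⟨φ, hφ, rfl⟩ := hts hy
    exact ⟨φ, hφ, rfl⟩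
  choose φf hφmem hφval using hrep
  -- bound on representatives
  have hbdd : ∃ C : ℝ, 0 ≤ C ∧ ∀ y (hy : y ∈ t), ‖(φf y hy)⁻¹ 0‖ ≤ C := by
    obtain ⟨C₀, hC₀⟩ := (htf.image
      (fun y => if hy : y ∈ t then ‖(φf y hy)⁻¹ 0‖ else 0)).bddAbove
    refine ⟨max C₀ 0, le_max_right _ _, fun y hy => ?_⟩
    have hmem : ‖(φf y hy)⁻¹ 0‖ ∈
        (fun y => if hy : y ∈ t then ‖(φf y hy)⁻¹ 0‖ else 0) '' t := by
      refine ⟨y, hy, ?_⟩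
      simp only [dif_pos hy]
    exact le_trans (hC₀ hmem) (le_max_left _ _)
  obtain ⟨C, hC0, hC⟩ := hbdd
  refine ⟨|D| + C, by positivity, ?_⟩
  intro x
  obtain ⟨γ, hγ, hγx⟩ := hcoc (-x)
  have hRtγ : Rt γ ∈ 𝒜 := ⟨γ, hγ, rfl⟩
  have := hcover hRtγ
  rw [Set.mem_iUnion₂] at this
  obtain ⟨y, hy, hball⟩ := this
  set φ := φf y hy with hφ
  have hφΓ : φ ∈ Γ := hφmem y hy
  have hφRt : Rt φ = y := hφval y hy
  set β := φ⁻¹ * γ with hβ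
  have hβΓ : β ∈ Γ := mul_mem (inv_mem hφΓ) hγ
  refine ⟨β, hβΓ, ?_, ?_⟩
  · -- rotation close to 1
    have hdist : dist (Rt γ) y < ε := by
      have := hball
      rw [EMetric.mem_ball, edist_dist] at this
      exact (ENNReal.ofReal_lt_ofReal_iff_of_nonneg dist_nonneg).mp this
    have hkey : Rt β - 1 = Rt φ⁻¹ * (Rt γ - Rt φ) := by
      rw [mul_sub, Rt_inv_mul, hβ, Rt_mul]
    rw [hkey]
    calc ‖Rt φ⁻¹ * (Rt γ - Rt φ)‖ ≤ ‖Rt γ - Rt φ‖ :=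
          norm_isom_mul_le (NI_inv (hNI φ hφΓ)) _
    _ ≤ ε := by
        rw [hφRt, ← dist_eq_norm]
        exact le_of_lt hdist
  · -- location
    have hβx : ‖β (-x)‖ ≤ |D| + C := by
      have e1 : β (-x) = φ⁻¹ (γ (-x)) := rfl
      have e2 : ‖φ⁻¹ (γ (-x)) - φ⁻¹ 0‖ = ‖γ (-x) - 0‖ := by
        have hi := isometry_inv (hiso φ hφΓ)
        have := hi.dist_eq (γ (-x)) 0
        rw [dist_eq_norm, dist_eq_norm] at this
        exact this
      calc ‖β (-x)‖ = ‖(φ⁻¹ (γ (-x)) - φ⁻¹ 0) + φ⁻¹ 0‖ := by rw [e1, sub_add_cancel]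
      _ ≤ ‖φ⁻¹ (γ (-x)) - φ⁻¹ 0‖ + ‖φ⁻¹ 0‖ := norm_add_le _ _
      _ ≤ |D| + C := by
          rw [e2, sub_zero]
          have h1 : ‖γ (-x)‖ ≤ |D| := le_trans hγx (le_abs_self D)
          have h2 : ‖φ⁻¹ 0‖ ≤ C := hC y hy
          exact add_le_add h1 h2
    have hdecomp : β 0 - x = β (-x) + (Rt β - 1) x := by
      have h := decomp β (-x)
      rw [show Rt β (-x) = -(Rt β x) from map_neg _ x] at h
      have e2 : (Rt β - 1) x = Rt β x - x := by
        simp [ContinuousLinearMap.sub_apply]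
      rw [e2, h]; abel
    rw [hdecomp]
    calc ‖β (-x) + (Rt β - 1) x‖ ≤ ‖β (-x)‖ + ‖(Rt β - 1) x‖ := norm_add_le _ _
    _ ≤ (|D| + C) + ε * ‖x‖ := by
        apply add_le_add hβx
        calc ‖(Rt β - 1) x‖ ≤ ‖Rt β - 1‖ * ‖x‖ := (Rt β - 1).le_opNorm x
        _ ≤ ε * ‖x‖ := by
            apply mul_le_mul_of_nonneg_right _ (norm_nonneg x)
            -- same bound as above
            have hdist : dist (Rt γ) y < ε := by
              have := hball
              rw [EMetric.mem_ball, edist_dist] at this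
              exact (ENNReal.ofReal_lt_ofReal_iff_of_nonneg dist_nonneg).mp this
            have hkey : Rt β - 1 = Rt φ⁻¹ * (Rt γ - Rt φ) := by
              rw [mul_sub, Rt_inv_mul, hβ, Rt_mul]
            rw [hkey]
            calc ‖Rt φ⁻¹ * (Rt γ - Rt φ)‖ ≤ ‖Rt γ - Rt φ‖ :=
                  norm_isom_mul_le (NI_inv (hNI φ hφΓ)) _
            _ ≤ ε := by
                rw [hφRt, ← dist_eq_norm]
                exact le_of_lt hdist

end SG

namespace SG
open SG2
variable {n : ℕ}

/-- conjugating a translation -/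
lemma conj_transl (γ : AffG n) (t : Euc n) :
    γ * transl t * γ⁻¹ = transl (Rt γ t) := by
  apply ext'
  · rw [Rt_mul, Rt_mul, Rt_transl, mul_one, Rt_mul_inv, Rt_transl]
  · rw [transl_zero']
    have h1 : (γ * transl t * γ⁻¹) 0 = γ (t + γ⁻¹ 0) := rfl
    have h2 : (0:Euc n) = Rt γ (γ⁻¹ 0) + γ 0 := by
      have := decomp γ (γ⁻¹ 0)
      rw [apply_inv_self] at this
      exact this
    rw [h1, decomp γ (t + γ⁻¹ 0), map_add]
    rw [← neg_eq_of_add_eq_zero_left h2.symm]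
    abel

end SG

namespace SG
open SG2
variable {n : ℕ}

/-- set of translation vectors of Γ -/
def LSet (Γ : Subgroup (AffG n)) : Set (Euc n) := {t : Euc n | transl t ∈ Γ}

lemma LSet_zero (Γ : Subgroup (AffG n)) : (0 : Euc n) ∈ LSet Γ := by
  show transl 0 ∈ Γ; rw [transl_zero]; exact one_mem Γ

lemma LSet_add {Γ : Subgroup (AffG n)} {s t : Euc n} (hs : s ∈ LSet Γ) (ht : t ∈ LSet Γ) :
    s + t ∈ LSet Γ := by
  show transl (s + t) ∈ Γ; rw [transl_add]; exact mul_mem hs ht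

lemma LSet_conj {Γ : Subgroup (AffG n)} {γ : AffG n} (hγ : γ ∈ Γ) {t : Euc n}
    (ht : t ∈ LSet Γ) : Rt γ t ∈ LSet Γ := by
  show transl (Rt γ t) ∈ Γ
  rw [← conj_transl]
  exact mul_mem (mul_mem hγ ht) (inv_mem hγ)

lemma LSet_ball_finite {Γ : Subgroup (AffG n)}
    (hfin : ∀ c : ℝ, {γ : AffG n | γ ∈ Γ ∧ ‖γ 0‖ ≤ c}.Finite) (c : ℝ) :
    {t : Euc n | t ∈ LSet Γ ∧ ‖t‖ ≤ c}.Finite := by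
  have hinj : Function.Injective (transl (n := n)) := fun a b h => transl_inj h
  have himage : {t : Euc n | t ∈ LSet Γ ∧ ‖t‖ ≤ c} ⊆
      transl ⁻¹' {γ : AffG n | γ ∈ Γ ∧ ‖γ 0‖ ≤ c} := by
    rintro t ⟨ht, htc⟩
    exact ⟨ht, by rw [transl_zero']; exact htc⟩
  exact Set.Finite.subset ((hfin c).preimage (hinj.injOn)) himage

/-- a lattice-preserving orthogonal map which is the identity on the orthocomplement
of the span has finite order -/
lemma finite_order {Γ : Subgroup (AffG n)}
    (hfin : ∀ c : ℝ, {γ : AffG n | γ ∈ Γ ∧ ‖γ 0‖ ≤ c}.Finite)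
    {γ : AffG n} (hγ : γ ∈ Γ) (hNIγ : NI γ)
    (hperp : ∀ w ∈ (Submodule.span ℝ (LSet Γ))ᗮ, Rt γ w = w) :
    ∃ m : ℕ, 1 ≤ m ∧ Rt γ ^ m = 1 := by
  classical
  set L := LSet Γ with hL
  set U := Submodule.span ℝ L with hU
  obtain ⟨b, hbL, hbspan, hbli⟩ := exists_linearIndependent ℝ L
  have hbfin : b.Finite := by
    have : Finite b := hbli.finite
    exact Set.toFinite b
  obtain ⟨ρ, hρ0, hρ⟩ : ∃ ρ : ℝ, 0 ≤ ρ ∧ ∀ x ∈ b, ‖x‖ ≤ ρ := by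
    obtain ⟨C₀, hC₀⟩ := (hbfin.image (fun x => ‖x‖)).bddAbove
    exact ⟨max C₀ 0, le_max_right _ _, fun x hx =>
      le_trans (hC₀ (Set.mem_image_of_mem _ hx)) (le_max_left _ _)⟩
  set S : Set (Euc n) := {t : Euc n | t ∈ L ∧ ‖t‖ ≤ ρ} with hS
  have hSfin : S.Finite := LSet_ball_finite hfin ρ
  have hbS : b ⊆ S := fun x hx => ⟨hbL hx, hρ x hx⟩
  have hmapS : ∀ (k : ℕ) (t : Euc n), t ∈ S → (Rt γ ^ k) t ∈ S := by
    intro k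
    induction k with
    | zero => intro t ht; simpa using ht
    | succ k ih =>
      intro t ht
      have h1 : (Rt γ ^ (k+1)) t = Rt γ ((Rt γ ^ k) t) := by
        rw [pow_succ']; rfl
      rw [h1]
      obtain ⟨htL, htρ⟩ := ih t ht
      exact ⟨LSet_conj hγ htL, by rw [hNIγ]; exact htρ⟩
  have hNP : ∀ k : ℕ, NP (Rt γ ^ k) := fun k => NP.pow (fun x => hNIγ x) k
  have hinj : ∀ k : ℕ, Function.Injective (Rt γ ^ k) := by
    intro k x y hxy
    have h := hNP k (x - y)
    rw [map_sub, hxy, sub_self, norm_zero] at h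
    exact sub_eq_zero.mp (norm_eq_zero.mp h.symm)
  haveI : Finite S := hSfin.to_subtype
  set f : ℕ → (S → S) := fun k => fun x => ⟨(Rt γ ^ k) x.1, hmapS k x.1 x.2⟩ with hf
  obtain ⟨i₀, j₀, hij₀, hfij₀⟩ := Finite.exists_ne_map_eq_of_infinite f
  have key : ∀ i j : ℕ, i < j → f i = f j → ∃ m : ℕ, 1 ≤ m ∧ Rt γ ^ m = 1 := by
    intro i j hlt hfij
    refine ⟨j - i, by omega, ?_⟩
    have hfix : ∀ t ∈ S, (Rt γ ^ (j - i)) t = t := by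
      intro t ht
      apply hinj i
      have e : Rt γ ^ i * Rt γ ^ (j - i) = Rt γ ^ j := by
        rw [← pow_add]; congr 1; omega
      have h2 : (Rt γ ^ i) ((Rt γ ^ (j-i)) t) = (Rt γ ^ i * Rt γ ^ (j-i)) t := rfl
      rw [h2, e]
      have h3 := congrArg (fun g : S → S => (g ⟨t, ht⟩ : Euc n)) hfij
      exact h3.symm
    have hspan : Submodule.span ℝ S = U := by
      apply le_antisymm
      · exact Submodule.span_le.mpr (fun t ht => Submodule.subset_span ht.1)
      · rw [hU, ← hbspan]
        exact Submodule.span_mono hbS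
    have hfixU : ∀ u ∈ U, (Rt γ ^ (j - i)) u = u := by
      intro u hu
      rw [← hspan] at hu
      exact LinearMap.eqOn_span (f := ((Rt γ ^ (j - i) : Euc n →L[ℝ] Euc n) : Euc n →ₗ[ℝ] Euc n)) (g := LinearMap.id)
        (fun t ht => hfix t ht) hu
    have hfixP : ∀ w ∈ Uᗮ, (Rt γ ^ (j - i)) w = w := by
      intro w hw
      induction (j - i) with
      | zero => simp
      | succ k ih =>
        have h1 : (Rt γ ^ (k+1)) w = Rt γ ((Rt γ ^ k) w) := by
          rw [pow_succ']; rfl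
        rw [h1, ih, hperp w hw]
    apply ContinuousLinearMap.ext
    intro x
    obtain ⟨u, hu, w, hw, hx⟩ := U.exists_add_mem_mem_orthogonal x
    rw [hx, map_add, hfixU u hu, hfixP w hw]
    rfl
  rcases lt_or_gt_of_ne hij₀ with hlt | hgt
  · exact key i₀ j₀ hlt hfij₀
  · exact key j₀ i₀ hgt hfij₀.symm

end SG

namespace SG
open SG2
variable {n : ℕ}

lemma rot_com_one {α β : AffG n} (hcomm : Rt α * Rt β = Rt β * Rt α) :
    Rt (com α β) = 1 := by
  rw [Rt_com, hcomm, mul_assoc (Rt β) (Rt α) (Rt α⁻¹), Rt_mul_inv, mul_one, Rt_mul_inv]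

lemma RtU {Γ : Subgroup (AffG n)} {γ : AffG n} (hγ : γ ∈ Γ) :
    ∀ u ∈ Submodule.span ℝ (LSet Γ), Rt γ u ∈ Submodule.span ℝ (LSet Γ) := by
  intro u hu
  induction hu using Submodule.span_induction with
  | mem x hx => exact Submodule.subset_span (LSet_conj hγ hx)
  | zero => rw [map_zero]; exact Submodule.zero_mem _
  | add x y _ _ hx hy => rw [map_add]; exact Submodule.add_mem _ hx hy
  | smul r x _ hx => rw [map_smul]; exact Submodule.smul_mem _ r hx

open scoped RealInnerProductSpace in
lemma perp_of_LSet {Γ : Subgroup (AffG n)} {c : Euc n}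
    (hLc : ∀ t ∈ LSet Γ, ⟪t, c⟫ = 0) :
    c ∈ (Submodule.span ℝ (LSet Γ))ᗮ := by
  rw [Submodule.mem_orthogonal]
  intro u hu
  induction hu using Submodule.span_induction with
  | mem x hx => exact hLc x hx
  | zero => simp
  | add x y _ _ hx hy => rw [inner_add_left, hx, hy]; ring
  | smul r x _ hx => rw [real_inner_smul_left, hx]; ring

lemma mem_of_approx {U : Submodule ℝ (Euc n)} {x : Euc n} {C : ℝ}
    (h : ∀ m : ℕ, 1 ≤ m → ∃ u ∈ U, ‖x - u‖ ≤ C / m) : x ∈ U := by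
  have hclosed : IsClosed (U : Set (Euc n)) := Submodule.closed_of_finiteDimensional U
  have hx : x ∈ closure (U : Set (Euc n)) := by
    rw [Metric.mem_closure_iff]
    intro ε hε
    obtain ⟨m, hm⟩ := exists_nat_gt (max (C / ε) 1)
    have hm1 : 1 ≤ m := by
      have h1 : (1:ℝ) ≤ max (C / ε) 1 := le_max_right _ _
      have : (1:ℝ) < m := lt_of_le_of_lt h1 hm
      exact_mod_cast this.le
    obtain ⟨u, hu, hxu⟩ := h m hm1
    refine ⟨u, hu, ?_⟩
    rw [dist_eq_norm]
    have hmpos : (0:ℝ) < m := by positivity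
    have hCm : C / m < ε := by
      have h2 : C / ε < m := lt_of_le_of_lt (le_max_left _ _) hm
      rcases le_or_gt C 0 with hC | hC
      · calc C / (m:ℝ) ≤ 0 := div_nonpos_of_nonpos_of_nonneg hC (le_of_lt hmpos)
        _ < ε := hε
      · rw [div_lt_iff₀ hmpos]
        rw [div_lt_iff₀ hε] at h2
        linarith [h2]
    exact lt_of_le_of_lt hxu hCm
  rwa [hclosed.closure_eq] at hx

lemma submodule_union {U X : Submodule ℝ (Euc n)} (h : ∀ v : Euc n, v ∈ U ∨ v ∈ X) :
    (∀ v : Euc n, v ∈ U) ∨ (∀ v : Euc n, v ∈ X) := by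
  by_contra hcon
  push_neg at hcon
  obtain ⟨⟨x, hxU⟩, ⟨y, hyX⟩⟩ := hcon
  have hxX : x ∈ X := (h x).resolve_left hxU
  have hyU : y ∈ U := (h y).resolve_right hyX
  rcases h (x + y) with hxy | hxy
  · exact hxU (by simpa using U.sub_mem hxy hyU)
  · exact hyX (by simpa using X.sub_mem hxy hxX)

lemma Rt_pow (α : AffG n) (m : ℕ) : Rt (α ^ m) = Rt α ^ m := by
  induction m with
  | zero => rw [pow_zero, pow_zero, Rt_one]
  | succ k ih => rw [pow_succ, pow_succ, Rt_mul, ih]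

open scoped RealInnerProductSpace in
lemma inner_pow_zero {α : AffG n} {c : Euc n}
    (hin : ∀ x : Euc n, ⟪Rt α x, c⟫ = ⟪x, c⟫) (m : ℕ) :
    ⟪(α ^ m) 0, c⟫ = m * ⟪α 0, c⟫ := by
  induction m with
  | zero =>
    have : (α ^ 0) (0 : Euc n) = 0 := rfl
    rw [this]; simp
  | succ k ih =>
    have h1 : (α ^ (k+1)) (0 : Euc n) = α ((α ^ k) 0) := by
      rw [pow_succ']; rfl
    rw [h1, decomp α ((α ^ k) 0), inner_add_left, hin, ih]
    push_cast; ring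

end SG

namespace SG
open SG2
variable {n : ℕ}

set_option maxHeartbeats 1000000 in
lemma absorption {Γ : Subgroup (AffG n)}
    (hiso : ∀ γ ∈ Γ, Isometry (⇑γ))
    {ε₀ : ℝ} (hε₀pos : 0 < ε₀)
    (hD1 : ∀ γ ∈ Γ, ‖γ 0‖ ≤ ε₀ → ‖Rt γ - 1‖ ≤ ε₀ → γ = 1)
    {D : ℝ} (hcoc : ∀ x : Euc n, ∃ γ ∈ Γ, ‖γ x‖ ≤ D)
    {α : AffG n} (hαΓ : α ∈ Γ) (hαrot : ‖Rt α - 1‖ ≤ 1/8)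
    (v : Euc n) :
    v ∈ Submodule.span ℝ (LSet Γ) ∨ Rt α v - v ∈ Submodule.span ℝ (LSet Γ) := by
  classical
  set U := Submodule.span ℝ (LSet Γ) with hU
  set M : ℝ := ‖α 0‖ with hM
  have hNIα : NI α := NI_of_isometry (hiso α hαΓ)
  have key : ∀ m : ℕ, 1 ≤ m →
      (∃ u ∈ U, ‖v - u‖ ≤ (1 + ‖v‖)/m) ∨
      (∃ u ∈ U, ‖(Rt α v - v) - u‖ ≤ (1 + ‖v‖)/m) := by
    intro m hm
    have hmpos : (0:ℝ) < m := by exact_mod_cast Nat.lt_of_lt_of_le Nat.zero_lt_one hm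
    set ε : ℝ := min (1/8) (1/(m:ℝ)) with hε
    have hεpos : 0 < ε := by
      apply lt_min (by norm_num)
      positivity
    have hε8 : ε ≤ 1/8 := min_le_left _ _
    have hεm : ε ≤ 1/(m:ℝ) := min_le_right _ _
    obtain ⟨R, hR0, hsup⟩ := supply hiso hcoc hεpos
    set s₂ : ℝ := (m:ℝ) * (R + M + 1) with hs₂
    have hMnn : 0 ≤ M := norm_nonneg _
    have hs₂pos : 0 < s₂ := by
      apply mul_pos hmpos
      linarith
    obtain ⟨β, hβΓ, hβrot, hβloc⟩ := hsup (s₂ • v)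
    have hsv : ‖s₂ • v‖ = s₂ * ‖v‖ := by
      rw [norm_smul, Real.norm_eq_abs, abs_of_pos hs₂pos]
    rw [hsv] at hβloc
    have hres := descent hiso hε₀pos hD1 hαΓ hβΓ hαrot (le_trans hβrot hε8)
    rcases hres with hres | hres
    · -- β is a translation
      left
      have hβtr : β = transl (β 0) := eq_transl_of_Rt_eq_one hres
      have hβ0L : β 0 ∈ LSet Γ := by
        show transl (β 0) ∈ Γ
        rw [← hβtr]; exact hβΓ
      refine ⟨s₂⁻¹ • β 0, U.smul_mem _ (Submodule.subset_span hβ0L), ?_⟩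
      have e1 : v - s₂⁻¹ • β 0 = s₂⁻¹ • (s₂ • v - β 0) := by
        rw [smul_sub, smul_smul, inv_mul_cancel₀ (ne_of_gt hs₂pos), one_smul]
      rw [e1, norm_smul, Real.norm_eq_abs, abs_of_pos (by positivity)]
      have hband : ‖s₂ • v - β 0‖ ≤ R + ε * (s₂ * ‖v‖) := by
        rw [← norm_neg, neg_sub]; exact hβloc
      calc s₂⁻¹ * ‖s₂ • v - β 0‖ ≤ s₂⁻¹ * (R + ε * (s₂ * ‖v‖)) := by
            apply mul_le_mul_of_nonneg_left hband (by positivity)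
      _ = R / s₂ + ε * ‖v‖ := by field_simp
      _ ≤ (1 + ‖v‖)/m := by
          have h1 : R / s₂ ≤ 1 / m := by
            rw [hs₂, div_le_div_iff₀ (by positivity) hmpos]
            have : R ≤ R + M + 1 := by linarith
            calc R * (m:ℝ) ≤ (R + M + 1) * m := by
                  apply mul_le_mul_of_nonneg_right this (le_of_lt hmpos)
            _ = 1 * ((m:ℝ) * (R + M + 1)) := by ring
          have h2 : ε * ‖v‖ ≤ ‖v‖ / m := by
            rw [div_eq_mul_inv, mul_comm ‖v‖]
            apply mul_le_mul_of_nonneg_right _ (norm_nonneg v)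
            rw [← one_div]
            exact hεm
          calc R / s₂ + ε * ‖v‖ ≤ 1/m + ‖v‖/m := add_le_add h1 h2
          _ = (1 + ‖v‖)/m := by rw [← add_div]
    · -- rotations commute: commutator is a translation
      right
      have hcom1 : Rt (com α β) = 1 := rot_com_one hres
      have hcomT : com α β = transl ((com α β) 0) := eq_transl_of_Rt_eq_one hcom1
      set e : Euc n := (com α β) 0 with he
      have heL : e ∈ LSet Γ := by
        show transl e ∈ Γ
        rw [← hcomT]; exact com_mem hαΓ hβΓ
      have hval : e = (α 0 - Rt β (α 0)) + (Rt α (β 0) - β 0) := com_zero_comm hres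
      refine ⟨s₂⁻¹ • e, U.smul_mem _ (Submodule.subset_span heL), ?_⟩
      -- bound ‖(Rt α (β 0) - β 0) - e‖ ≤ ε * M
      have hb1 : ‖(Rt α (β 0) - β 0) - e‖ ≤ ε * M := by
        have e2 : (Rt α (β 0) - β 0) - e = -(α 0 - Rt β (α 0)) := by
          rw [hval]; abel
        rw [e2, norm_neg]
        have e3 : α 0 - Rt β (α 0) = -((Rt β - 1) (α 0)) := by
          simp [ContinuousLinearMap.sub_apply]
        rw [e3, norm_neg]
        calc ‖(Rt β - 1) (α 0)‖ ≤ ‖Rt β - 1‖ * ‖α 0‖ := (Rt β - 1).le_opNorm _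
        _ ≤ ε * M := by
            apply mul_le_mul_of_nonneg_right hβrot (norm_nonneg _)
      -- bound ‖(Rt α - 1)(s₂ v - β 0)‖
      have hb2 : ‖(Rt α (s₂ • v - β 0)) - (s₂ • v - β 0)‖ ≤ R + ε * (s₂ * ‖v‖) := by
        have e4 : Rt α (s₂ • v - β 0) - (s₂ • v - β 0) = (Rt α - 1) (s₂ • v - β 0) := by
          simp [ContinuousLinearMap.sub_apply]
        rw [e4]
        calc ‖(Rt α - 1) (s₂ • v - β 0)‖ ≤ ‖Rt α - 1‖ * ‖s₂ • v - β 0‖ :=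
              (Rt α - 1).le_opNorm _
        _ ≤ (1/8) * (R + ε * (s₂ * ‖v‖)) := by
            apply mul_le_mul hαrot _ (norm_nonneg _) (by norm_num)
            rw [← norm_neg, neg_sub]; exact hβloc
        _ ≤ R + ε * (s₂ * ‖v‖) := by
            have : (0:ℝ) ≤ R + ε * (s₂ * ‖v‖) := by positivity
            linarith
      -- combine
      have hcombine : ‖(Rt α (s₂ • v) - s₂ • v) - e‖ ≤ ε * M + (R + ε * (s₂ * ‖v‖)) := by
        have e5 : (Rt α (s₂ • v) - s₂ • v) - e
            = ((Rt α (β 0) - β 0) - e) + ((Rt α (s₂ • v - β 0)) - (s₂ • v - β 0)) := by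
          rw [map_sub]
          abel
        rw [e5]
        exact le_trans (norm_add_le _ _) (add_le_add hb1 hb2)
      have hss : ∀ w : Euc n, s₂⁻¹ • s₂ • w = w := fun w => by
        rw [smul_smul, inv_mul_cancel₀ (ne_of_gt hs₂pos), one_smul]
      have e6 : (Rt α v - v) - s₂⁻¹ • e = s₂⁻¹ • ((Rt α (s₂ • v) - s₂ • v) - e) := by
        rw [map_smul, smul_sub, smul_sub, hss, hss]
      rw [e6, norm_smul, Real.norm_eq_abs, abs_of_pos (by positivity)]
      calc s₂⁻¹ * ‖(Rt α (s₂ • v) - s₂ • v) - e‖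
          ≤ s₂⁻¹ * (ε * M + (R + ε * (s₂ * ‖v‖))) := by
            apply mul_le_mul_of_nonneg_left hcombine (by positivity)
      _ = (ε * M + R) / s₂ + ε * ‖v‖ := by field_simp; ring
      _ ≤ (1 + ‖v‖)/m := by
          have h1 : (ε * M + R) / s₂ ≤ 1 / m := by
            rw [hs₂, div_le_div_iff₀ (by positivity) hmpos]
            have hεM : ε * M ≤ M := by
              have : ε ≤ 1 := le_trans hε8 (by norm_num)
              nlinarith
            calc (ε * M + R) * (m:ℝ) ≤ (R + M + 1) * m := by
                  apply mul_le_mul_of_nonneg_right _ (le_of_lt hmpos)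
                  linarith
            _ = 1 * ((m:ℝ) * (R + M + 1)) := by ring
          have h2 : ε * ‖v‖ ≤ ‖v‖ / m := by
            rw [div_eq_mul_inv, mul_comm ‖v‖]
            apply mul_le_mul_of_nonneg_right _ (norm_nonneg v)
            rw [← one_div]
            exact hεm
          calc (ε * M + R) / s₂ + ε * ‖v‖ ≤ 1/m + ‖v‖/m := add_le_add h1 h2
          _ = (1 + ‖v‖)/m := by rw [← add_div]
  -- dichotomy over m
  by_cases hP : ∀ m : ℕ, 1 ≤ m → ∃ u ∈ U, ‖v - u‖ ≤ (1 + ‖v‖)/m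
  · left
    exact mem_of_approx hP
  · right
    push_neg at hP
    obtain ⟨m₀, hm₀, hm₀P⟩ := hP
    apply mem_of_approx (C := 1 + ‖v‖)
    intro m hm
    have hmax : 1 ≤ max m m₀ := le_trans hm (le_max_left _ _)
    have hnorm1 : (0:ℝ) ≤ 1 + ‖v‖ := by positivity
    rcases key (max m m₀) hmax with h1 | h2
    · exfalso
      obtain ⟨u, hu, huv⟩ := h1
      apply absurd (hm₀P u hu)
      push_neg
      calc ‖v - u‖ ≤ (1 + ‖v‖)/(max m m₀) := huv
      _ ≤ (1 + ‖v‖)/m₀ := by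
          apply div_le_div_of_nonneg_left hnorm1 _ _
          · exact_mod_cast Nat.lt_of_lt_of_le Nat.zero_lt_one hm₀
          · exact_mod_cast le_max_right m m₀
    · obtain ⟨u, hu, huv⟩ := h2
      refine ⟨u, hu, ?_⟩
      calc ‖(Rt α v - v) - u‖ ≤ (1 + ‖v‖)/(max m m₀) := huv
      _ ≤ (1 + ‖v‖)/m := by
          apply div_le_div_of_nonneg_left hnorm1 _ _
          · exact_mod_cast Nat.lt_of_lt_of_le Nat.zero_lt_one hm
          · exact_mod_cast le_max_left m m₀

end SG

namespace SG
open SG2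
open scoped RealInnerProductSpace
variable {n : ℕ}

set_option maxHeartbeats 1000000 in
/-- Main lemma: translations of a space group are not all orthogonal to a
given nonzero vector. -/
lemma lemmaM {Γ : Subgroup (AffG n)}
    (hiso : ∀ γ ∈ Γ, Isometry (⇑γ))
    (hfin : ∀ c : ℝ, {γ : AffG n | γ ∈ Γ ∧ ‖γ 0‖ ≤ c}.Finite)
    {D : ℝ} (hcoc : ∀ x : Euc n, ∃ γ ∈ Γ, ‖γ x‖ ≤ D)
    {c : Euc n} (hc : c ≠ 0) :
    ∃ t : Euc n, transl t ∈ Γ ∧ ⟪t, c⟫ ≠ 0 := by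
  classical
  by_contra hcon
  push_neg at hcon
  -- normalize c
  set cc : Euc n := ‖c‖⁻¹ • c with hcc
  have hcnorm : 0 < ‖c‖ := norm_pos_iff.mpr hc
  have hcc1 : ‖cc‖ = 1 := by
    rw [hcc, norm_smul, Real.norm_eq_abs, abs_of_pos (by positivity)]
    field_simp
  have hLc : ∀ t ∈ LSet Γ, ⟪t, cc⟫ = 0 := by
    intro t ht
    rw [hcc, real_inner_smul_right, hcon t ht, mul_zero]
  -- discreteness and supply
  obtain ⟨ε₀, hε₀pos, hε₀le, hD1⟩ := exists_D1 hfin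
  obtain ⟨R₁, hR₁0, hsup₁⟩ := supply hiso hcoc (by norm_num : (0:ℝ) < 1/8)
  set s₁ : ℝ := 8 * (R₁ + 1) with hs₁
  have hs₁pos : 0 < s₁ := by positivity
  obtain ⟨α, hαΓ, hαrot, hαloc⟩ := hsup₁ (s₁ • cc)
  have hNIα : NI α := NI_of_isometry (hiso α hαΓ)
  -- ⟪α 0, cc⟫ > 0
  have hsvnorm : ‖s₁ • cc‖ = s₁ := by
    rw [norm_smul, Real.norm_eq_abs, abs_of_pos hs₁pos, hcc1, mul_one]
  have hinner_pos : 0 < ⟪α 0, cc⟫ := by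
    have h1 : ⟪α 0 - s₁ • cc, cc⟫ ≥ -(R₁ + (1/8) * s₁) := by
      have h2 : |⟪α 0 - s₁ • cc, cc⟫| ≤ ‖α 0 - s₁ • cc‖ * ‖cc‖ := abs_real_inner_le_norm _ _
      rw [hcc1, mul_one] at h2
      have h3 : ‖α 0 - s₁ • cc‖ ≤ R₁ + (1/8) * s₁ := by
        calc ‖α 0 - s₁ • cc‖ ≤ R₁ + (1/8) * ‖s₁ • cc‖ := hαloc
        _ = R₁ + (1/8) * s₁ := by rw [hsvnorm]
      have := abs_le.mp (le_trans h2 h3)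
      linarith [this.1]
    have h4 : ⟪α 0, cc⟫ = ⟪s₁ • cc, cc⟫ + ⟪α 0 - s₁ • cc, cc⟫ := by
      rw [← inner_add_left]; congr 1; abel
    have h5 : ⟪s₁ • cc, cc⟫ = s₁ := by
      rw [real_inner_smul_left, real_inner_self_eq_norm_sq, hcc1]
      norm_num
    rw [h4, h5]
    have : R₁ + (1/8) * s₁ < s₁ := by rw [hs₁]; linarith
    linarith
  -- direction absorption & dichotomy
  set U := Submodule.span ℝ (LSet Γ) with hU
  have habs : ∀ v : Euc n, v ∈ U ∨ v ∈ Submodule.comap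
      ((Rt α - 1) : Euc n →L[ℝ] Euc n).toLinearMap U := by
    intro v
    rcases absorption hiso hε₀pos hD1 hcoc hαΓ hαrot v with h | h
    · exact Or.inl h
    · right
      rw [Submodule.mem_comap]
      have e : ((Rt α - 1) : Euc n →L[ℝ] Euc n).toLinearMap v = Rt α v - v := by
        simp [ContinuousLinearMap.sub_apply]
      rw [e]; exact h
  have hccperp : cc ∈ Uᗮ := perp_of_LSet hLc
  rcases submodule_union habs with hUall | hXall
  · -- U = ⊤ contradicts cc ⊥ U and cc ≠ 0
    have : ⟪cc, cc⟫ = 0 := by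
      rw [Submodule.mem_orthogonal] at hccperp
      exact hccperp cc (hUall cc)
    rw [real_inner_self_eq_norm_sq, hcc1] at this
    norm_num at this
  · -- Rt α = 1 on Uᗮ
    have hperp : ∀ w ∈ Uᗮ, Rt α w = w := by
      intro w hw
      have h1 : Rt α w - w ∈ U := by
        have := hXall w
        rw [Submodule.mem_comap] at this
        have e : ((Rt α - 1) : Euc n →L[ℝ] Euc n).toLinearMap w = Rt α w - w := by
          simp [ContinuousLinearMap.sub_apply]
        rwa [e] at this
      have h2 : Rt α w - w ∈ Uᗮ := by
        apply Submodule.sub_mem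
        · rw [Submodule.mem_orthogonal]
          intro u hu
          have e1 : ⟪u, Rt α w⟫ = ⟪Rt α (Rt α⁻¹ u), Rt α w⟫ := by
            rw [Rt_apply_inv_apply]
          rw [e1, NI_inner hNIα]
          rw [Submodule.mem_orthogonal] at hw
          exact hw _ (RtU (inv_mem hαΓ) u hu)
        · exact hw
      -- U ∩ Uᗮ = 0
      have h3 : Rt α w - w = 0 := by
        have := h2
        rw [Submodule.mem_orthogonal] at this
        have h4 : ⟪Rt α w - w, Rt α w - w⟫ = 0 := this _ h1
        exact inner_self_eq_zero.mp h4
      exact sub_eq_zero.mp h3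
    -- finite order
    obtain ⟨m, hm1, hAm⟩ := finite_order hfin hαΓ hNIα hperp
    have hRtαm : Rt (α ^ m) = 1 := by rw [Rt_pow, hAm]
    have hαm : α ^ m = transl ((α ^ m) 0) := eq_transl_of_Rt_eq_one hRtαm
    have htL : (α ^ m) 0 ∈ LSet Γ := by
      show transl ((α ^ m) 0) ∈ Γ
      rw [← hαm]; exact pow_mem hαΓ m
    -- inner product computation
    have hAc : Rt α cc = cc := hperp cc hccperp
    have hin : ∀ x : Euc n, ⟪Rt α x, cc⟫ = ⟪x, cc⟫ := by
      intro x
      conv_lhs => rw [← hAc]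
      rw [NI_inner hNIα]
    have hval : ⟪(α ^ m) 0, cc⟫ = m * ⟪α 0, cc⟫ := inner_pow_zero hin m
    have hpos : 0 < ⟪(α ^ m) 0, cc⟫ := by
      rw [hval]
      have hm' : (0:ℝ) < m := by exact_mod_cast Nat.lt_of_lt_of_le Nat.zero_lt_one hm1
      positivity
    have := hLc _ htL
    rw [this] at hpos
    exact lt_irrefl 0 hpos
end SG

namespace SG
open SG2
variable {n : ℕ}

lemma isom_norm_sub (γ : AffG n) (h : Isometry (⇑γ)) (x y : Euc n) :
    ‖γ x - γ y‖ = ‖x - y‖ := by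
  have := h.dist_eq x y
  rwa [dist_eq_norm, dist_eq_norm] at this

set_option maxHeartbeats 1000000 in
lemma generation {Γ : Subgroup (AffG n)} (hiso : ∀ γ ∈ Γ, Isometry (⇑γ))
    {D : ℝ} (hD1 : 1 ≤ D) (hcoc : ∀ x : Euc n, ∃ γ ∈ Γ, ‖γ x‖ ≤ D) :
    ∀ γ ∈ Γ, γ ∈ Subgroup.closure {σ : AffG n | σ ∈ Γ ∧ ‖σ 0‖ ≤ 2*D + 1} := by
  classical
  intro γ hγ
  set S : Set (AffG n) := {σ : AffG n | σ ∈ Γ ∧ ‖σ 0‖ ≤ 2*D + 1} with hSdef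
  set x : Euc n := γ 0 with hx
  set N : ℕ := ⌈‖x‖⌉₊ + 1 with hN
  have hNpos : (0:ℝ) < N := by positivity
  have hNx : ‖x‖ ≤ N := by
    calc ‖x‖ ≤ ⌈‖x‖⌉₊ := Nat.le_ceil _
    _ ≤ N := by exact_mod_cast Nat.le_succ _
  set yi : ℕ → Euc n := fun i => ((i:ℝ)/(N:ℝ)) • x with hyi
  have hy0 : yi 0 = 0 := by simp [hyi]
  have hyN : yi N = x := by
    rw [hyi]
    simp only []
    rw [div_self (ne_of_gt hNpos), one_smul]
  have hystep : ∀ i : ℕ, ‖yi i - yi (i+1)‖ ≤ 1 := by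
    intro i
    have e : yi i - yi (i+1) = (((i:ℝ) - (i+1))/(N:ℝ)) • x := by
      rw [hyi]
      simp only []
      rw [← sub_smul, div_sub_div_same]
      norm_num
    rw [e, norm_smul, Real.norm_eq_abs]
    have : |((i:ℝ) - (i+1))/(N:ℝ)| = 1/(N:ℝ) := by
      rw [abs_div]
      congr 1
      · rw [show (i:ℝ) - ((i:ℝ)+1) = -1 by ring, abs_neg, abs_one]
      · rw [abs_of_pos hNpos]
    rw [this]
    rw [div_mul_eq_mul_div, one_mul, div_le_one hNpos]
    exact hNx
  -- choose σ's
  have hchoice : ∀ i : ℕ, ∃ σ : AffG n, σ ∈ Γ ∧ ‖σ (yi i)‖ ≤ D := by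
    intro i
    obtain ⟨σ, hσ, hσy⟩ := hcoc (yi i)
    exact ⟨σ, hσ, hσy⟩
  set σf : ℕ → AffG n := fun i =>
    if i = 0 then 1 else if i = N then γ⁻¹ else Classical.choose (hchoice i) with hσf
  have hσmem : ∀ i, σf i ∈ Γ := by
    intro i
    rw [hσf]
    by_cases h0 : i = 0
    · simp [h0]
    · by_cases hN' : i = N
      · simp [h0, hN']; exact hγ
      · simp [h0, hN']; exact (Classical.choose_spec (hchoice i)).1
  have hσy : ∀ i, ‖(σf i) (yi i)‖ ≤ D := by
    intro i
    by_cases h0 : i = 0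
    · have e : σf i = 1 := by rw [hσf]; simp [h0]
      rw [e, h0, hy0, one_apply, norm_zero]; linarith
    · by_cases hN' : i = N
      · have e : σf i = γ⁻¹ := by rw [hσf]; simp [h0, hN']
        rw [e, hN', hyN, hx, inv_apply_self, norm_zero]; linarith
      · have e : σf i = Classical.choose (hchoice i) := by rw [hσf]; simp [h0, hN']
        rw [e]; exact (Classical.choose_spec (hchoice i)).2
  -- induction: σf k ∈ closure S
  have hind : ∀ k, k ≤ N → σf k ∈ Subgroup.closure S := by
    intro k
    induction k with
    | zero =>
      intro _
      have : σf 0 = 1 := by rw [hσf]; simp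
      rw [this]; exact one_mem _
    | succ k ih =>
      intro hkN
      have hk : k ≤ N := by omega
      set δ : AffG n := σf (k+1) * (σf k)⁻¹ with hδ
      have hδΓ : δ ∈ Γ := mul_mem (hσmem (k+1)) (inv_mem (hσmem k))
      have hδS : δ ∈ S := by
        refine ⟨hδΓ, ?_⟩
        have hiso1 : Isometry (⇑δ) := hiso δ hδΓ
        have hisoK1 : Isometry (⇑(σf (k+1))) := hiso _ (hσmem (k+1))
        have e1 : δ ((σf k) (yi k)) = (σf (k+1)) (yi k) := by
          rw [hδ, mul_apply, inv_apply_self]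
        have t1 : ‖δ 0‖ ≤ ‖δ 0 - δ ((σf k) (yi k))‖ + ‖δ ((σf k) (yi k))‖ := by
          calc ‖δ 0‖ = ‖(δ 0 - δ ((σf k) (yi k))) + δ ((σf k) (yi k))‖ := by
                rw [sub_add_cancel]
          _ ≤ _ := norm_add_le _ _
        have t2 : ‖δ 0 - δ ((σf k) (yi k))‖ = ‖(σf k) (yi k)‖ := by
          rw [isom_norm_sub δ hiso1, zero_sub, norm_neg]
        have t3 : ‖δ ((σf k) (yi k))‖ = ‖(σf (k+1)) (yi k)‖ := by rw [e1]
        have t4 : ‖(σf (k+1)) (yi k)‖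
            ≤ ‖(σf (k+1)) (yi k) - (σf (k+1)) (yi (k+1))‖ + ‖(σf (k+1)) (yi (k+1))‖ := by
          calc ‖(σf (k+1)) (yi k)‖
              = ‖((σf (k+1)) (yi k) - (σf (k+1)) (yi (k+1))) + (σf (k+1)) (yi (k+1))‖ := by
                rw [sub_add_cancel]
          _ ≤ _ := norm_add_le _ _
        have t5 : ‖(σf (k+1)) (yi k) - (σf (k+1)) (yi (k+1))‖ = ‖yi k - yi (k+1)‖ :=
          isom_norm_sub _ hisoK1 _ _
        have := hσy k
        have := hσy (k+1)
        have := hystep k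
        calc ‖δ 0‖ ≤ ‖(σf k) (yi k)‖ + ‖(σf (k+1)) (yi k)‖ := by
              rw [← t2, ← t3]; exact t1
        _ ≤ D + (1 + D) := by
            apply add_le_add (hσy k)
            calc ‖(σf (k+1)) (yi k)‖
                ≤ ‖yi k - yi (k+1)‖ + ‖(σf (k+1)) (yi (k+1))‖ := by
                  rw [← t5]; exact t4
            _ ≤ 1 + D := add_le_add (hystep k) (hσy (k+1))
        _ = 2*D + 1 := by ring
      have : σf (k+1) = δ * σf k := by
        rw [hδ, mul_assoc, inv_mul_cancel, mul_one]
      rw [this]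
      exact mul_mem (Subgroup.subset_closure hδS) (ih hk)
  have hfin : σf N ∈ Subgroup.closure S := hind N (le_refl N)
  have hσN : σf N = γ⁻¹ := by
    rw [hσf]
    by_cases h0 : N = 0
    · exfalso; rw [hN] at h0; omega
    · simp [h0]
  rw [hσN] at hfin
  have := inv_mem hfin
  rwa [inv_inv] at this

end SG

namespace SG
open SG2
variable {n : ℕ}

lemma bounded_linear_zero {M : Euc n →L[ℝ] Euc n} {C : ℝ}
    (h : ∀ z : Euc n, ‖M z‖ ≤ C) : M = 0 := by
  apply ContinuousLinearMap.ext
  intro z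
  rw [ContinuousLinearMap.zero_apply]
  by_contra hz
  have hnorm : 0 < ‖M z‖ := norm_pos_iff.mpr hz
  obtain ⟨m, hm⟩ := exists_nat_gt (C / ‖M z‖)
  have hm0 : (0:ℝ) < m + 1 := by positivity
  have h1 : ‖M (((m:ℝ)+1) • z)‖ ≤ C := h _
  rw [map_smul, norm_smul, Real.norm_eq_abs, abs_of_pos hm0] at h1
  have h2 : C / ‖M z‖ < (m:ℝ) + 1 := lt_of_lt_of_le hm (by linarith)
  rw [div_lt_iff₀ hnorm] at h2
  linarith

lemma mul_comm_of_com_eq_one {α β : AffG n} (h : com α β = 1) : α * β = β * α := by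
  have h' : α * β * α⁻¹ * β⁻¹ = 1 := h
  calc α * β = (α * β * α⁻¹ * β⁻¹) * (β * α) := by group
  _ = β * α := by rw [h', one_mul]

lemma LSet_sum {Γ : Subgroup (AffG n)} (F : Finset (Euc n))
    (h : ∀ t ∈ F, t ∈ LSet Γ) : (∑ t ∈ F, t) ∈ LSet Γ := by
  classical
  induction F using Finset.induction with
  | empty => simpa using LSet_zero Γ
  | insert a s hnotmem ih =>
    rw [Finset.sum_insert hnotmem]
    exact LSet_add (h a (Finset.mem_insert_self a s))
      (ih (fun t ht => h t (Finset.mem_insert_of_mem ht)))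

/-- extraction of close pairs from an infinite bounded family -/
lemma close_pair {S : Set (AffG n)} (hinf : S.Infinite) {c : ℝ}
    (hbound : ∀ g ∈ S, ‖g 0‖ ≤ c) (hiso : ∀ g ∈ S, Isometry (⇑g))
    {δ : ℝ} (hδ : 0 < δ) :
    ∃ g ∈ S, ∃ g' ∈ S, g ≠ g' ∧ ‖g 0 - g' 0‖ ≤ δ ∧ ‖Rt g - Rt g'‖ ≤ δ := by
  classical
  set ψ : AffG n → (Euc n × (Euc n →L[ℝ] Euc n)) := fun g => (g 0, Rt g) with hψ
  have hψinj : Function.Injective ψ := by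
    intro g g' h
    have h1 : g 0 = g' 0 := congrArg Prod.fst h
    have h2 : Rt g = Rt g' := congrArg Prod.snd h
    exact ext' h2 h1
  set T : Set (Euc n × (Euc n →L[ℝ] Euc n)) := ψ '' S with hT
  have hTinf : T.Infinite := Set.Infinite.image (hψinj.injOn) hinf
  have hTsub : T ⊆ (Metric.closedBall 0 c) ×ˢ (Metric.closedBall 0 1) := by
    rintro _ ⟨g, hg, rfl⟩
    constructor
    · rw [Metric.mem_closedBall, dist_zero_right]; exact hbound g hg
    · rw [Metric.mem_closedBall, dist_zero_right]
      exact NI_norm_le g (NI_of_isometry (hiso g hg))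
  have htb : TotallyBounded T := by
    apply TotallyBounded.subset hTsub
    exact ((isCompact_closedBall _ _).prod (isCompact_closedBall _ _)).totallyBounded
  obtain ⟨t, htf, hcover⟩ := (EMetric.totallyBounded_iff.mp htb)
    (ENNReal.ofReal (δ/2)) (by simp; positivity)
  -- some ball contains two points of T
  have hexists : ∃ y ∈ t, ¬ (T ∩ Metric.eball y (ENNReal.ofReal (δ/2))).Finite := by
    by_contra hall
    push_neg at hall
    have : T.Finite := by
      have hTeq : T = ⋃ y ∈ t, (T ∩ Metric.eball y (ENNReal.ofReal (δ/2))) := by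
        apply Set.eq_of_subset_of_subset
        · intro z hz
          obtain ⟨y, hy, hzy⟩ := Set.mem_iUnion₂.mp (hcover hz)
          exact Set.mem_iUnion₂.mpr ⟨y, hy, hz, hzy⟩
        · intro z hz
          obtain ⟨y, hy, hz', _⟩ := Set.mem_iUnion₂.mp hz
          exact hz'
      rw [hTeq]
      exact Set.Finite.biUnion htf (fun y hy => hall y hy)
    exact hTinf this
  obtain ⟨y, hy, hbig⟩ := hexists
  have hinf2 : (T ∩ Metric.eball y (ENNReal.ofReal (δ/2))).Infinite := hbig
  obtain ⟨p, hp, q, hq, hpq⟩ := Set.Infinite.nontrivial hinf2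
  obtain ⟨hpT, hpball⟩ := hp
  obtain ⟨hqT, hqball⟩ := hq
  obtain ⟨g, hg, hgp⟩ := hpT
  obtain ⟨g', hg', hgq⟩ := hqT
  have hd : dist p q ≤ δ := by
    have h1 : dist p y < δ/2 := by
      have := hpball
      rw [Metric.mem_eball, edist_dist] at this
      exact (ENNReal.ofReal_lt_ofReal_iff_of_nonneg dist_nonneg).mp this
    have h2 : dist q y < δ/2 := by
      have := hqball
      rw [Metric.mem_eball, edist_dist] at this
      exact (ENNReal.ofReal_lt_ofReal_iff_of_nonneg dist_nonneg).mp this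
    calc dist p q ≤ dist p y + dist q y := dist_triangle_right _ _ _
    _ ≤ δ := by linarith
  refine ⟨g, hg, g', hg', ?_, ?_, ?_⟩
  · intro hgg
    apply hpq
    rw [← hgp, ← hgq, hgg]
  · have h3 : dist (g 0) (g' 0) ≤ dist p q := by
      rw [← hgp, ← hgq, Prod.dist_eq]
      exact le_max_left _ _
    rw [dist_eq_norm] at h3
    linarith
  · have h3 : dist (Rt g) (Rt g') ≤ dist p q := by
      rw [← hgp, ← hgq, Prod.dist_eq]
      exact le_max_right _ _
    rw [dist_eq_norm] at h3
    linarith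

end SG

namespace SG
open SG2
open scoped RealInnerProductSpace
variable {n : ℕ}

lemma NI_injective {γ : AffG n} (h : NI γ) : Function.Injective (Rt γ) := by
  intro x y hxy
  have h1 : ‖Rt γ (x - y)‖ = ‖x - y‖ := h _
  rw [map_sub, hxy, sub_self, norm_zero] at h1
  exact sub_eq_zero.mp (norm_eq_zero.mp h1.symm)

set_option maxHeartbeats 2000000 in
theorem NE_orbit_finite {Γ NE : Subgroup (AffG n)}
    (hΓ : IsSpaceGroup Γ)
    (hcenter : ∀ g ∈ Γ, (∀ h ∈ Γ, g * h = h * g) → g = 1)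
    (hNE : ∀ f : AffG n, f ∈ NE ↔ Isometry (⇑f) ∧ ∀ g : AffG n, g ∈ Γ ↔ f * g * f⁻¹ ∈ Γ)
    (c : ℝ) : {g : AffG n | g ∈ NE ∧ ‖g 0‖ ≤ c}.Finite := by
  classical
  obtain ⟨hiso, hpd, hcoc⟩ := hΓ
  have hfin := orbit_finite hpd
  obtain ⟨ε₀, hε₀pos, hε₀le, hD1⟩ := exists_D1 hfin
  obtain ⟨D, hD1', hcocD⟩ := exists_coc_radius hcoc
  by_contra hinf'
  have hSinf : {g : AffG n | g ∈ NE ∧ ‖g 0‖ ≤ c}.Infinite := hinf'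
  set δ : ℝ := ε₀ / (2*D + 8) with hδdef
  have hδpos : 0 < δ := by
    apply div_pos hε₀pos; linarith
  -- extract a close pair
  obtain ⟨g, hg, g', hg', hne, hd0, hdR⟩ := close_pair hSinf
    (fun g hg => hg.2) (fun g hg => ((hNE g).mp hg.1).1) hδpos
  set h : AffG n := g⁻¹ * g' with hh
  have hhNE : h ∈ NE := mul_mem (inv_mem hg.1) hg'.1
  have hhne : h ≠ 1 := by
    intro hcontra
    apply hne
    have := congrArg (fun z => g * z) hcontra
    simp only [hh, ← mul_assoc, mul_inv_cancel, one_mul, mul_one] at this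
    exact this.symm
  have hhiso : Isometry (⇑h) := ((hNE h).mp hhNE).1
  have hNIh : NI h := NI_of_isometry hhiso
  have hgiso : Isometry (⇑g) := ((hNE g).mp hg.1).1
  -- h is close to 1
  have hh0 : ‖h 0‖ ≤ δ := by
    have e1 : h 0 = g⁻¹ (g' 0) := rfl
    have e2 : (0:Euc n) = g⁻¹ (g 0) := (inv_apply_self g 0).symm
    have e3 : g⁻¹ (g' 0) - g⁻¹ (g 0) = h 0 := by
      rw [inv_apply_self, ← e1, sub_zero]
    calc ‖h 0‖ = ‖g⁻¹ (g' 0) - g⁻¹ (g 0)‖ := by rw [e3]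
    _ = ‖g' 0 - g 0‖ := isom_norm_sub _ (isometry_inv hgiso) _ _
    _ ≤ δ := by rw [norm_sub_rev]; exact hd0
  have hhR : ‖Rt h - 1‖ ≤ δ := by
    have e1 : Rt h - 1 = Rt g⁻¹ * (Rt g' - Rt g) := by
      rw [mul_sub, Rt_inv_mul, hh, Rt_mul]
    rw [e1]
    calc ‖Rt g⁻¹ * (Rt g' - Rt g)‖ ≤ ‖Rt g' - Rt g‖ :=
          norm_isom_mul_le (NI_inv (NI_of_isometry hgiso)) _
    _ ≤ δ := by rw [norm_sub_rev]; exact hdR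
  -- h commutes with generators of Γ
  have hcomm_gen : ∀ σ : AffG n, σ ∈ Γ → ‖σ 0‖ ≤ 2*D + 1 → h * σ = σ * h := by
    intro σ hσΓ hσ0
    have hσiso : Isometry (⇑σ) := hiso σ hσΓ
    have hNIσ : NI σ := NI_of_isometry hσiso
    set ξ : AffG n := com h σ with hξ
    have hξΓ : ξ ∈ Γ := by
      have h1 : h * σ * h⁻¹ ∈ Γ := (((hNE h).mp hhNE).2 σ).mp hσΓ
      have h2 : ξ = (h * σ * h⁻¹) * σ⁻¹ := rfl
      rw [h2]
      exact mul_mem h1 (inv_mem hσΓ)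
    have hσR2 : ‖Rt σ - 1‖ ≤ 2 := by
      calc ‖Rt σ - 1‖ ≤ ‖Rt σ‖ + ‖(1 : Euc n →L[ℝ] Euc n)‖ := norm_sub_le _ _
      _ ≤ 1 + 1 := add_le_add (NI_norm_le σ hNIσ) ContinuousLinearMap.norm_id_le
      _ = 2 := by norm_num
    have hξ0 : ‖ξ 0‖ ≤ ε₀ := by
      calc ‖ξ 0‖ ≤ ‖Rt σ - 1‖ * ‖h 0‖ + ‖Rt h - 1‖ * ‖σ 0‖ := com_zero_bound hNIh hNIσ
      _ ≤ 2 * δ + δ * (2*D + 1) := by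
          apply add_le_add
          · apply mul_le_mul hσR2 hh0 (norm_nonneg _) (by norm_num)
          · apply mul_le_mul hhR hσ0 (norm_nonneg _) (le_of_lt hδpos)
      _ ≤ ε₀ := by
          have hden : (0:ℝ) < 2*D + 8 := by linarith
          have hkey : δ * (2*D+8) = ε₀ := by
            rw [hδdef, div_mul_cancel₀ _ (ne_of_gt hden)]
          nlinarith [hδpos.le]
    have hξR : ‖Rt ξ - 1‖ ≤ ε₀ := by
      calc ‖Rt ξ - 1‖ ≤ 2 * ‖Rt h - 1‖ * ‖Rt σ - 1‖ := rot_com_est hNIh hNIσ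
      _ ≤ 2 * δ * 2 := by
          apply mul_le_mul _ hσR2 (norm_nonneg _) (by positivity)
          apply mul_le_mul_of_nonneg_left hhR (by norm_num)
      _ ≤ ε₀ := by
          have hden : (0:ℝ) < 2*D + 8 := by linarith
          have hkey : δ * (2*D+8) = ε₀ := by
            rw [hδdef, div_mul_cancel₀ _ (ne_of_gt hden)]
          nlinarith [hδpos.le, hD1']
    have := hD1 ξ hξΓ hξ0 hξR
    exact mul_comm_of_com_eq_one this
  -- h commutes with all of Γ
  have hcomm : ∀ γ ∈ Γ, h * γ = γ * h := by
    intro γ hγ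
    have hγcl := generation hiso hD1' hcocD γ hγ
    have hsub : {σ : AffG n | σ ∈ Γ ∧ ‖σ 0‖ ≤ 2*D + 1} ⊆
        ↑(Subgroup.centralizer {h}) := by
      intro σ hσ
      rw [SetLike.mem_coe, Subgroup.mem_centralizer_iff]
      intro z hz
      rw [Set.mem_singleton_iff] at hz
      rw [hz]
      exact hcomm_gen σ hσ.1 hσ.2
    have := (Subgroup.closure_le _).mpr hsub hγcl
    rw [Subgroup.mem_centralizer_iff] at this
    exact this h (Set.mem_singleton h)
  -- bounded displacement
  have hdisp : ∀ x : Euc n, ‖h x - x‖ ≤ δ * (D + 1) := by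
    intro x
    obtain ⟨γ, hγ, hγx⟩ := hcocD x
    have e1 : h (γ x) = γ (h x) := by
      have := congrArg (fun f : AffG n => f x) (hcomm γ hγ)
      exact this
    have e2 : ‖h x - x‖ = ‖h (γ x) - γ x‖ := by
      rw [e1, isom_norm_sub γ (hiso γ hγ)]
    rw [e2]
    have e3 : h (γ x) - γ x = (Rt h - 1) (γ x) + h 0 := by
      rw [decomp h (γ x)]
      simp [ContinuousLinearMap.sub_apply]
      abel
    rw [e3]
    calc ‖(Rt h - 1) (γ x) + h 0‖ ≤ ‖(Rt h - 1) (γ x)‖ + ‖h 0‖ := norm_add_le _ _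
    _ ≤ ‖Rt h - 1‖ * ‖γ x‖ + δ := add_le_add ((Rt h - 1).le_opNorm _) hh0
    _ ≤ δ * D + δ := by
        apply add_le_add ?_ le_rfl
        apply mul_le_mul hhR hγx (norm_nonneg _) (le_of_lt hδpos)
    _ = δ * (D + 1) := by ring
  -- rotation part of h is trivial
  have hRth : Rt h = 1 := by
    have hb : ∀ z : Euc n, ‖(Rt h - 1) z‖ ≤ δ * (D + 1) + δ := by
      intro z
      have e : (Rt h - 1) z = (h z - z) - h 0 := by
        rw [decomp h z]
        simp [ContinuousLinearMap.sub_apply]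
        abel
      rw [e]
      calc ‖(h z - z) - h 0‖ ≤ ‖h z - z‖ + ‖h 0‖ := norm_sub_le _ _
      _ ≤ δ * (D + 1) + δ := add_le_add (hdisp z) hh0
    have := bounded_linear_zero hb
    have h2 : Rt h - 1 = 0 := this
    rw [← sub_eq_zero]; exact h2
  -- h is a nonzero translation
  set cv : Euc n := h 0 with hcv
  have hhtr : h = transl cv := eq_transl_of_Rt_eq_one hRth
  have hcvne : cv ≠ 0 := by
    intro hcv0
    apply hhne
    rw [hhtr, hcv0, transl_zero]
  -- all rotation parts of Γ fix cv
  have hfix : ∀ γ ∈ Γ, Rt γ cv = cv := by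
    intro γ hγ
    have e1 := congrArg (fun f : AffG n => f 0) (hcomm γ hγ)
    simp only [mul_apply] at e1
    -- e1 : h (γ 0) = γ (h 0)
    rw [hhtr, transl_apply, transl_zero'] at e1
    -- e1 : cv + γ 0 = γ cv
    rw [decomp γ cv] at e1
    have h3 : cv + γ 0 - γ 0 = Rt γ cv + γ 0 - γ 0 := by rw [e1]
    have h4 : cv = Rt γ cv := by simpa using h3
    exact h4.symm
  -- main lemma: a translation not orthogonal to cv
  obtain ⟨t, htL, htc⟩ := lemmaM hiso hfin hcocD hcvne
  -- orbit of t
  set O : Set (Euc n) := {s : Euc n | ∃ γ ∈ Γ, Rt γ t = s} with hO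
  have hOsub : O ⊆ {s : Euc n | s ∈ LSet Γ ∧ ‖s‖ ≤ ‖t‖} := by
    rintro s ⟨γ, hγ, rfl⟩
    exact ⟨LSet_conj hγ htL, le_of_eq (NI_of_isometry (hiso γ hγ) t)⟩
  have hOfin : O.Finite := Set.Finite.subset (LSet_ball_finite hfin ‖t‖) hOsub
  set F : Finset (Euc n) := hOfin.toFinset with hF
  have hFmem : ∀ s, s ∈ F ↔ ∃ γ ∈ Γ, Rt γ t = s := by
    intro s
    rw [hF, Set.Finite.mem_toFinset]
    rfl
  have htF : t ∈ F := by
    rw [hFmem]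
    exact ⟨1, one_mem Γ, by rw [Rt_one]; rfl⟩
  set w : Euc n := ∑ s ∈ F, s with hw
  have hwL : w ∈ LSet Γ := LSet_sum F (fun s hs => (hOsub ((hFmem s).mp hs) : _).1)
  -- F is invariant
  have himg : ∀ γ ∈ Γ, F.image (Rt γ) = F := by
    intro γ hγ
    apply Finset.eq_of_subset_of_card_le
    · intro s hs
      rw [Finset.mem_image] at hs
      obtain ⟨s', hs', rfl⟩ := hs
      obtain ⟨γ', hγ', rfl⟩ := (hFmem s').mp hs'
      rw [hFmem]
      refine ⟨γ * γ', mul_mem hγ hγ', ?_⟩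
      rw [Rt_mul]; rfl
    · rw [Finset.card_image_of_injective _ (NI_injective (NI_of_isometry (hiso γ hγ)))]
  have hwinv : ∀ γ ∈ Γ, Rt γ w = w := by
    intro γ hγ
    have e1 : Rt γ w = ∑ s ∈ F, Rt γ s := map_sum (Rt γ) _ _
    have e2 : ∑ s ∈ F.image (Rt γ), s = ∑ s ∈ F, Rt γ s :=
      Finset.sum_image (fun x _ y _ hxy =>
        NI_injective (NI_of_isometry (hiso γ hγ)) hxy)
    rw [e1, ← e2, himg γ hγ]
  -- inner product of w with cv
  have hwinner : ⟪w, cv⟫ = (F.card : ℝ) * ⟪t, cv⟫ := by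
    rw [hw, sum_inner]
    have : ∀ s ∈ F, ⟪s, cv⟫ = ⟪t, cv⟫ := by
      intro s hs
      obtain ⟨γ, hγ, rfl⟩ := (hFmem s).mp hs
      have hNIγ : NI γ := NI_of_isometry (hiso γ hγ)
      have e1 : ⟪Rt γ t, cv⟫ = ⟪Rt γ t, Rt γ (Rt γ⁻¹ cv)⟫ := by
        rw [Rt_apply_inv_apply]
      rw [e1, NI_inner hNIγ, hfix γ⁻¹ (inv_mem hγ)]
    rw [Finset.sum_congr rfl this, Finset.sum_const, nsmul_eq_mul]
  have hwne : w ≠ 0 := by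
    intro hw0
    have h1 : ⟪w, cv⟫ = 0 := by rw [hw0]; simp
    rw [hwinner] at h1
    have hcard : 0 < F.card := Finset.card_pos.mpr ⟨t, htF⟩
    have : (F.card : ℝ) ≠ 0 := by exact_mod_cast hcard.ne'
    exact htc (by
      rcases mul_eq_zero.mp h1 with h | h
      · exact absurd h this
      · exact h)
  -- transl w is central in Γ
  have hcentral : ∀ ρ ∈ Γ, transl w * ρ = ρ * transl w := by
    intro ρ hρ
    have e1 : ρ * transl w * ρ⁻¹ = transl w := by
      rw [conj_transl, hwinv ρ hρ]
    calc transl w * ρ = (ρ * transl w * ρ⁻¹) * ρ := by rw [e1]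
    _ = ρ * transl w := by group
  have := hcenter (transl w) hwL hcentral
  apply hwne
  have := congrArg (fun f : AffG n => f 0) this
  simpa [transl_zero', one_apply] using this
end SG

open SG SG2 in
set_option maxHeartbeats 1000000 in
/-- Corollary 7: if `Z(Γ) = 1` then `Γ` has finite index in its normalizer `N_E(Γ)` in
`Isom(Eⁿ)`, and `N_E(Γ)` is itself an `n`-space group. -/
theorem stmt14 {n : ℕ} (Γ NE : Subgroup (AffG n)) (hΓ : IsSpaceGroup Γ)
    (hcenter : ∀ g ∈ Γ, (∀ h ∈ Γ, g * h = h * g) → g = 1)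
    (hNE : ∀ f : AffG n, f ∈ NE ↔ Isometry (⇑f) ∧ ∀ g : AffG n, g ∈ Γ ↔ f * g * f⁻¹ ∈ Γ) :
    (Γ.subgroupOf NE).FiniteIndex ∧ IsSpaceGroup NE := by
  classical
  obtain ⟨hiso, hpd, hcoc⟩ := hΓ
  -- Γ ≤ NE
  have hΓNE : ∀ γ ∈ Γ, γ ∈ NE := by
    intro γ hγ
    rw [hNE]
    refine ⟨hiso γ hγ, fun g => ⟨fun hg => mul_mem (mul_mem hγ hg) (inv_mem hγ), fun hg => ?_⟩⟩
    have e : g = γ⁻¹ * (γ * g * γ⁻¹) * γ := by group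
    rw [e]
    exact mul_mem (mul_mem (inv_mem hγ) hg) hγ
  have hNEfin := NE_orbit_finite ⟨hiso, hpd, hcoc⟩ hcenter hNE
  -- proper discontinuity of NE
  have hNEpd : ∀ K : Set (Euc n), IsCompact K →
      {γ : AffG n | γ ∈ NE ∧ ((⇑γ '' K) ∩ K).Nonempty}.Finite := by
    intro K hKc
    obtain ⟨r, hr⟩ := hKc.isBounded.subset_closedBall 0
    apply Set.Finite.subset (hNEfin (|r| + |r|))
    rintro g ⟨hgNE, z, ⟨x, hx, rfl⟩, hgx⟩
    refine ⟨hgNE, ?_⟩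
    have hgiso : Isometry (⇑g) := ((hNE g).mp hgNE).1
    have h1 : ‖x‖ ≤ |r| := by
      have := hr hx
      rw [Metric.mem_closedBall, dist_zero_right] at this
      exact le_trans this (le_abs_self r)
    have h2 : ‖g x‖ ≤ |r| := by
      have := hr hgx
      rw [Metric.mem_closedBall, dist_zero_right] at this
      exact le_trans this (le_abs_self r)
    calc ‖g 0‖ = ‖(g 0 - g x) + g x‖ := by rw [sub_add_cancel]
    _ ≤ ‖g 0 - g x‖ + ‖g x‖ := norm_add_le _ _
    _ = ‖(0:Euc n) - x‖ + ‖g x‖ := by rw [isom_norm_sub g hgiso]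
    _ ≤ |r| + |r| := by
        rw [zero_sub, norm_neg]
        exact add_le_add h1 h2
  -- finite index
  obtain ⟨D, hD1', hcocD⟩ := exists_coc_radius hcoc
  have hfinidx : (Γ.subgroupOf NE).FiniteIndex := by
    set H := Γ.subgroupOf NE with hH
    set S₀ : Set (AffG n) := {v : AffG n | v ∈ NE ∧ ‖v 0‖ ≤ D} with hS₀
    have hS₀fin : S₀.Finite := hNEfin D
    haveI : Finite ↥S₀ := hS₀fin.to_subtype
    set q : ↥S₀ → (NE ⧸ H) := fun v =>
      QuotientGroup.mk ⟨(v : AffG n)⁻¹, inv_mem v.2.1⟩ with hq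
    have hsurj : Function.Surjective q := by
      intro z
      obtain ⟨g, rfl⟩ := QuotientGroup.mk_surjective z
      obtain ⟨γ, hγ, hγx⟩ := hcocD (((g : AffG n))⁻¹ 0)
      set v : AffG n := γ * (g : AffG n)⁻¹ with hv
      have hvNE : v ∈ NE := mul_mem (hΓNE γ hγ) (inv_mem g.2)
      have hvD : ‖v 0‖ ≤ D := by
        have e : v 0 = γ ((g : AffG n)⁻¹ 0) := rfl
        rw [e]; exact hγx
      refine ⟨⟨v, hvNE, hvD⟩, ?_⟩
      show QuotientGroup.mk _ = QuotientGroup.mk g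
      rw [QuotientGroup.eq]
      rw [hH, Subgroup.mem_subgroupOf]
      have e2 : ((⟨v, hvNE⟩ : NE)⁻¹⁻¹ * g : NE) = (⟨v, hvNE⟩ : NE) * g := by
        rw [inv_inv]
      have e3 : (((⟨v⁻¹, inv_mem hvNE⟩ : NE))⁻¹ * g : NE) = ((⟨v, hvNE⟩ : NE) * g) := by
        apply Subtype.ext
        simp [hv]
      rw [e3]
      have e4 : (((⟨v, hvNE⟩ : NE) * g : NE) : AffG n) = v * (g : AffG n) := rfl
      rw [e4, hv]
      have e5 : γ * (g : AffG n)⁻¹ * (g : AffG n) = γ := by group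
      rw [e5]
      exact hγ
    haveI : Finite (NE ⧸ H) := Finite.of_surjective q hsurj
    exact Subgroup.finiteIndex_of_finite_quotient
  refine ⟨hfinidx, ?_, hNEpd, ?_⟩
  · intro f hf
    exact ((hNE f).mp hf).1
  · obtain ⟨K, hKc, hK⟩ := hcoc
    exact ⟨K, hKc, fun x => by
      obtain ⟨γ, hγ, hγx⟩ := hK x
      exact ⟨γ, hΓNE γ hγ, hγx⟩⟩
end
end

section
/- For i = 1, 2, let N_i be a complete normal subgroup of an n-space group Γ_i such that Γ_i/N_i is infinite cyclic, and let γ_i ∈ Γ_i be an element whose coset γ_iN_i generates Γ_i/N_i. For γ ∈ Γ_i, let γ_* denote the automorphism of N_i given by γ_*(ν) = γνγ⁻¹. Then an isomorphism α : N_1 → N_2 extends to an isomorphism φ : Γ_1 → Γ_2 if and only if α∘(γ_1)_*∘α⁻¹ and (γ_2)_* represent the same element of Out(N_2) = Aut(N_2)/Inn(N_2), or α∘(γ_1)_*∘α⁻¹ and (γ_2⁻¹)_* represent the same element of Out(N_2). -/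
namespace StmtAux15
variable {G : Type*} [Group G]

lemma pow_coset (N Γ : Subgroup G) (hnorm : ∀ γ ∈ Γ, ∀ ν ∈ N, γ * ν * γ⁻¹ ∈ N)
    (c : G) (hc : c ∈ Γ) (ν : G) (hν : ν ∈ N) (m : ℤ) :
    ∃ μ ∈ N, (ν * c) ^ m = μ * c ^ m := by
  induction m using Int.induction_on with
  | zero => exact ⟨1, N.one_mem, by simp⟩
  | succ m ih =>
    obtain ⟨μ, hμ, h⟩ := ih
    refine ⟨μ * (c ^ (m : ℤ) * ν * (c ^ (m : ℤ))⁻¹),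
      N.mul_mem hμ (hnorm _ (Γ.zpow_mem hc m) ν hν), ?_⟩
    rw [zpow_add_one, zpow_add_one, ← mul_assoc, h]
    group
  | pred m ih =>
    obtain ⟨μ, hμ, h⟩ := ih
    refine ⟨μ * (c ^ (-(m : ℤ) - 1) * ν⁻¹ * (c ^ (-(m : ℤ) - 1))⁻¹),
      N.mul_mem hμ (hnorm _ (Γ.zpow_mem hc _) _ (N.inv_mem hν)), ?_⟩
    rw [zpow_sub_one, zpow_sub_one, h]
    group

lemma idx_unique (N : Subgroup G) (c : G) (hinf : ∀ k : ℤ, c ^ k ∈ N → k = 0)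
    {g : G} {a b : ℤ} (ha : g * c ^ (-a) ∈ N) (hb : g * c ^ (-b) ∈ N) : a = b := by
  have h : c ^ (a - b) ∈ N := by
    have := N.mul_mem (N.inv_mem ha) hb
    have e : (g * c ^ (-a))⁻¹ * (g * c ^ (-b)) = c ^ (a - b) := by
      rw [zpow_sub]; group
    rwa [e] at this
  linarith [hinf _ h]

lemma dec_unique (N : Subgroup G) (c : G) (hinf : ∀ k : ℤ, c ^ k ∈ N → k = 0)
    {g μ μ' : G} {a b : ℤ} (hμ : μ ∈ N) (hμ' : μ' ∈ N)
    (h : g = μ * c ^ a) (h' : g = μ' * c ^ b) : a = b ∧ μ = μ' := by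
  have ha : g * c ^ (-a) ∈ N := by
    rw [h, show μ * c ^ a * c ^ (-a) = μ by group]; exact hμ
  have hb : g * c ^ (-b) ∈ N := by
    rw [h', show μ' * c ^ b * c ^ (-b) = μ' by group]; exact hμ'
  have hab : a = b := idx_unique N c hinf ha hb
  refine ⟨hab, ?_⟩
  rw [← hab] at h'
  exact mul_right_cancel (h.symm.trans h')

lemma ext_iso (N₁ Γ₁ N₂ Γ₂ : Subgroup G)
    (hle₁ : N₁ ≤ Γ₁) (hle₂ : N₂ ≤ Γ₂)
    (hnorm₁ : ∀ γ ∈ Γ₁, ∀ ν ∈ N₁, γ * ν * γ⁻¹ ∈ N₁)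
    (γ₁ δ : G) (hγ₁ : γ₁ ∈ Γ₁) (hδ : δ ∈ Γ₂)
    (hgen₁ : ∀ g ∈ Γ₁, ∃ k : ℤ, ∃ ν ∈ N₁, g = ν * γ₁ ^ k)
    (hgen₂ : ∀ g ∈ Γ₂, ∃ k : ℤ, ∃ ν ∈ N₂, g = ν * δ ^ k)
    (hinf₁ : ∀ k : ℤ, γ₁ ^ k ∈ N₁ → k = 0)
    (hinf₂ : ∀ k : ℤ, δ ^ k ∈ N₂ → k = 0)
    (α : ↥N₁ ≃* ↥N₂)
    (hcomp : ∀ (μ : G) (hμ : μ ∈ N₁) (hμ' : γ₁ * μ * γ₁⁻¹ ∈ N₁),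
      ((α ⟨γ₁ * μ * γ₁⁻¹, hμ'⟩ : ↥N₂) : G) = δ * ((α ⟨μ, hμ⟩ : ↥N₂) : G) * δ⁻¹) :
    ∃ φ : ↥Γ₁ ≃* ↥Γ₂,
      ∀ (g : G) (hg : g ∈ N₁),
        ((φ ⟨g, hle₁ hg⟩ : ↥Γ₂) : G) = ((α ⟨g, hg⟩ : ↥N₂) : G) := by
  classical
  -- congruence helpers
  have Aeq : ∀ {μ μ' : G} (hμ : μ ∈ N₁) (hμ' : μ' ∈ N₁), μ = μ' →
      ((α ⟨μ, hμ⟩ : ↥N₂) : G) = ((α ⟨μ', hμ'⟩ : ↥N₂) : G) := by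
    rintro μ _ hμ hμ' rfl; rfl
  have Amul : ∀ (μ₁ μ₂ : G) (h₁ : μ₁ ∈ N₁) (h₂ : μ₂ ∈ N₁),
      ((α ⟨μ₁ * μ₂, N₁.mul_mem h₁ h₂⟩ : ↥N₂) : G)
        = ((α ⟨μ₁, h₁⟩ : ↥N₂) : G) * ((α ⟨μ₂, h₂⟩ : ↥N₂) : G) := by
    intro μ₁ μ₂ h₁ h₂
    rw [show (⟨μ₁ * μ₂, N₁.mul_mem h₁ h₂⟩ : ↥N₁) = ⟨μ₁, h₁⟩ * ⟨μ₂, h₂⟩ from rfl, map_mul]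
    rfl
  -- conjugation membership helper
  have memconj : ∀ (a : ℤ) (μ : G), μ ∈ N₁ → γ₁ ^ a * μ * γ₁ ^ (-a) ∈ N₁ := by
    intro a μ hμ
    have := hnorm₁ (γ₁ ^ a) (Γ₁.zpow_mem hγ₁ a) μ hμ
    rwa [← zpow_neg] at this
  -- powered compatibility
  have hcompz : ∀ (a : ℤ) (μ : G) (hμ : μ ∈ N₁),
      ((α ⟨γ₁ ^ a * μ * γ₁ ^ (-a), memconj a μ hμ⟩ : ↥N₂) : G)
        = δ ^ a * ((α ⟨μ, hμ⟩ : ↥N₂) : G) * δ ^ (-a) := by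
    intro a
    induction a using Int.induction_on with
    | zero => intro μ hμ; simp
    | succ a ih =>
      intro μ hμ
      have hmem := memconj (a : ℤ) μ hμ
      have e : γ₁ ^ ((a : ℤ) + 1) * μ * γ₁ ^ (-((a : ℤ) + 1))
          = γ₁ * (γ₁ ^ (a : ℤ) * μ * γ₁ ^ (-(a : ℤ))) * γ₁⁻¹ := by
        rw [zpow_neg, zpow_neg]; group
      rw [Aeq _ (hnorm₁ γ₁ hγ₁ _ hmem) e, hcomp _ hmem, ih μ hμ]
      group
    | pred a ih =>
      intro μ hμ
      -- express at -a-1 via hcomp applied to the element at exponent -a of (γ₁⁻¹ conj)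
      have hmem' : γ₁ ^ (-(a : ℤ) - 1) * μ * γ₁ ^ (-(-(a : ℤ) - 1)) ∈ N₁ :=
        memconj _ μ hμ
      -- apply hcomp to ν := γ₁^(-a-1) μ γ₁^(a+1) to move back up
      have key := hcomp _ hmem' (by
        have e : γ₁ * (γ₁ ^ (-(a : ℤ) - 1) * μ * γ₁ ^ (-(-(a : ℤ) - 1))) * γ₁⁻¹
            = γ₁ ^ (-(a : ℤ)) * μ * γ₁ ^ (-(-(a : ℤ))) := by
          rw [zpow_neg, zpow_neg, zpow_sub, zpow_neg]; group
        rw [e]; exact memconj _ μ hμ)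
      have e : γ₁ * (γ₁ ^ (-(a : ℤ) - 1) * μ * γ₁ ^ (-(-(a : ℤ) - 1))) * γ₁⁻¹
          = γ₁ ^ (-(a : ℤ)) * μ * γ₁ ^ (-(-(a : ℤ))) := by
        rw [zpow_neg, zpow_neg, zpow_sub, zpow_neg]; group
      rw [Aeq _ (memconj _ μ hμ) e, ih μ hμ] at key
      -- key : α ⟨γ₁^(-a-1) μ γ₁^{-(-a-1)}⟩ conj by δ equals δ^{-a} α μ δ^{a}
      set X := ((α ⟨γ₁ ^ (-(a:ℤ)-1) * μ * γ₁ ^ (-(-(a:ℤ)-1)), hmem'⟩ : ↥N₂) : G) with hXdef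
      calc X = δ⁻¹ * (δ * X * δ⁻¹) * δ := by group
        _ = δ⁻¹ * (δ ^ (-(a:ℤ)) * ((α ⟨μ, hμ⟩ : ↥N₂) : G) * δ ^ (-(-(a:ℤ)))) * δ := by
            rw [← key]
        _ = δ ^ (-(a:ℤ) - 1) * ((α ⟨μ, hμ⟩ : ↥N₂) : G) * δ ^ (-(-(a:ℤ) - 1)) := by group
  -- choose decompositions
  choose k₁ ν₁f hν₁ hdec₁ using hgen₁
  choose k₂ ν₂f hν₂ hdec₂ using hgen₂
  have A'eq : ∀ {μ μ' : G} (hμ : μ ∈ N₂) (hμ' : μ' ∈ N₂), μ = μ' →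
      ((α.symm ⟨μ, hμ⟩ : ↥N₁) : G) = ((α.symm ⟨μ', hμ'⟩ : ↥N₁) : G) := by
    rintro μ _ hμ hμ' rfl; rfl
  have fval_eq : ∀ (g : G) (hg : g ∈ Γ₁) (a : ℤ) (μ : G) (hμ : μ ∈ N₁),
      g = μ * γ₁ ^ a →
      ((α ⟨ν₁f g hg, hν₁ g hg⟩ : ↥N₂) : G) * δ ^ (k₁ g hg)
        = ((α ⟨μ, hμ⟩ : ↥N₂) : G) * δ ^ a := by
    intro g hg a μ hμ h
    obtain ⟨hk, hm⟩ := dec_unique N₁ γ₁ hinf₁ hμ (hν₁ g hg) h (hdec₁ g hg)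
    rw [Aeq (hν₁ g hg) hμ hm.symm, hk]
  have fval_eq' : ∀ (g : G) (hg : g ∈ Γ₂) (a : ℤ) (μ : G) (hμ : μ ∈ N₂),
      g = μ * δ ^ a →
      ((α.symm ⟨ν₂f g hg, hν₂ g hg⟩ : ↥N₁) : G) * γ₁ ^ (k₂ g hg)
        = ((α.symm ⟨μ, hμ⟩ : ↥N₁) : G) * γ₁ ^ a := by
    intro g hg a μ hμ h
    obtain ⟨hk, hm⟩ := dec_unique N₂ δ hinf₂ hμ (hν₂ g hg) h (hdec₂ g hg)
    rw [A'eq (hν₂ g hg) hμ hm.symm, hk]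
  refine ⟨{ toFun := (fun g =>
              ⟨((α ⟨ν₁f g g.2, hν₁ g g.2⟩ : ↥N₂) : G) * δ ^ (k₁ g g.2),
                Γ₂.mul_mem (hle₂ (α ⟨ν₁f g g.2, hν₁ g g.2⟩).2) (Γ₂.zpow_mem hδ _)⟩),
            invFun := (fun h =>
              ⟨((α.symm ⟨ν₂f h h.2, hν₂ h h.2⟩ : ↥N₁) : G) * γ₁ ^ (k₂ h h.2),
                Γ₁.mul_mem (hle₁ (α.symm ⟨ν₂f h h.2, hν₂ h h.2⟩).2) (Γ₁.zpow_mem hγ₁ _)⟩),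
            left_inv := ?_, right_inv := ?_, map_mul' := ?_ }, ?_⟩
  · intro g
    apply Subtype.ext
    show ((α.symm ⟨ν₂f _ _, hν₂ _ _⟩ : ↥N₁) : G) * γ₁ ^ (k₂ _ _) = (g : G)
    rw [fval_eq' _ _ (k₁ g g.2) ((α ⟨ν₁f g g.2, hν₁ g g.2⟩ : ↥N₂) : G)
      (α ⟨ν₁f g g.2, hν₁ g g.2⟩).2 rfl]
    have : (α.symm ⟨((α ⟨ν₁f g g.2, hν₁ g g.2⟩ : ↥N₂) : G),
        (α ⟨ν₁f g g.2, hν₁ g g.2⟩).2⟩ : ↥N₁) = ⟨ν₁f g g.2, hν₁ g g.2⟩ := by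
      rw [show (⟨((α ⟨ν₁f g g.2, hν₁ g g.2⟩ : ↥N₂) : G), (α ⟨ν₁f g g.2, hν₁ g g.2⟩).2⟩ : ↥N₂)
        = α ⟨ν₁f g g.2, hν₁ g g.2⟩ from rfl]
      exact α.symm_apply_apply _
    rw [this]
    exact (hdec₁ g g.2).symm
  · intro h
    apply Subtype.ext
    show ((α ⟨ν₁f _ _, hν₁ _ _⟩ : ↥N₂) : G) * δ ^ (k₁ _ _) = (h : G)
    rw [fval_eq _ _ (k₂ h h.2) ((α.symm ⟨ν₂f h h.2, hν₂ h h.2⟩ : ↥N₁) : G)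
      (α.symm ⟨ν₂f h h.2, hν₂ h h.2⟩).2 rfl]
    have : (α ⟨((α.symm ⟨ν₂f h h.2, hν₂ h h.2⟩ : ↥N₁) : G),
        (α.symm ⟨ν₂f h h.2, hν₂ h h.2⟩).2⟩ : ↥N₂) = ⟨ν₂f h h.2, hν₂ h h.2⟩ := by
      rw [show (⟨((α.symm ⟨ν₂f h h.2, hν₂ h h.2⟩ : ↥N₁) : G), (α.symm ⟨ν₂f h h.2, hν₂ h h.2⟩).2⟩ : ↥N₁)
        = α.symm ⟨ν₂f h h.2, hν₂ h h.2⟩ from rfl]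
      exact α.apply_symm_apply _
    rw [this]
    exact (hdec₂ h h.2).symm
  · intro g h
    apply Subtype.ext
    show ((α ⟨ν₁f _ _, hν₁ _ _⟩ : ↥N₂) : G) * δ ^ (k₁ _ _)
      = (((α ⟨ν₁f g g.2, hν₁ g g.2⟩ : ↥N₂) : G) * δ ^ (k₁ g g.2))
        * (((α ⟨ν₁f h h.2, hν₁ h h.2⟩ : ↥N₂) : G) * δ ^ (k₁ h h.2))
    set a := k₁ g g.2
    set b := k₁ h h.2
    set νg := ν₁f g g.2 with hνg
    set νh := ν₁f h h.2 with hνh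
    have hconj : γ₁ ^ a * νh * γ₁ ^ (-a) ∈ N₁ := memconj a νh (hν₁ h h.2)
    have hdecgh : ((g * h : ↥Γ₁) : G)
        = (νg * (γ₁ ^ a * νh * γ₁ ^ (-a))) * γ₁ ^ (a + b) := by
      show (g : G) * (h : G) = _
      rw [hdec₁ g g.2, hdec₁ h h.2]
      group
      rfl
    rw [fval_eq _ _ (a + b) _ (N₁.mul_mem (hν₁ g g.2) hconj) hdecgh]
    rw [Amul _ _ (hν₁ g g.2) hconj, hcompz a νh (hν₁ h h.2)]
    group
    rfl
  · intro g hg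
    show ((α ⟨ν₁f g (hle₁ hg), hν₁ g (hle₁ hg)⟩ : ↥N₂) : G) * δ ^ (k₁ g (hle₁ hg)) = _
    rw [fval_eq _ _ 0 g hg (by rw [zpow_zero, mul_one]), zpow_zero, mul_one]

end StmtAux15

set_option maxHeartbeats 2000000 in
/-- Lemma 19: with `Γᵢ/Nᵢ` infinite cyclic generated by `γᵢ Nᵢ`, an isomorphism
`α : N₁ → N₂` extends to an isomorphism `Γ₁ → Γ₂` iff `α(γ₁)⋆α⁻¹` agrees with
`(γ₂)⋆` or `(γ₂⁻¹)⋆` in `Out N₂`. -/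
theorem stmt15 {n : ℕ} (Γ₁ Γ₂ N₁ N₂ : Subgroup (AffG n))
    (hΓ₁ : IsSpaceGroup Γ₁) (hΓ₂ : IsSpaceGroup Γ₂)
    (hN₁ : IsCompleteNormal N₁ Γ₁) (hN₂ : IsCompleteNormal N₂ Γ₂)
    (γ₁ γ₂ : AffG n) (hγ₁ : γ₁ ∈ Γ₁) (hγ₂ : γ₂ ∈ Γ₂)
    (hgen₁ : ∀ g ∈ Γ₁, ∃ k : ℤ, ∃ ν ∈ N₁, g = ν * γ₁ ^ k)
    (hgen₂ : ∀ g ∈ Γ₂, ∃ k : ℤ, ∃ ν ∈ N₂, g = ν * γ₂ ^ k)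
    (hinf₁ : ∀ k : ℤ, γ₁ ^ k ∈ N₁ → k = 0)
    (hinf₂ : ∀ k : ℤ, γ₂ ^ k ∈ N₂ → k = 0)
    (α : ↥N₁ ≃* ↥N₂) :
    (∃ φ : ↥Γ₁ ≃* ↥Γ₂,
      ∀ (g : AffG n) (hg : g ∈ N₁),
        (↑(φ ⟨g, hN₁.1 hg⟩) : AffG n) = (↑(α ⟨g, hg⟩) : AffG n)) ↔
    ((∃ ν₀ ∈ N₂, ∀ (x : AffG n) (hx : x ∈ N₂)
        (hy : γ₁ * (↑(α.symm ⟨x, hx⟩) : AffG n) * γ₁⁻¹ ∈ N₁),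
        (↑(α ⟨γ₁ * (↑(α.symm ⟨x, hx⟩) : AffG n) * γ₁⁻¹, hy⟩) : AffG n) =
          ν₀ * (γ₂ * x * γ₂⁻¹) * ν₀⁻¹) ∨
     (∃ ν₀ ∈ N₂, ∀ (x : AffG n) (hx : x ∈ N₂)
        (hy : γ₁ * (↑(α.symm ⟨x, hx⟩) : AffG n) * γ₁⁻¹ ∈ N₁),
        (↑(α ⟨γ₁ * (↑(α.symm ⟨x, hx⟩) : AffG n) * γ₁⁻¹, hy⟩) : AffG n) =
          ν₀ * (γ₂⁻¹ * x * γ₂) * ν₀⁻¹)) := by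
  classical
  obtain ⟨hle₁, hnorm₁, -⟩ := hN₁
  obtain ⟨hle₂, hnorm₂, -⟩ := hN₂
  constructor
  · -- forward direction
    rintro ⟨φ, hext⟩
    -- φ.symm extends α.symm
    have hsymmext : ∀ (x : AffG n) (hx : x ∈ N₂),
        ((φ.symm ⟨x, hle₂ hx⟩ : ↥Γ₁) : AffG n) = ((α.symm ⟨x, hx⟩ : ↥N₁) : AffG n) := by
      intro x hx
      have h1 : φ ⟨((α.symm ⟨x, hx⟩ : ↥N₁) : AffG n), hle₁ (α.symm ⟨x, hx⟩).2⟩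
          = ⟨x, hle₂ hx⟩ := by
        apply Subtype.ext
        rw [hext _ (α.symm ⟨x, hx⟩).2]
        rw [show (⟨((α.symm ⟨x, hx⟩ : ↥N₁) : AffG n), (α.symm ⟨x, hx⟩).2⟩ : ↥N₁)
            = α.symm ⟨x, hx⟩ from rfl, α.apply_symm_apply]
      rw [← h1, φ.symm_apply_apply]
    set Φ := ((φ ⟨γ₁, hγ₁⟩ : ↥Γ₂) : AffG n) with hΦdef
    obtain ⟨k, ν₂, hν₂, hΦdec⟩ := hgen₂ Φ (φ ⟨γ₁, hγ₁⟩).2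
    -- show k = 1 ∨ k = -1
    obtain ⟨m, ν₁', hν₁', hgdec⟩ :=
      hgen₁ ((φ.symm ⟨γ₂, hγ₂⟩ : ↥Γ₁) : AffG n) (φ.symm ⟨γ₂, hγ₂⟩).2
    have hg' : φ.symm ⟨γ₂, hγ₂⟩ = ⟨ν₁', hle₁ hν₁'⟩ * ⟨γ₁, hγ₁⟩ ^ m := by
      apply Subtype.ext
      rw [hgdec]
      push_cast
      rfl
    have hφg : (⟨γ₂, hγ₂⟩ : ↥Γ₂)
        = φ ⟨ν₁', hle₁ hν₁'⟩ * (φ ⟨γ₁, hγ₁⟩) ^ m := by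
      rw [← map_zpow, ← map_mul, ← hg', φ.apply_symm_apply]
    obtain ⟨μ', hμ', hpow⟩ := StmtAux15.pow_coset N₂ Γ₂ hnorm₂ (γ₂ ^ k)
      (Γ₂.zpow_mem hγ₂ k) ν₂ hν₂ m
    have hval : γ₂ = (((α ⟨ν₁', hν₁'⟩ : ↥N₂) : AffG n) * μ') * γ₂ ^ (k * m) := by
      have h0 := congrArg (fun t : ↥Γ₂ => (t : AffG n)) hφg
      simp only at h0
      push_cast at h0
      rw [hext _ hν₁', ← hΦdef] at h0
      calc γ₂ = _ := h0
        _ = ((α ⟨ν₁', hν₁'⟩ : ↥N₂) : AffG n) * (μ' * (γ₂ ^ k) ^ m) := by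
            rw [hΦdec, hpow]
        _ = (((α ⟨ν₁', hν₁'⟩ : ↥N₂) : AffG n) * μ') * γ₂ ^ (k * m) := by
            rw [← zpow_mul]; group
    have hkm : k * m = 1 := by
      have hmem : γ₂ ^ (1 - k * m) ∈ N₂ := by
        have e : γ₂ ^ (1 - k * m)
            = ((α ⟨ν₁', hν₁'⟩ : ↥N₂) : AffG n) * μ' := by
          rw [zpow_sub, zpow_one]
          nth_rewrite 1 [hval]
          group
        rw [e]
        exact N₂.mul_mem (α ⟨ν₁', hν₁'⟩).2 hμ'
      have := hinf₂ _ hmem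
      omega
    have hk : k = 1 ∨ k = -1 := by
      rcases Int.eq_one_or_neg_one_of_mul_eq_one hkm with h | h
      · exact Or.inl h
      · exact Or.inr h
    -- main computation
    have main : ∀ (x : AffG n) (hx : x ∈ N₂)
        (hy : γ₁ * (↑(α.symm ⟨x, hx⟩) : AffG n) * γ₁⁻¹ ∈ N₁),
        (↑(α ⟨γ₁ * (↑(α.symm ⟨x, hx⟩) : AffG n) * γ₁⁻¹, hy⟩) : AffG n)
          = Φ * x * Φ⁻¹ := by
      intro x hx hy
      set s := ((α.symm ⟨x, hx⟩ : ↥N₁) : AffG n) with hs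
      have hsN : s ∈ N₁ := (α.symm ⟨x, hx⟩).2
      have hElt : (⟨γ₁ * s * γ₁⁻¹, hle₁ hy⟩ : ↥Γ₁)
          = ⟨γ₁, hγ₁⟩ * ⟨s, hle₁ hsN⟩ * ⟨γ₁, hγ₁⟩⁻¹ := by
        apply Subtype.ext; push_cast; rfl
      have h2 : (↑(α ⟨γ₁ * s * γ₁⁻¹, hy⟩) : AffG n)
          = ((φ ⟨γ₁ * s * γ₁⁻¹, hle₁ hy⟩ : ↥Γ₂) : AffG n) := (hext _ hy).symm
      rw [h2, hElt, map_mul, map_mul, map_inv]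
      push_cast
      have h3 : ((φ ⟨s, hle₁ hsN⟩ : ↥Γ₂) : AffG n) = x := by
        rw [hext _ hsN]
        rw [show (⟨s, hsN⟩ : ↥N₁) = α.symm ⟨x, hx⟩ from rfl, α.apply_symm_apply]
      rw [h3]
    rcases hk with hk | hk
    · left
      refine ⟨ν₂, hν₂, ?_⟩
      intro x hx hy
      rw [main x hx hy, hΦdec, hk, zpow_one]
      group
    · right
      refine ⟨ν₂, hν₂, ?_⟩
      intro x hx hy
      rw [main x hx hy, hΦdec, hk]
      rw [show (γ₂ : AffG n) ^ (-1 : ℤ) = γ₂⁻¹ by group]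
      group
  · -- backward direction
    rintro (⟨ν₀, hν₀mem, hν₀⟩ | ⟨ν₀, hν₀mem, hν₀⟩)
    · -- δ = ν₀ * γ₂
      have hδ : ν₀ * γ₂ ∈ Γ₂ := Γ₂.mul_mem (hle₂ hν₀mem) hγ₂
      have hgen₂' : ∀ g ∈ Γ₂, ∃ k : ℤ, ∃ ν ∈ N₂, g = ν * (ν₀ * γ₂) ^ k := by
        intro g hg
        obtain ⟨m, ν, hν, rfl⟩ := hgen₂ g hg
        obtain ⟨μ', hμ', hpow⟩ := StmtAux15.pow_coset N₂ Γ₂ hnorm₂ γ₂ hγ₂ ν₀ hν₀mem m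
        refine ⟨m, ν * μ'⁻¹, N₂.mul_mem hν (N₂.inv_mem hμ'), ?_⟩
        rw [hpow]; group
      have hinf₂' : ∀ k : ℤ, (ν₀ * γ₂) ^ k ∈ N₂ → k = 0 := by
        intro k hk
        obtain ⟨μ', hμ', hpow⟩ := StmtAux15.pow_coset N₂ Γ₂ hnorm₂ γ₂ hγ₂ ν₀ hν₀mem k
        apply hinf₂ k
        have : γ₂ ^ k = μ'⁻¹ * (ν₀ * γ₂) ^ k := by rw [hpow]; group
        rw [this]
        exact N₂.mul_mem (N₂.inv_mem hμ') hk
      have hcomp : ∀ (μ : AffG n) (hμ : μ ∈ N₁) (hμ' : γ₁ * μ * γ₁⁻¹ ∈ N₁),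
          ((α ⟨γ₁ * μ * γ₁⁻¹, hμ'⟩ : ↥N₂) : AffG n)
            = (ν₀ * γ₂) * ((α ⟨μ, hμ⟩ : ↥N₂) : AffG n) * (ν₀ * γ₂)⁻¹ := by
        intro μ hμ hμ'
        have hx : ((α ⟨μ, hμ⟩ : ↥N₂) : AffG n) ∈ N₂ := (α ⟨μ, hμ⟩).2
        have hsymm : ((α.symm ⟨((α ⟨μ, hμ⟩ : ↥N₂) : AffG n), hx⟩ : ↥N₁) : AffG n) = μ := by
          rw [show (⟨((α ⟨μ, hμ⟩ : ↥N₂) : AffG n), hx⟩ : ↥N₂) = α ⟨μ, hμ⟩ from rfl,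
            α.symm_apply_apply]
        have h := hν₀ _ hx
        simp only [hsymm] at h
        rw [h hμ']
        group
      obtain ⟨φ, hφ⟩ := StmtAux15.ext_iso N₁ Γ₁ N₂ Γ₂ hle₁ hle₂ hnorm₁ γ₁ (ν₀ * γ₂)
        hγ₁ hδ hgen₁ hgen₂' hinf₁ hinf₂' α hcomp
      exact ⟨φ, hφ⟩
    · -- δ = ν₀ * γ₂⁻¹
      have hδ : ν₀ * γ₂⁻¹ ∈ Γ₂ := Γ₂.mul_mem (hle₂ hν₀mem) (Γ₂.inv_mem hγ₂)
      have hgen₂' : ∀ g ∈ Γ₂, ∃ k : ℤ, ∃ ν ∈ N₂, g = ν * (ν₀ * γ₂⁻¹) ^ k := by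
        intro g hg
        obtain ⟨m, ν, hν, rfl⟩ := hgen₂ g hg
        obtain ⟨μ', hμ', hpow⟩ := StmtAux15.pow_coset N₂ Γ₂ hnorm₂ γ₂⁻¹
          (Γ₂.inv_mem hγ₂) ν₀ hν₀mem (-m)
        refine ⟨-m, ν * μ'⁻¹, N₂.mul_mem hν (N₂.inv_mem hμ'), ?_⟩
        rw [hpow]; group
      have hinf₂' : ∀ k : ℤ, (ν₀ * γ₂⁻¹) ^ k ∈ N₂ → k = 0 := by
        intro k hk
        obtain ⟨μ', hμ', hpow⟩ := StmtAux15.pow_coset N₂ Γ₂ hnorm₂ γ₂⁻¹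
          (Γ₂.inv_mem hγ₂) ν₀ hν₀mem k
        have hmem : γ₂ ^ (-k) ∈ N₂ := by
          have : γ₂ ^ (-k) = μ'⁻¹ * (ν₀ * γ₂⁻¹) ^ k := by rw [hpow]; group
          rw [this]
          exact N₂.mul_mem (N₂.inv_mem hμ') hk
        have := hinf₂ _ hmem
        omega
      have hcomp : ∀ (μ : AffG n) (hμ : μ ∈ N₁) (hμ' : γ₁ * μ * γ₁⁻¹ ∈ N₁),
          ((α ⟨γ₁ * μ * γ₁⁻¹, hμ'⟩ : ↥N₂) : AffG n)
            = (ν₀ * γ₂⁻¹) * ((α ⟨μ, hμ⟩ : ↥N₂) : AffG n) * (ν₀ * γ₂⁻¹)⁻¹ := by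
        intro μ hμ hμ'
        have hx : ((α ⟨μ, hμ⟩ : ↥N₂) : AffG n) ∈ N₂ := (α ⟨μ, hμ⟩).2
        have hsymm : ((α.symm ⟨((α ⟨μ, hμ⟩ : ↥N₂) : AffG n), hx⟩ : ↥N₁) : AffG n) = μ := by
          rw [show (⟨((α ⟨μ, hμ⟩ : ↥N₂) : AffG n), hx⟩ : ↥N₂) = α ⟨μ, hμ⟩ from rfl,
            α.symm_apply_apply]
        have h := hν₀ _ hx
        simp only [hsymm] at h
        rw [h hμ']
        group
      obtain ⟨φ, hφ⟩ := StmtAux15.ext_iso N₁ Γ₁ N₂ Γ₂ hle₁ hle₂ hnorm₁ γ₁ (ν₀ * γ₂⁻¹)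
        hγ₁ hδ hgen₁ hgen₂' hinf₁ hinf₂' α hcomp
      exact ⟨φ, hφ⟩
end

section
/- Let A = [[0,−1],[1,0]], B = [[0,−1],[1,1]], and C = [[0,1],[1,0]] in GL(2,ℤ). Then GL(2,ℤ) has exactly seven conjugacy classes of elements of finite order: every element of GL(2,ℤ) of finite order is conjugate in GL(2,ℤ) to exactly one of I, −I, CA, C, B², A, B, these representatives having orders 1, 2, 2, 2, 3, 4, 6 respectively. -/
/-- `A = [[0,-1],[1,0]]` as an element of `GL(2,ℤ)`. -/
def matA : Matrix.GeneralLinearGroup (Fin 2) ℤ :=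
  ⟨!![0, -1; 1, 0], !![0, 1; -1, 0], by decide, by decide⟩

/-- `B = [[0,-1],[1,1]]` as an element of `GL(2,ℤ)`. -/
def matB : Matrix.GeneralLinearGroup (Fin 2) ℤ :=
  ⟨!![0, -1; 1, 1], !![1, 1; -1, 0], by decide, by decide⟩

/-- `C = [[0,1],[1,0]]` as an element of `GL(2,ℤ)`. -/
def matC : Matrix.GeneralLinearGroup (Fin 2) ℤ :=
  ⟨!![0, 1; 1, 0], !![0, 1; 1, 0], by decide, by decide⟩

abbrev GL2 := Matrix.GeneralLinearGroup (Fin 2) ℤ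

lemma inv2 (a b c d : ℤ) (h : a*d - b*c = 1) :
    !![a,b;c,d] * !![d,-b;-c,a] = (1 : Matrix (Fin 2) (Fin 2) ℤ) ∧
    !![d,-b;-c,a] * !![a,b;c,d] = (1 : Matrix (Fin 2) (Fin 2) ℤ) := by
  constructor <;>
  · rw [Matrix.mul_fin_two, Matrix.one_fin_two]
    ext i j
    fin_cases i <;> fin_cases j <;> simp <;> linarith [h]

lemma inv2' (a b c d : ℤ) (h : a*d - b*c = -1) :
    !![a,b;c,d] * !![-d,b;c,-a] = (1 : Matrix (Fin 2) (Fin 2) ℤ) ∧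
    !![-d,b;c,-a] * !![a,b;c,d] = (1 : Matrix (Fin 2) (Fin 2) ℤ) := by
  constructor <;>
  · rw [Matrix.mul_fin_two, Matrix.one_fin_two]
    ext i j
    fin_cases i <;> fin_cases j <;> simp <;> linarith [h]

def mk2 (a b c d : ℤ) (h : a*d - b*c = 1) : GL2 :=
  ⟨!![a,b;c,d], !![d,-b;-c,a], (inv2 a b c d h).1, (inv2 a b c d h).2⟩

def mk2' (a b c d : ℤ) (h : a*d - b*c = -1) : GL2 :=
  ⟨!![a,b;c,d], !![-d,b;c,-a], (inv2' a b c d h).1, (inv2' a b c d h).2⟩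

def glT (n : ℤ) : GL2 := mk2 1 n 0 1 (by ring)
def glL (n : ℤ) : GL2 := mk2 1 0 n 1 (by ring)
def glCA : GL2 := mk2' 1 0 0 (-1) (by ring)
def glC : GL2 := mk2' 0 1 1 0 (by ring)
def comp (t : ℤ) : GL2 := mk2 0 (-1) 1 t (by ring)

lemma mulmul (p q r s p' q' r' s' a b c e : ℤ) :
    !![p,q;r,s] * !![a,b;c,e] * !![p',q';r',s'] =
    !![ (p*a+q*c)*p' + (p*b+q*e)*r', (p*a+q*c)*q' + (p*b+q*e)*s';
        (r*a+s*c)*p' + (r*b+s*e)*r', (r*a+s*c)*q' + (r*b+s*e)*s'] := by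
  rw [Matrix.mul_fin_two, Matrix.mul_fin_two]

lemma isconj_of (r M P : GL2) (h : P.val * r.val = M.val * P.val) : IsConj r M := by
  refine isConj_iff.2 ⟨P, ?_⟩
  have h2 : P * r = M * P := Units.ext h
  rw [h2, mul_inv_cancel_right]

lemma conj_step (M P : GL2) : IsConj M (P * M * P⁻¹) := isConj_iff.2 ⟨P, rfl⟩

lemma abs_lt_of (X Y : ℤ) (h2 : 2 ≤ Y) (hb : 4 * (X * Y) ≤ Y^2 + 4) (hX : 0 ≤ X) : X < Y := by
  nlinarith [mul_nonneg hX (by omega : (0:ℤ) ≤ Y)]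

lemma near_multiple (x c : ℤ) (hc : c ≠ 0) : ∃ n : ℤ, |x + 2*n*c| ≤ |c| := by
  set D := |c| with hD
  have hd : 0 < D := abs_pos.2 hc
  obtain ⟨m, hm⟩ : ∃ m : ℤ, |x - 2*m*D| ≤ D := by
    refine ⟨(x + D) / (2*D), ?_⟩
    have h2 : (0:ℤ) < 2*D := by omega
    have hml := Int.emod_nonneg (x + D) (by omega : (2*D) ≠ 0)
    have hlt := Int.emod_lt_of_pos (x + D) h2
    have hdm := Int.mul_ediv_add_emod (x + D) (2*D)
    rw [abs_le]
    constructor <;> nlinarith [hdm]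
  rcases le_or_gt 0 c with h | h
  · refine ⟨-m, ?_⟩
    have hc' : D = c := abs_of_nonneg h
    have he : x + 2*(-m)*c = x - 2*m*D := by rw [hc']; ring
    rw [he]; exact hm
  · refine ⟨m, ?_⟩
    have hc' : D = -c := abs_of_neg h
    have he : x + 2*m*c = x - 2*m*D := by rw [hc']; ring
    rw [he]; exact hm

lemma base_c1 (t : ℤ) (M : GL2) (hc : M.val 1 0 = 1) (hdet : M.val.det = 1)
    (htr : M.val.trace = t) : IsConj (comp t) M := by
  set a := M.val 0 0 with ha
  set b := M.val 0 1 with hb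
  set e := M.val 1 1 with he
  have hEta : M.val = !![a, b; 1, e] := by
    rw [Matrix.eta_fin_two M.val, ← ha, ← hb, ← he, hc]
  rw [hEta, Matrix.det_fin_two_of] at hdet
  rw [hEta, Matrix.trace_fin_two_of] at htr
  have key : (glT (-a) * M * (glT (-a))⁻¹).val = !![0, -1; 1, t] := by
    have hval : (glT (-a) * M * (glT (-a))⁻¹).val
        = !![1,(-a);0,1] * M.val * !![1,-(-a);-0,1] := rfl
    rw [hval, hEta, mulmul]
    ext i j
    fin_cases i <;> fin_cases j <;> simp <;> linarith [hdet, htr]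
  have heq : comp t = glT (-a) * M * (glT (-a))⁻¹ := Units.ext (by rw [key]; rfl)
  rw [heq]
  exact (conj_step M (glT (-a))).symm

lemma descent1 (t : ℤ) (ht : t^2 ≤ 1) :
    ∀ k : ℕ, ∀ M : GL2, (M.val 1 0).natAbs ≤ k → M.val.det = 1 → M.val.trace = t →
      IsConj (comp t) M := by
  have ht1 : -1 ≤ t ∧ t ≤ 1 := by constructor <;> nlinarith
  intro k
  induction k with
  | zero =>
    intro M hk hdet htr
    exfalso
    set a := M.val 0 0 with ha
    set b := M.val 0 1 with hb
    set e := M.val 1 1 with he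
    have hc : M.val 1 0 = 0 := by omega
    have hEta : M.val = !![a, b; 0, e] := by
      rw [Matrix.eta_fin_two M.val, ← ha, ← hb, ← he, hc]
    rw [hEta, Matrix.det_fin_two_of] at hdet
    rw [hEta, Matrix.trace_fin_two_of] at htr
    have : a * e = 1 := by linarith
    rcases Int.eq_one_or_neg_one_of_mul_eq_one' this with ⟨h1, h2⟩ | ⟨h1, h2⟩ <;> omega
  | succ k IH =>
    intro M hk hdet htr
    set a := M.val 0 0 with ha
    set b := M.val 0 1 with hb
    set c := M.val 1 0 with hcdef
    set e := M.val 1 1 with he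
    have hEta : M.val = !![a, b; c, e] := by
      rw [Matrix.eta_fin_two M.val, ← ha, ← hb, ← hcdef, ← he]
    have hdet' : a * e - b * c = 1 := by rw [hEta, Matrix.det_fin_two_of] at hdet; exact hdet
    have htr' : a + e = t := by rw [hEta, Matrix.trace_fin_two_of] at htr; exact htr
    have hc0 : c ≠ 0 := by
      intro h0
      rw [h0] at hdet'
      have : a * e = 1 := by linarith
      rcases Int.eq_one_or_neg_one_of_mul_eq_one' this with ⟨h1, h2⟩ | ⟨h1, h2⟩ <;> omega
    by_cases hone : c.natAbs = 1
    · -- base case |c| = 1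
      have hc1 : c = 1 ∨ c = -1 := by omega
      rcases hc1 with h1 | h1
      · exact base_c1 t M (by rw [← hcdef, h1]) (by rw [hEta, Matrix.det_fin_two_of]; linarith) (by rw [hEta, Matrix.trace_fin_two_of]; exact htr')
      · -- c = -1 : conjugate by glCA first
        rw [h1] at hEta hdet'
        set M1 := glCA * M * glCA⁻¹ with hM1def
        have hM1 : M1.val = !![a, -b; 1, e] := by
          have hval : M1.val = !![1,0;0,-1] * M.val * !![-(-1),0;0,-1] := rfl
          rw [hval, hEta, mulmul]
          ext i j
          fin_cases i <;> fin_cases j <;> simp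
        have h2 := base_c1 t M1 (by rw [hM1]; simp)
          (by rw [hM1, Matrix.det_fin_two_of]; linarith)
          (by rw [hM1, Matrix.trace_fin_two_of]; exact htr')
        exact h2.trans (conj_step M glCA).symm
    · -- reduction step
      obtain ⟨n, hn⟩ := near_multiple (2*a - t) c hc0
      set a1 := a + n*c with ha1
      set b1 := b + n*e - n*a - n^2*c with hb1
      set e1 := e - n*c with he1
      set M1 := glT n * M * (glT n)⁻¹ with hM1def
      have hM1 : M1.val = !![a1, b1; c, e1] := by
        have hval : M1.val = !![1,n;0,1] * M.val * !![1,-n;-0,1] := rfl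
        rw [hval, hEta, mulmul]
        ext i j
        fin_cases i <;> fin_cases j <;> simp [ha1, hb1, he1] <;> ring
      set M2 := glC * M1 * glC⁻¹ with hM2def
      have hM2 : M2.val = !![e1, c; b1, a1] := by
        have hval : M2.val = !![0,1;1,0] * M1.val * !![-0,1;1,-0] := rfl
        rw [hval, hM1, mulmul]
        ext i j
        fin_cases i <;> fin_cases j <;> simp
      -- bound on b1
      have hs : |2*a1 - t| ≤ |c| := by
        have : 2*a1 - t = 2*a - t + 2*n*c := by rw [ha1]; ring
        rw [this]; exact hn
      have hsq : (2*a1 - t)^2 ≤ c^2 := by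
        have h1 := pow_le_pow_left₀ (abs_nonneg (2*a1-t)) hs 2
        rwa [sq_abs, sq_abs] at h1
      have h4 : 4*(b1*c) = t^2 - 4 - (2*a1-t)^2 := by linear_combination (-4)*hdet' + 4*a1*htr'
      have hcge : (2:ℤ) ≤ |c| := by
        have h2 : 2 ≤ c.natAbs := by omega
        rw [Int.abs_eq_natAbs]
        exact_mod_cast h2
      have hbb : 4 * (|b1| * |c|) ≤ c^2 + 4 := by
        rw [← abs_mul]
        have hneg : b1*c < 0 := by nlinarith [sq_nonneg (2*a1 - t)]
        have habs : |b1 * c| = -(b1*c) := abs_of_neg hneg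
        rw [habs]
        nlinarith [sq_nonneg t]
      have hlt : |b1| < |c| := by
        refine abs_lt_of _ _ hcge ?_ (abs_nonneg b1)
        rw [← sq_abs c] at hbb
        exact hbb
      have hmeas : (M2.val 1 0).natAbs ≤ k := by
        have : (M2.val 1 0) = b1 := by rw [hM2]; simp
        rw [this]
        have h2 : b1.natAbs < c.natAbs := by
          rw [Int.abs_eq_natAbs, Int.abs_eq_natAbs] at hlt
          exact_mod_cast hlt
        omega
      have hdet2 : M2.val.det = 1 := by
        rw [hM2, Matrix.det_fin_two_of]; linear_combination hdet'
      have htr2 : M2.val.trace = t := by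
        rw [hM2, Matrix.trace_fin_two_of, he1, ha1]; linarith
      have hconj := IH M2 hmeas hdet2 htr2
      exact hconj.trans ((conj_step M (glT n)).trans (conj_step M1 glC)).symm

lemma triL (M : GL2) (h01 : M.val 0 1 = 0) (h00 : M.val 0 0 = 1)
    (hdet : M.val.det = -1) : IsConj glCA M ∨ IsConj glC M := by
  set c := M.val 1 0 with hc
  set e := M.val 1 1 with he
  have hEta : M.val = !![1, 0; c, e] := by
    rw [Matrix.eta_fin_two M.val, ← hc, ← he, h01, h00]
  rw [hEta, Matrix.det_fin_two_of] at hdet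
  have he1 : e = -1 := by linarith
  rw [he1] at hEta
  rcases Int.even_or_odd c with ⟨j, hj⟩ | ⟨j, hj⟩
  · left
    have hM1 : (glL (-j) * M * (glL (-j))⁻¹).val = !![1,0;0,-1] := by
      have hval : (glL (-j) * M * (glL (-j))⁻¹).val
          = !![1,0;-j,1] * M.val * !![1,-0;-(-j),1] := rfl
      rw [hval, hEta, mulmul]
      ext i j'
      fin_cases i <;> fin_cases j' <;> simp <;> omega
    have heq : glCA = glL (-j) * M * (glL (-j))⁻¹ := Units.ext (by rw [hM1]; rfl)
    rw [heq]
    exact (conj_step M (glL (-j))).symm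
  · right
    have hM1 : (glL (-j) * M * (glL (-j))⁻¹).val = !![1,0;1,-1] := by
      have hval : (glL (-j) * M * (glL (-j))⁻¹).val
          = !![1,0;-j,1] * M.val * !![1,-0;-(-j),1] := rfl
      rw [hval, hEta, mulmul]
      ext i j'
      fin_cases i <;> fin_cases j' <;> simp <;> omega
    have h2 : IsConj glC (glL (-j) * M * (glL (-j))⁻¹) := by
      apply isconj_of _ _ (mk2' 1 1 1 0 (by ring))
      rw [hM1]
      show !![(1:ℤ),1;1,0] * !![0,1;1,0] = !![1,0;1,-1] * !![1,1;1,0]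
      rw [Matrix.mul_fin_two, Matrix.mul_fin_two]
      norm_num
    exact h2.trans (conj_step M (glL (-j))).symm

lemma triU (M : GL2) (h10 : M.val 1 0 = 0) (h00 : M.val 0 0 = 1)
    (hdet : M.val.det = -1) : IsConj glCA M ∨ IsConj glC M := by
  set b := M.val 0 1 with hb
  set e := M.val 1 1 with he
  have hEta : M.val = !![1, b; 0, e] := by
    rw [Matrix.eta_fin_two M.val, ← hb, ← he, h10, h00]
  rw [hEta, Matrix.det_fin_two_of] at hdet
  have he1 : e = -1 := by linarith
  rw [he1] at hEta
  rcases Int.even_or_odd b with ⟨j, hj⟩ | ⟨j, hj⟩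
  · left
    have hM1 : (glT j * M * (glT j)⁻¹).val = !![1,0;0,-1] := by
      have hval : (glT j * M * (glT j)⁻¹).val
          = !![1,j;0,1] * M.val * !![1,-j;-0,1] := rfl
      rw [hval, hEta, mulmul]
      ext i j'
      fin_cases i <;> fin_cases j' <;> simp <;> omega
    have heq : glCA = glT j * M * (glT j)⁻¹ := Units.ext (by rw [hM1]; rfl)
    rw [heq]
    exact (conj_step M (glT j)).symm
  · right
    have hM1 : (glT j * M * (glT j)⁻¹).val = !![1,1;0,-1] := by
      have hval : (glT j * M * (glT j)⁻¹).val
          = !![1,j;0,1] * M.val * !![1,-j;-0,1] := rfl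
      rw [hval, hEta, mulmul]
      ext i j'
      fin_cases i <;> fin_cases j' <;> simp <;> omega
    have h2 : IsConj glC (glT j * M * (glT j)⁻¹) := by
      apply isconj_of _ _ (mk2 1 0 (-1) 1 (by ring))
      rw [hM1]
      show !![(1:ℤ),0;-1,1] * !![0,1;1,0] = !![1,1;0,-1] * !![1,0;-1,1]
      rw [Matrix.mul_fin_two, Matrix.mul_fin_two]
      norm_num
    exact h2.trans (conj_step M (glT j)).symm

lemma tri (M : GL2) (h : M.val 0 1 = 0 ∨ M.val 1 0 = 0) (hdet : M.val.det = -1)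
    (htr : M.val.trace = 0) : IsConj glCA M ∨ IsConj glC M := by
  have hEta := Matrix.eta_fin_two M.val
  have hdet' : M.val 0 0 * M.val 1 1 - M.val 0 1 * M.val 1 0 = -1 := by
    rw [Matrix.det_fin_two] at hdet; exact hdet
  have htr' : M.val 0 0 + M.val 1 1 = 0 := by
    rw [Matrix.trace_fin_two] at htr; exact htr
  have ha : M.val 0 0 = 1 ∨ M.val 0 0 = -1 := by
    rcases h with h0 | h0 <;> rw [h0] at hdet' <;>
    · have : M.val 0 0 * M.val 0 0 = 1 := by
        linear_combination -hdet' + (M.val 0 0)*htr'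
      rcases Int.eq_one_or_neg_one_of_mul_eq_one' this with ⟨h1, _⟩ | ⟨h1, _⟩
      · left; exact h1
      · right; exact h1
  rcases h with h0 | h0
  · rcases ha with h1 | h1
    · exact triL M h0 h1 hdet
    · -- a = -1, b = 0 : swap
      set M1 := glC * M * glC⁻¹ with hM1def
      have hM1 : M1.val = !![M.val 1 1, M.val 1 0; M.val 0 1, M.val 0 0] := by
        have hval : M1.val = !![0,1;1,0] * M.val * !![-0,1;1,-0] := rfl
        rw [hval, Matrix.eta_fin_two M.val, mulmul]
        ext i j'
        fin_cases i <;> fin_cases j' <;> simp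
      have r := triU M1 (by rw [hM1]; simp [h0]) (by rw [hM1]; simp; omega)
        (by rw [hM1, Matrix.det_fin_two_of]; linarith)
      exact r.imp (·.trans (conj_step M glC).symm) (·.trans (conj_step M glC).symm)
  · rcases ha with h1 | h1
    · exact triU M h0 h1 hdet
    · set M1 := glC * M * glC⁻¹ with hM1def
      have hM1 : M1.val = !![M.val 1 1, M.val 1 0; M.val 0 1, M.val 0 0] := by
        have hval : M1.val = !![0,1;1,0] * M.val * !![-0,1;1,-0] := rfl
        rw [hval, Matrix.eta_fin_two M.val, mulmul]
        ext i j'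
        fin_cases i <;> fin_cases j' <;> simp
      have r := triL M1 (by rw [hM1]; simp [h0]) (by rw [hM1]; simp; omega)
        (by rw [hM1, Matrix.det_fin_two_of]; linarith)
      exact r.imp (·.trans (conj_step M glC).symm) (·.trans (conj_step M glC).symm)

set_option maxHeartbeats 1000000 in
lemma descent2 :
    ∀ k : ℕ, ∀ M : GL2, (M.val 1 0).natAbs ≤ k → M.val.det = -1 → M.val.trace = 0 →
      IsConj glCA M ∨ IsConj glC M := by
  intro k
  induction k with
  | zero =>
    intro M hk hdet htr
    exact tri M (Or.inr (by omega)) hdet htr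
  | succ k IH =>
    intro M hk hdet htr
    by_cases hc0 : M.val 1 0 = 0
    · exact tri M (Or.inr hc0) hdet htr
    by_cases hb0 : M.val 0 1 = 0
    · exact tri M (Or.inl hb0) hdet htr
    set a := M.val 0 0 with ha
    set b := M.val 0 1 with hb
    set c := M.val 1 0 with hcdef
    set e := M.val 1 1 with he
    have hEta : M.val = !![a, b; c, e] := Matrix.eta_fin_two M.val
    have hdet' : a * e - b * c = -1 := by rw [hEta, Matrix.det_fin_two_of] at hdet; exact hdet
    have htr' : a + e = 0 := by rw [hEta, Matrix.trace_fin_two_of] at htr; exact htr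
    by_cases hone : c.natAbs = 1
    · -- |c| = 1 : kill a, get ±C
      have hc1 : c = 1 ∨ c = -1 := by omega
      have hsel : ∃ n : ℤ, a + n * c = 0 := by
        rcases hc1 with h1 | h1
        · exact ⟨-a, by rw [h1]; ring⟩
        · exact ⟨a, by rw [h1]; ring⟩
      obtain ⟨n, hna⟩ := hsel
      set b1 := b + n*e - n*a - n^2*c with hb1
      set e1 := e - n*c with he1
      set M1 := glT n * M * (glT n)⁻¹ with hM1def
      have hM1 : M1.val = !![a + n*c, b1; c, e1] := by
        have hval : M1.val = !![1,n;0,1] * M.val * !![1,-n;-0,1] := rfl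
        rw [hval, hEta, mulmul]
        ext i j
        fin_cases i <;> fin_cases j <;> simp [hb1, he1] <;> ring
      rw [hna] at hM1
      have he10 : e1 = 0 := by
        have : (a + n*c) + e1 = 0 := by rw [he1]; linarith
        rw [hna] at this; linarith
      have hdet1 : (a + n*c) * e1 - b1 * c = -1 := by
        rw [hb1, he1]; linear_combination hdet'
      have hbc : b1 * c = 1 := by
        rw [hna] at hdet1; linarith
      rcases hc1 with h1 | h1
      · -- c = 1, b1 = 1 : M1 = glC
        right
        have hb11 : b1 = 1 := by rw [h1] at hbc; linarith
        have heq : glC = M1 := by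
          apply Units.ext
          rw [hM1, he10, hb11, h1]
          rfl
        rw [heq]
        exact (conj_step M (glT n)).symm
      · -- c = -1 : M1 = -C, conjugate once more by glCA
        right
        have hb11 : b1 = -1 := by rw [h1] at hbc; linarith
        have hM1' : M1.val = !![0,-1;-1,0] := by rw [hM1, he10, hb11, h1]
        set M2 := glCA * M1 * glCA⁻¹ with hM2def
        have hM2 : M2.val = !![0,1;1,0] := by
          have hval : M2.val = !![1,0;0,-1] * M1.val * !![-(-1),0;0,-1] := rfl
          rw [hval, hM1', mulmul]
          norm_num
        have heq : glC = M2 := Units.ext (by rw [hM2]; rfl)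
        rw [heq]
        exact ((conj_step M (glT n)).trans (conj_step M1 glCA)).symm
    · -- |c| ≥ 2 : reduction
      obtain ⟨n, hn⟩ := near_multiple (2*a) c hc0
      set a1 := a + n*c with ha1
      set b1 := b + n*e - n*a - n^2*c with hb1
      set e1 := e - n*c with he1
      set M1 := glT n * M * (glT n)⁻¹ with hM1def
      have hM1 : M1.val = !![a1, b1; c, e1] := by
        have hval : M1.val = !![1,n;0,1] * M.val * !![1,-n;-0,1] := rfl
        rw [hval, hEta, mulmul]
        ext i j
        fin_cases i <;> fin_cases j <;> simp [ha1, hb1, he1] <;> ring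
      have hdet1 : a1 * e1 - b1 * c = -1 := by
        rw [ha1, hb1, he1]; linear_combination hdet'
      have htr1 : a1 + e1 = 0 := by rw [ha1, he1]; linarith
      have hs : |2*a1| ≤ |c| := by
        have h2 : 2*a1 = 2*a + 2*n*c := by rw [ha1]; ring
        rw [h2]; exact hn
      have hsq : (2*a1)^2 ≤ c^2 := by
        have h1 := pow_le_pow_left₀ (abs_nonneg (2*a1)) hs 2
        rwa [sq_abs, sq_abs] at h1
      by_cases hb10 : b1 = 0
      · -- triangular after shear
        have r := tri M1 (Or.inl (by rw [hM1]; simp [hb10]))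
          (by rw [hM1, Matrix.det_fin_two_of]; linarith)
          (by rw [hM1, Matrix.trace_fin_two_of]; linarith)
        exact r.imp (·.trans (conj_step M (glT n)).symm) (·.trans (conj_step M (glT n)).symm)
      · -- swap and recurse
        set M2 := glC * M1 * glC⁻¹ with hM2def
        have hM2 : M2.val = !![e1, c; b1, a1] := by
          have hval : M2.val = !![0,1;1,0] * M1.val * !![-0,1;1,-0] := rfl
          rw [hval, hM1, mulmul]
          ext i j
          fin_cases i <;> fin_cases j <;> simp
        have hcge : (2:ℤ) ≤ |c| := by
          have h2 : 2 ≤ c.natAbs := by omega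
          rw [Int.abs_eq_natAbs]
          exact_mod_cast h2
        have h4 : 4*(b1*c) = 4 - (2*a1)^2 := by linear_combination (-4:ℤ)*hdet1 + 4*a1*htr1
        have hbb : 4 * (|b1| * |c|) ≤ c^2 + 4 := by
          rw [← abs_mul]
          have : |4 * (b1*c)| ≤ c^2 + 4 := by
            rw [abs_le]
            constructor <;> nlinarith [sq_nonneg (2*a1)]
          have h44 : |4 * (b1*c)| = 4 * |b1*c| := by
            rw [abs_mul]; norm_num
          linarith [h44 ▸ this]
        have hlt : |b1| < |c| := by
          refine abs_lt_of _ _ hcge ?_ (abs_nonneg b1)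
          rw [← sq_abs c] at hbb
          exact hbb
        have hmeas : (M2.val 1 0).natAbs ≤ k := by
          have h2 : (M2.val 1 0) = b1 := by rw [hM2]; simp
          rw [h2]
          have h3 : b1.natAbs < c.natAbs := by
            rw [Int.abs_eq_natAbs, Int.abs_eq_natAbs] at hlt
            exact_mod_cast hlt
          omega
        have r := IH M2 hmeas (by rw [hM2, Matrix.det_fin_two_of]; linarith)
          (by rw [hM2, Matrix.trace_fin_two_of]; linarith)
        exact r.imp (·.trans ((conj_step M (glT n)).trans (conj_step M1 glC)).symm)
          (·.trans ((conj_step M (glT n)).trans (conj_step M1 glC)).symm)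

lemma conj_trace (r M : GL2) (h : IsConj r M) : r.val.trace = M.val.trace ∧ r.val.det = M.val.det := by
  obtain ⟨c, hc⟩ := isConj_iff.1 h
  have h1 : M.val = c.val * r.val * (↑c⁻¹ : Matrix (Fin 2) (Fin 2) ℤ) := by rw [← hc]; rfl
  have hd : ((c : Matrix (Fin 2) (Fin 2) ℤ) * (↑c⁻¹ : Matrix (Fin 2) (Fin 2) ℤ)).det = 1 := by
    have : (c : Matrix (Fin 2) (Fin 2) ℤ) * (↑c⁻¹ : Matrix (Fin 2) (Fin 2) ℤ) = 1 := by
      rw [← Units.val_mul, mul_inv_cancel, Units.val_one]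
    rw [this]; simp
  constructor
  · rw [h1, Matrix.trace_mul_cycle]
    have : (↑c⁻¹ : Matrix (Fin 2) (Fin 2) ℤ) * c.val = 1 := by
      rw [← Units.val_mul, inv_mul_cancel, Units.val_one]
    rw [this, one_mul]
  · rw [h1, Matrix.det_mul, Matrix.det_mul]
    rw [Matrix.det_mul] at hd
    linear_combination (-r.val.det) * hd

def seqa (t d : ℤ) : ℕ → ℤ
  | 0 => 0
  | 1 => 1
  | (n+2) => t * seqa t d (n+1) - d * seqa t d n

def seqb (t d : ℤ) : ℕ → ℤ
  | 0 => 1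
  | (n+1) => -d * seqa t d n

lemma ch2 (m : Matrix (Fin 2) (Fin 2) ℤ) : m * m = m.trace • m - m.det • 1 := by
  ext i j
  fin_cases i <;> fin_cases j <;>
    simp only [Matrix.mul_apply, Matrix.sub_apply, Matrix.smul_apply, Fin.sum_univ_two,
      Matrix.trace_fin_two, Matrix.det_fin_two, Matrix.one_apply, smul_eq_mul] <;>
    norm_num <;> ring

lemma pow_formula (m : Matrix (Fin 2) (Fin 2) ℤ) (n : ℕ) :
    m ^ n = seqa m.trace m.det n • m + seqb m.trace m.det n • 1 := by
  induction n using Nat.twoStepInduction with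
  | zero => simp [seqa, seqb]
  | one => simp [seqa, seqb]
  | more n ih1 ih2 =>
    have h : m ^ (n + 2) = m ^ (n+1) * m := by rw [pow_succ]
    rw [h, ih2, add_mul, smul_mul_assoc, smul_mul_assoc, ch2, one_mul]
    simp only [seqa, seqb]
    module

lemma seqa_neg (t d : ℤ) : ∀ n, seqa (-t) d n = (-1)^(n+1) * seqa t d n := by
  intro n
  induction n using Nat.twoStepInduction with
  | zero => simp [seqa]
  | one => simp [seqa]
  | more n ih1 ih2 =>
    show -t * seqa (-t) d (n+1) - d * seqa (-t) d n = (-1)^(n+3) * (t * seqa t d (n+1) - d * seqa t d n)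
    rw [ih1, ih2]
    ring

lemma seqa_big (t d : ℤ) (hd : d = 1 ∨ d = -1) (ht : 3 ≤ |t|) :
    ∀ n, |seqa t d n| < |seqa t d (n+1)| := by
  intro n
  induction n using Nat.twoStepInduction with
  | zero => simp [seqa]
  | one =>
    show |seqa t d 1| < |seqa t d 2|
    have h2 : seqa t d 2 = t * 1 - d * 0 := rfl
    have h1 : seqa t d 1 = 1 := rfl
    rw [h1, h2]
    simp only [mul_one, mul_zero, sub_zero, abs_one]
    omega
  | more n ih1 ih2 =>
    have h3 : seqa t d (n+3) = t * seqa t d (n+2) - d * seqa t d (n+1) := rfl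
    have habs : |t * seqa t d (n+2)| - |d * seqa t d (n+1)| ≤ |seqa t d (n+3)| := by
      rw [h3]; exact abs_sub_abs_le_abs_sub _ _
    rw [abs_mul, abs_mul] at habs
    have hd1 : |d| = 1 := by rcases hd with h | h <;> simp [h]
    nlinarith [ih2, abs_nonneg (seqa t d (n+1)), abs_nonneg (seqa t d (n+2))]

lemma seqa_big_ne (t d : ℤ) (hd : d = 1 ∨ d = -1) (ht : 3 ≤ |t|) (n : ℕ) :
    1 ≤ |seqa t d (n+1)| := by
  induction n with
  | zero => simp [seqa]
  | succ k ih => have := seqa_big t d hd ht (k+1); omega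

lemma seqa_fib (t : ℤ) (ht : 1 ≤ t) : ∀ n, 1 ≤ seqa t (-1) (n+1) ∧ 0 ≤ seqa t (-1) n := by
  intro n
  induction n using Nat.twoStepInduction with
  | zero => simp [seqa]
  | one =>
    refine ⟨?_, by simp [seqa]⟩
    show (1:ℤ) ≤ t * 1 - (-1) * 0
    omega
  | more n ih1 ih2 =>
    have h3 : seqa t (-1) (n+3) = t * seqa t (-1) (n+2) - (-1) * seqa t (-1) (n+1) := rfl
    have := ih2.1
    have := ih1.1
    constructor
    · rw [h3]; nlinarith
    · linarith [ih2.1]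

lemma seqa_two (n : ℕ) : seqa 2 1 n = n := by
  induction n using Nat.twoStepInduction with
  | zero => simp [seqa]
  | one => simp [seqa]
  | more n ih1 ih2 =>
    show 2 * seqa 2 1 (n+1) - 1 * seqa 2 1 n = ((n:ℤ)+2)
    rw [ih1, ih2]; push_cast; ring

lemma units_det (M : GL2) : M.val.det = 1 ∨ M.val.det = -1 := by
  have h : M.val.det * (↑M⁻¹ : Matrix (Fin 2) (Fin 2) ℤ).det = 1 := by
    rw [← Matrix.det_mul, ← Units.val_mul, mul_inv_cancel, Units.val_one, Matrix.det_one]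
  exact Int.isUnit_iff.1 (IsUnit.of_mul_eq_one _ h)

lemma scalar_case (M : GL2) {n : ℕ} (hm : M.val ^ n = 1)
    (ha : seqa M.val.trace M.val.det n ≠ 0) : M = 1 ∨ M = -1 := by
  set m := M.val with hmdef
  set a := seqa m.trace m.det n
  set b := seqb m.trace m.det n
  have eq : a • m + b • (1 : Matrix (Fin 2) (Fin 2) ℤ) = 1 := by
    rw [← pow_formula, hm]
  have ent : ∀ i j, a * m i j + b * (1 : Matrix (Fin 2) (Fin 2) ℤ) i j
      = (1 : Matrix (Fin 2) (Fin 2) ℤ) i j := by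
    intro i j
    have h := congrFun (congrFun eq i) j
    simp only [Matrix.add_apply, Matrix.smul_apply, smul_eq_mul] at h
    exact h
  have e01 := ent 0 1
  have e10 := ent 1 0
  have e00 := ent 0 0
  have e11 := ent 1 1
  simp [Matrix.one_apply] at e01 e10 e00 e11
  have hb01 : m 0 1 = 0 := e01.resolve_left ha
  have hb10 : m 1 0 = 0 := e10.resolve_left ha
  have hdiag : m 0 0 = m 1 1 := by
    have h2 : a * m 0 0 = a * m 1 1 := by omega
    exact mul_left_cancel₀ ha h2
  have hdet : m.det = m 0 0 * m 1 1 - m 0 1 * m 1 0 := Matrix.det_fin_two m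
  have hk : m 0 0 ^ 2 = m.det := by rw [hdet, hb01, hb10, hdiag]; ring
  have hk1 : m 0 0 = 1 ∨ m 0 0 = -1 := by
    rcases units_det M with hd | hd
    · rw [hd] at hk
      have : (m 0 0 - 1) * (m 0 0 + 1) = 0 := by nlinarith
      rcases mul_eq_zero.1 this with h | h
      · left; omega
      · right; omega
    · rw [hd] at hk; nlinarith
  rcases hk1 with h | h
  · left
    apply Units.ext
    show m = 1
    rw [Matrix.eta_fin_two m, hb01, hb10, ← hdiag, h, Matrix.one_fin_two]
  · right
    apply Units.ext
    show m = -1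
    rw [Matrix.eta_fin_two m, hb01, hb10, ← hdiag, h]
    rw [show (-1 : Matrix (Fin 2) (Fin 2) ℤ) = -(1:Matrix (Fin 2) (Fin 2) ℤ) from rfl,
      Matrix.one_fin_two]
    norm_num

lemma seqa_ne (t d : ℤ) (hd : d = 1 ∨ d = -1)
    (h : (3 ≤ |t|) ∨ (d = -1 ∧ 1 ≤ |t|) ∨ (d = 1 ∧ |t| = 2)) (n : ℕ) :
    seqa t d (n+1) ≠ 0 := by
  rcases h with h | ⟨h1, h2⟩ | ⟨h1, h2⟩
  · have := seqa_big_ne t d hd h n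
    intro h0; rw [h0] at this; simp at this
  · subst h1
    rcases abs_cases t with ⟨he, _⟩ | ⟨he, _⟩
    · have := (seqa_fib t (by omega) n).1; omega
    · have ht : 1 ≤ -t := by omega
      have := (seqa_fib (-t) ht n).1
      rw [seqa_neg t (-1) (n+1)] at this
      rcases Int.even_or_odd (n+2) with ⟨k, hk⟩ | ⟨k, hk⟩
      · intro h0; rw [h0] at this; simp at this
      · intro h0; rw [h0] at this; simp at this
  · subst h1
    rcases abs_cases t with ⟨he, _⟩ | ⟨he, _⟩
    · have ht2 : t = 2 := by omega
      subst ht2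
      rw [seqa_two]
      intro h0
      omega
    · have ht2 : t = -2 := by omega
      subst ht2
      have hrw : seqa (-2 : ℤ) 1 (n+1) = (-1)^(n+2) * seqa 2 1 (n+1) := seqa_neg 2 1 (n+1)
      rw [hrw, seqa_two]
      rcases Int.even_or_odd (n+2) with ⟨k, hk⟩ | ⟨k, hk⟩ <;>
      · intro h0
        simp at h0
        omega

lemma constraint (M : GL2) (h : IsOfFinOrder M) :
    ((M.val.det = 1 ∧ (M.val.trace = -1 ∨ M.val.trace = 0 ∨ M.val.trace = 1)) ∨
     (M.val.det = -1 ∧ M.val.trace = 0)) ∨ M = 1 ∨ M = -1 := by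
  obtain ⟨n, hn, hpow⟩ := isOfFinOrder_iff_pow_eq_one.1 h
  have hm : M.val ^ n = 1 := by
    have := congrArg Units.val hpow
    rw [Units.val_pow_eq_pow_val] at this
    simpa using this
  obtain ⟨n0, rfl⟩ : ∃ n0, n = n0 + 1 := ⟨n - 1, by omega⟩
  by_cases hsc : M = 1 ∨ M = -1
  · right; exact hsc
  left
  have hA : seqa M.val.trace M.val.det (n0+1) = 0 := by
    by_contra ha; exact hsc (scalar_case M hm ha)
  rcases units_det M with hd | hd
  · left
    refine ⟨hd, ?_⟩
    by_contra hT
    push_neg at hT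
    obtain ⟨h1, h2, h3⟩ := hT
    have hne : seqa M.val.trace M.val.det (n0+1) ≠ 0 := by
      apply seqa_ne _ _ (Or.inl hd) _ n0
      by_cases htw : |M.val.trace| = 2
      · right; right; exact ⟨hd, htw⟩
      · left
        rcases abs_cases M.val.trace with ⟨he, _⟩ | ⟨he, _⟩ <;> omega
    exact hne hA
  · right
    refine ⟨hd, ?_⟩
    by_contra hT
    have hne : seqa M.val.trace M.val.det (n0+1) ≠ 0 := by
      apply seqa_ne _ _ (Or.inr hd) _ n0
      by_cases hb : 3 ≤ |M.val.trace|
      · left; exact hb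
      · right; left
        refine ⟨hd, ?_⟩
        rcases abs_cases M.val.trace with ⟨he, _⟩ | ⟨he, _⟩ <;> omega
    exact hne hA

lemma not_conj_CA_C : ¬ IsConj (matC * matA) matC := by
  intro h
  have h2 := (Units.map ((Int.castRingHom (ZMod 2)).mapMatrix.toMonoidHom)).map_isConj h
  have hCA : (Units.map ((Int.castRingHom (ZMod 2)).mapMatrix.toMonoidHom)) (matC * matA) = 1 := by
    apply Units.ext
    show ((Int.castRingHom (ZMod 2)).mapMatrix) ((matC * matA).val) = 1
    have : (matC * matA).val = !![1,0;0,-1] := by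
      show matC.val * matA.val = _
      rw [show matC.val = !![0,1;1,0] from rfl, show matA.val = !![0,-1;1,0] from rfl,
        Matrix.mul_fin_two]
      norm_num
    rw [this]
    ext i j
    fin_cases i <;> fin_cases j <;> simp [Matrix.one_apply] <;> decide
  rw [hCA] at h2
  have h3 : (Units.map ((Int.castRingHom (ZMod 2)).mapMatrix.toMonoidHom)) matC = 1 := by
    obtain ⟨u, hu⟩ := isConj_iff.1 h2
    rw [← hu]
    group
  have h4 := congrArg (fun u : Matrix.GeneralLinearGroup (Fin 2) (ZMod 2) => u.val 0 0) h3
  simp only [Units.val_one] at h4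
  have h5 : ((Int.castRingHom (ZMod 2)).mapMatrix matC.val) 0 0 = (1 : Matrix (Fin 2) (Fin 2) (ZMod 2)) 0 0 := h4
  rw [show matC.val = !![0,1;1,0] from rfl] at h5
  simp [Matrix.one_apply] at h5

lemma matC_eq_glC : matC = glC := Units.ext rfl

lemma CA_val : (matC * matA).val = !![1,0;0,-1] := by
  show matC.val * matA.val = _
  rw [show matC.val = !![0,1;1,0] from rfl, show matA.val = !![0,-1;1,0] from rfl,
    Matrix.mul_fin_two]
  norm_num

lemma CA_eq_glCA : matC * matA = glCA := Units.ext (by rw [CA_val]; rfl)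

lemma B2_val : (matB ^ 2).val = !![-1,-1;1,0] := by
  have h : (matB ^ 2).val = matB.val * matB.val := by rw [sq, Units.val_mul]
  rw [h, show matB.val = !![0,-1;1,1] from rfl, Matrix.mul_fin_two]
  norm_num

lemma B2_conj_K : IsConj (matB ^ 2) (comp (-1)) := by
  apply isconj_of _ _ (glT 1)
  rw [B2_val]
  show !![1,1;0,1] * !![-1,-1;1,0] = !![0,-1;1,-1] * !![1,1;0,1]
  rw [Matrix.mul_fin_two, Matrix.mul_fin_two]
  norm_num

set_option maxHeartbeats 2000000 in
lemma rep_distinct (r r' : GL2)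
    (hr : r = 1 ∨ r = -1 ∨ r = matC * matA ∨ r = matC ∨ r = matB ^ 2 ∨ r = matA ∨ r = matB)
    (hr' : r' = 1 ∨ r' = -1 ∨ r' = matC * matA ∨ r' = matC ∨ r' = matB ^ 2 ∨ r' = matA ∨ r' = matB)
    (h : IsConj r r') : r = r' := by
  rcases hr with rfl|rfl|rfl|rfl|rfl|rfl|rfl <;>
    rcases hr' with rfl|rfl|rfl|rfl|rfl|rfl|rfl <;>
    first
    | rfl
    | exact absurd h not_conj_CA_C
    | exact absurd h.symm not_conj_CA_C
    | exact absurd (conj_trace _ _ h).1 (by decide)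
    | exact absurd (conj_trace _ _ h).2 (by decide)

/-- Lemma 51: `GL(2,ℤ)` has exactly seven conjugacy classes of elements of finite order,
represented by `I, -I, CA, C, B², A, B`, of orders `1, 2, 2, 2, 3, 4, 6` respectively. -/
theorem stmt17 :
    (∀ M : Matrix.GeneralLinearGroup (Fin 2) ℤ, IsOfFinOrder M →
      ∃! r : Matrix.GeneralLinearGroup (Fin 2) ℤ,
        r ∈ ([1, -1, matC * matA, matC, matB ^ 2, matA, matB] :
          List (Matrix.GeneralLinearGroup (Fin 2) ℤ)) ∧ IsConj r M) ∧
    orderOf (1 : Matrix.GeneralLinearGroup (Fin 2) ℤ) = 1 ∧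
    orderOf (-1 : Matrix.GeneralLinearGroup (Fin 2) ℤ) = 2 ∧
    orderOf (matC * matA) = 2 ∧
    orderOf matC = 2 ∧
    orderOf (matB ^ 2) = 3 ∧
    orderOf matA = 4 ∧
    orderOf matB = 6 := by
  have hp2 : Fact (Nat.Prime 2) := ⟨by norm_num⟩
  have hp3 : Fact (Nat.Prime 3) := ⟨by norm_num⟩
  refine ⟨?_, orderOf_one, orderOf_eq_prime (by decide) (by decide),
    orderOf_eq_prime (by decide) (by decide), orderOf_eq_prime (by decide) (by decide),
    orderOf_eq_prime (by decide) (by decide), ?_, ?_⟩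
  · intro M hM
    have hex : ∃ r : GL2,
        (r = 1 ∨ r = -1 ∨ r = matC * matA ∨ r = matC ∨ r = matB ^ 2 ∨ r = matA ∨ r = matB)
        ∧ IsConj r M := by
      rcases constraint M hM with (⟨hd, htr⟩ | ⟨hd, htr⟩) | rfl | rfl
      · rcases htr with htr | htr | htr
        · exact ⟨matB ^ 2, by tauto,
            B2_conj_K.trans (descent1 (-1) (by norm_num) (M.val 1 0).natAbs M le_rfl hd htr)⟩
        · have h := descent1 0 (by norm_num) (M.val 1 0).natAbs M le_rfl hd htr
          exact ⟨matA, by tauto, (show matA = comp 0 from Units.ext rfl) ▸ h⟩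
        · have h := descent1 1 (by norm_num) (M.val 1 0).natAbs M le_rfl hd htr
          exact ⟨matB, by tauto, (show matB = comp 1 from Units.ext rfl) ▸ h⟩
      · rcases descent2 (M.val 1 0).natAbs M le_rfl hd htr with h | h
        · exact ⟨matC * matA, by tauto, CA_eq_glCA ▸ h⟩
        · exact ⟨matC, by tauto, matC_eq_glC ▸ h⟩
      · exact ⟨1, by tauto, IsConj.refl 1⟩
      · exact ⟨-1, by tauto, IsConj.refl (-1)⟩
    obtain ⟨r, hrmem, hrconj⟩ := hex
    refine ⟨r, ⟨?_, hrconj⟩, ?_⟩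
    · simp only [List.mem_cons, List.not_mem_nil, or_false]
      tauto
    · rintro y ⟨hy, hyconj⟩
      simp only [List.mem_cons, List.not_mem_nil, or_false] at hy
      exact rep_distinct y r hy hrmem (hyconj.trans hrconj.symm)
  · rw [orderOf_eq_iff (by norm_num)]
    refine ⟨by decide, ?_⟩
    intro m hm hm'
    interval_cases m <;> decide
  · rw [orderOf_eq_iff (by norm_num)]
    refine ⟨by decide, ?_⟩
    intro m hm hm'
    interval_cases m <;> decide
end

section
/- Let M be the subgroup of the group of affinities of ℝ² generated by the translations e₁+I and e₂+I (where e₁, e₂ is the standard basis) and the map −I : x ↦ −x. Then the normalizer of M in the group of affinities of ℝ² is exactly { (m/2)e₁ + (n/2)e₂ + A : m, n ∈ ℤ and A ∈ GL(2,ℤ) }. -/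
noncomputable section
namespace SA
abbrev ee (i : Fin 2) : Euc 2 := EuclideanSpace.single i (1 : ℝ)
def IsInt (v : Euc 2) : Prop := ∀ i, ∃ k : ℤ, v i = (k : ℝ)

lemma euc_ext {v w : Euc 2} (h0 : v 0 = w 0) (h1 : v 1 = w 1) : v = w := by
  ext i; fin_cases i <;> assumption

lemma decomp (v : Euc 2) : v = v 0 • ee 0 + v 1 • ee 1 := by
  apply euc_ext <;> simp

lemma aff_apply (f : AffG 2) (x : Euc 2) : f x = f 0 + f.linear x := by
  have := f.map_vadd (0 : Euc 2) x
  simp only [vadd_eq_add, add_zero] at this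
  rw [this, add_comm]

lemma mul_apply (f g : AffG 2) (x : Euc 2) : (f * g) x = f (g x) := rfl
lemma linear_mul (f g : AffG 2) (x : Euc 2) : (f * g).linear x = f.linear (g.linear x) := rfl
lemma inv_apply_self (f : AffG 2) (x : Euc 2) : f⁻¹ (f x) = x := f.symm_apply_apply x
lemma apply_inv_self (f : AffG 2) (x : Euc 2) : f (f⁻¹ x) = x := f.apply_symm_apply x
lemma linear_inv (f : AffG 2) (x : Euc 2) : f⁻¹.linear (f.linear x) = x := by
  rw [AffineEquiv.inv_def, AffineEquiv.linear_symm]; exact f.linear.symm_apply_apply x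
lemma transl_apply (a x : Euc 2) : transl a x = a + x := rfl
lemma transl_linear (a x : Euc 2) : (transl a).linear x = x := rfl

def negI : AffG 2 := (LinearEquiv.neg ℝ (M := Euc 2)).toAffineEquiv
lemma negI_apply (x : Euc 2) : negI x = -x := rfl
lemma negI_linear (x : Euc 2) : negI.linear x = -x := rfl

def gens : Set (AffG 2) := {transl (ee 0), transl (ee 1), negI}
def M : Subgroup (AffG 2) := Subgroup.closure gens

/-- the characterizing predicate -/
def P (f : AffG 2) : Prop :=
  IsInt (f 0) ∧ ((∀ x, f.linear x = x) ∨ (∀ x, f.linear x = -x))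

def Msub : Subgroup (AffG 2) where
  carrier := {f | P f}
  one_mem' := by
    refine ⟨fun i => ⟨0, by simp⟩, Or.inl fun x => rfl⟩
  mul_mem' := by
    rintro f g ⟨hf0, hfl⟩ ⟨hg0, hgl⟩
    constructor
    · intro i
      rw [mul_apply, aff_apply]
      obtain ⟨kf, hkf⟩ := hf0 i
      obtain ⟨kg, hkg⟩ := hg0 i
      rcases hfl with h | h
      · exact ⟨kf + kg, by rw [PiLp.add_apply, h, hkf, hkg]; push_cast; ring⟩
      · exact ⟨kf - kg, by rw [PiLp.add_apply, h, PiLp.neg_apply, hkf, hkg]; push_cast; ring⟩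
    · rcases hfl with hf | hf <;> rcases hgl with hg | hg
      · exact Or.inl fun x => by rw [linear_mul, hg, hf]
      · exact Or.inr fun x => by rw [linear_mul, hg, hf]
      · exact Or.inr fun x => by rw [linear_mul, hg, hf]
      · exact Or.inl fun x => by rw [linear_mul, hg, hf, neg_neg]
  inv_mem' := by
    rintro f ⟨hf0, hfl⟩
    have key : (∀ x, f⁻¹.linear x = x) ∨ (∀ x, f⁻¹.linear x = -x) := by
      rcases hfl with hf | hf
      · left; intro x; conv_lhs => rw [← hf x]
        exact linear_inv f x
      · right; intro x
        have := linear_inv f (-x)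
        rwa [hf, neg_neg] at this
    refine ⟨?_, key⟩
    have h0 : f 0 + f.linear (f⁻¹ 0) = 0 := by rw [← aff_apply, apply_inv_self]
    intro i
    obtain ⟨k, hk⟩ := hf0 i
    rcases hfl with hf | hf
    · refine ⟨-k, ?_⟩
      rw [hf] at h0
      have := congrArg (fun v : Euc 2 => v i) h0
      have h2 : f 0 i + f⁻¹ 0 i = 0 := this
      push_cast
      rw [hk] at h2; linarith
    · refine ⟨k, ?_⟩
      rw [hf] at h0
      have h2 : f 0 i + -(f⁻¹ 0 i) = 0 := congrArg (fun v : Euc 2 => v i) h0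
      linarith [hk ▸ h2]

lemma transl_zero (v : Euc 2) : transl v 0 = v := by rw [transl_apply, add_zero]

lemma isInt_ee (j : Fin 2) : IsInt (ee j) := by
  intro i
  rcases eq_or_ne i j with h | h
  · exact ⟨1, by simp [h]⟩
  · exact ⟨0, by simp [EuclideanSpace.single_apply, h]⟩

lemma transl_add (a b : Euc 2) : transl (a + b) = transl a * transl b := by
  rw [transl, AffineEquiv.constVAdd_add, AffineEquiv.mul_def]; rfl

lemma transl_zsmul (z : ℤ) (a : Euc 2) : transl (z • a) = (transl a) ^ z := by
  rw [transl, AffineEquiv.constVAdd_zsmul]; rfl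

lemma transl_mem_M {v : Euc 2} (hv : IsInt v) : transl v ∈ M := by
  obtain ⟨m, hm⟩ := hv 0
  obtain ⟨n, hn⟩ := hv 1
  have hv' : v = m • ee 0 + n • ee 1 := by
    rw [decomp v, hm, hn]; rw [← Int.cast_smul_eq_zsmul ℝ, ← Int.cast_smul_eq_zsmul ℝ]
  rw [hv', transl_add, transl_zsmul, transl_zsmul]
  exact mul_mem (Subgroup.zpow_mem _ (Subgroup.subset_closure (by simp [gens])) m)
    (Subgroup.zpow_mem _ (Subgroup.subset_closure (by simp [gens])) n)

lemma mem_M_iff (f : AffG 2) : f ∈ M ↔ P f := by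
  constructor
  · intro hf
    have hle : M ≤ Msub := by
      rw [M]
      apply Subgroup.closure_le Msub |>.mpr
      rintro g (rfl | rfl | rfl)
      · exact ⟨by rw [transl_zero]; exact isInt_ee 0, Or.inl fun x => rfl⟩
      · exact ⟨by rw [transl_zero]; exact isInt_ee 1, Or.inl fun x => rfl⟩
      · exact ⟨fun i => ⟨0, by simp [negI_apply]⟩, Or.inr fun x => rfl⟩
    exact hle hf
  · rintro ⟨h0, hl | hl⟩
    · have : f = transl (f 0) := by
        apply AffineEquiv.toEquiv_injective; apply Equiv.ext; intro x
        show f x = transl (f 0) x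
        rw [transl_apply, aff_apply, hl]
      rw [this]; exact transl_mem_M h0
    · have : f = transl (f 0) * negI := by
        apply AffineEquiv.toEquiv_injective; apply Equiv.ext; intro x
        show f x = (transl (f 0) * negI) x
        rw [mul_apply, negI_apply, transl_apply, aff_apply, hl]
      rw [this]
      exact mul_mem (transl_mem_M h0) (Subgroup.subset_closure (by simp [gens]))

lemma linear_inv' (f : AffG 2) (x : Euc 2) : f.linear (f⁻¹.linear x) = x := by
  rw [AffineEquiv.inv_def, AffineEquiv.linear_symm]; exact f.linear.apply_symm_apply x

lemma inv_zero (f : AffG 2) : f.linear (f⁻¹ 0) = -(f 0) := by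
  have h := aff_apply f (f⁻¹ 0)
  rw [apply_inv_self] at h
  exact eq_neg_of_add_eq_zero_right h.symm

lemma conj_transl (f : AffG 2) (v : Euc 2) : f * transl v * f⁻¹ = transl (f.linear v) := by
  apply AffineEquiv.toEquiv_injective; apply Equiv.ext; intro x
  show f (transl v (f⁻¹ x)) = transl (f.linear v) x
  rw [transl_apply, transl_apply]
  have h := f.map_vadd (f⁻¹ x) v
  rw [vadd_eq_add, vadd_eq_add, apply_inv_self] at h
  exact h

lemma lin_isInt {B : Euc 2 ≃ₗ[ℝ] Euc 2} (hA : ∀ i j : Fin 2, ∃ k : ℤ, B (ee j) i = (k : ℝ))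
    {v : Euc 2} (hv : IsInt v) : IsInt (B v) := by
  intro i
  obtain ⟨k0, hk0⟩ := hA i 0
  obtain ⟨k1, hk1⟩ := hA i 1
  obtain ⟨m0, hm0⟩ := hv 0
  obtain ⟨m1, hm1⟩ := hv 1
  have hd : B v = v 0 • B (ee 0) + v 1 • B (ee 1) := by
    conv_lhs => rw [decomp v]
    rw [map_add, map_smul, map_smul]
  refine ⟨m0 * k0 + m1 * k1, ?_⟩
  rw [hd, PiLp.add_apply, PiLp.smul_apply, PiLp.smul_apply, smul_eq_mul, smul_eq_mul,
    hk0, hk1, hm0, hm1]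
  push_cast; ring

lemma conj_mem {f : AffG 2} (hA : ∀ i j : Fin 2, ∃ k : ℤ, f.linear (ee j) i = (k : ℝ))
    (hc : ∀ i, ∃ k : ℤ, 2 * f 0 i = (k : ℝ)) {h : AffG 2} (hh : h ∈ M) :
    f * h * f⁻¹ ∈ M := by
  rw [mem_M_iff] at hh ⊢
  obtain ⟨hh0, hhl⟩ := hh
  constructor
  · -- integrality of the translation part
    have hfix : (f * h * f⁻¹) 0 = f (h (f⁻¹ 0)) := rfl
    rcases hhl with hl | hl
    · have hval : (f * h * f⁻¹) 0 = f.linear (h 0) := by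
        rw [hfix, aff_apply h, hl, aff_apply f, map_add, inv_zero]
        abel
      rw [hval]
      exact lin_isInt hA hh0
    · have hval : (f * h * f⁻¹) 0 = f 0 + f 0 + f.linear (h 0) := by
        rw [hfix, aff_apply h, hl, aff_apply f, map_add, map_neg, inv_zero]
        abel
      rw [hval]
      intro i
      obtain ⟨kc, hkc⟩ := hc i
      obtain ⟨ka, hka⟩ := lin_isInt hA hh0 i
      refine ⟨kc + ka, ?_⟩
      rw [PiLp.add_apply, PiLp.add_apply, hka]
      push_cast; linarith
  · rcases hhl with hl | hl
    · exact Or.inl fun x => by rw [linear_mul, linear_mul, hl, linear_inv']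
    · exact Or.inr fun x => by rw [linear_mul, linear_mul, hl, map_neg, linear_inv']

lemma det_formula (A : Euc 2 ≃ₗ[ℝ] Euc 2) :
    LinearMap.det A.toLinearMap =
      A (ee 0) 0 * A (ee 1) 1 - A (ee 1) 0 * A (ee 0) 1 := by
  classical
  let b := (EuclideanSpace.basisFun (Fin 2) ℝ).toBasis
  rw [← LinearMap.det_toMatrix b, Matrix.det_fin_two]
  simp only [LinearMap.toMatrix_apply, b, OrthonormalBasis.coe_toBasis_repr_apply,
    EuclideanSpace.basisFun_repr, OrthonormalBasis.coe_toBasis, EuclideanSpace.basisFun_apply,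
    LinearEquiv.coe_coe]
  try ring

lemma det_mul_symm (A : Euc 2 ≃ₗ[ℝ] Euc 2) :
    LinearMap.det A.toLinearMap * LinearMap.det A.symm.toLinearMap = 1 := by
  rw [← LinearMap.det_comp]
  have : A.toLinearMap ∘ₗ A.symm.toLinearMap = LinearMap.id := by
    ext x; simp
  rw [this, LinearMap.det_id]

lemma coord_eqs {A : Euc 2 ≃ₗ[ℝ] Euc 2} {u w : Euc 2} (hu : A u = w) (i : Fin 2) :
    u 0 * A (ee 0) i + u 1 * A (ee 1) i = w i := by
  have hd : A u = u 0 • A (ee 0) + u 1 • A (ee 1) := by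
    conv_lhs => rw [decomp u]
    rw [map_add, map_smul, map_smul]
  have h := hd.symm.trans hu
  have h2 := congrArg (fun v : Euc 2 => v i) h
  simpa [PiLp.add_apply, PiLp.smul_apply, smul_eq_mul] using h2

lemma symm_int {A : Euc 2 ≃ₗ[ℝ] Euc 2}
    (hA : ∀ i j : Fin 2, ∃ k : ℤ, A (ee j) i = (k : ℝ))
    (hdet : LinearMap.det A.toLinearMap = 1 ∨ LinearMap.det A.toLinearMap = -1) :
    ∀ i j : Fin 2, ∃ k : ℤ, A.symm (ee j) i = (k : ℝ) := by
  intro i j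
  obtain ⟨k00, h00⟩ := hA 0 0
  obtain ⟨k01, h01⟩ := hA 0 1
  obtain ⟨k10, h10⟩ := hA 1 0
  obtain ⟨k11, h11⟩ := hA 1 1
  have hu : A (A.symm (ee j)) = ee j := A.apply_symm_apply _
  have eq0 := coord_eqs hu 0
  have eq1 := coord_eqs hu 1
  have hdf := det_formula A
  set u := A.symm (ee j) with hudef
  fin_cases j <;> fin_cases i <;>
    simp only [Fin.isValue, Fin.zero_eta, Fin.mk_one, EuclideanSpace.single_apply,
      if_true, if_false, one_ne_zero, zero_ne_one, reduceIte] at eq0 eq1 ⊢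
  · -- j = 0, i = 0 : u 0 = ± k11
    have key : u 0 * LinearMap.det A.toLinearMap = A (ee 1) 1 := by
      rw [hdf]; linear_combination (A (ee 1) 1) * eq0 - (A (ee 1) 0) * eq1
    rcases hdet with h1 | h1 <;> rw [h1, h11] at key
    · exact ⟨k11, by linarith⟩
    · exact ⟨-k11, by push_cast; linarith⟩
  · -- j = 0, i = 1 : u 1 = ∓ k10
    have key : u 1 * LinearMap.det A.toLinearMap = -(A (ee 0) 1) := by
      rw [hdf]; linear_combination (A (ee 0) 0) * eq1 - (A (ee 0) 1) * eq0
    rcases hdet with h1 | h1 <;> rw [h1, h10] at key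
    · exact ⟨-k10, by push_cast; linarith⟩
    · exact ⟨k10, by linarith⟩
  · -- j = 1, i = 0 : u 0 = ∓ k01
    have key : u 0 * LinearMap.det A.toLinearMap = -(A (ee 1) 0) := by
      rw [hdf]; linear_combination (A (ee 1) 1) * eq0 - (A (ee 1) 0) * eq1
    rcases hdet with h1 | h1 <;> rw [h1, h01] at key
    · exact ⟨-k01, by push_cast; linarith⟩
    · exact ⟨k01, by linarith⟩
  · -- j = 1, i = 1 : u 1 = ± k00
    have key : u 1 * LinearMap.det A.toLinearMap = A (ee 0) 0 := by
      rw [hdf]; linear_combination (A (ee 0) 0) * eq1 - (A (ee 0) 1) * eq0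
    rcases hdet with h1 | h1 <;> rw [h1, h00] at key
    · exact ⟨k00, by linarith⟩
    · exact ⟨-k00, by push_cast; linarith⟩

lemma linear_inv_eq (f : AffG 2) : f⁻¹.linear = f.linear.symm := by
  rw [AffineEquiv.inv_def, AffineEquiv.linear_symm]

theorem main :
    ∀ f : AffG 2,
      f ∈ Subgroup.normalizer (M : Set (AffG 2)) ↔
      ∃ (mz nz : ℤ) (A : Euc 2 ≃ₗ[ℝ] Euc 2),
        (∀ i j : Fin 2, ∃ k : ℤ, A (EuclideanSpace.single j (1 : ℝ)) i = (k : ℝ)) ∧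
        (LinearMap.det A.toLinearMap = 1 ∨ LinearMap.det A.toLinearMap = -1) ∧
        (∀ x : Euc 2, f x = ((mz : ℝ) / 2) • EuclideanSpace.single (0 : Fin 2) (1 : ℝ) +
          ((nz : ℝ) / 2) • EuclideanSpace.single (1 : Fin 2) (1 : ℝ) + A x) := by
  intro f
  constructor
  · intro hf
    rw [Subgroup.mem_normalizer_iff] at hf
    have hA : ∀ i j : Fin 2, ∃ k : ℤ, f.linear (ee j) i = (k : ℝ) := by
      intro i j
      have h1 : f * transl (ee j) * f⁻¹ ∈ M :=
        (hf _).mp (Subgroup.subset_closure (by fin_cases j <;> simp [gens]))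
      rw [conj_transl] at h1
      have h2 := ((mem_M_iff _).mp h1).1
      rw [transl_zero] at h2
      exact h2 i
    have hneg : f * negI * f⁻¹ ∈ M := (hf _).mp (Subgroup.subset_closure (by simp [gens]))
    have h3 := ((mem_M_iff _).mp hneg).1
    have hval : (f * negI * f⁻¹) 0 = f 0 + f 0 := by
      show f (negI (f⁻¹ 0)) = f 0 + f 0
      rw [negI_apply, aff_apply f, map_neg, inv_zero, neg_neg]
    rw [hval] at h3
    obtain ⟨mz, hm⟩ := h3 0
    obtain ⟨nz, hn⟩ := h3 1
    rw [PiLp.add_apply] at hm hn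
    refine ⟨mz, nz, f.linear, hA, ?_, ?_⟩
    · -- determinant is ±1
      have hB : ∀ i j : Fin 2, ∃ k : ℤ, f.linear.symm (ee j) i = (k : ℝ) := by
        intro i j
        have h4 : f * (f⁻¹ * transl (ee j) * f) * f⁻¹ ∈ M := by
          have he : f * (f⁻¹ * transl (ee j) * f) * f⁻¹ = transl (ee j) := by group
          rw [he]
          exact Subgroup.subset_closure (by fin_cases j <;> simp [gens])
        have h5 : f⁻¹ * transl (ee j) * f ∈ M := (hf _).mpr h4
        rw [show f⁻¹ * transl (ee j) * f = f⁻¹ * transl (ee j) * (f⁻¹)⁻¹ by rw [inv_inv],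
          conj_transl] at h5
        have h6 := ((mem_M_iff _).mp h5).1
        rw [transl_zero] at h6
        rw [← linear_inv_eq]
        exact h6 i
      obtain ⟨a00, ha00⟩ := hA 0 0
      obtain ⟨a01, ha01⟩ := hA 0 1
      obtain ⟨a10, ha10⟩ := hA 1 0
      obtain ⟨a11, ha11⟩ := hA 1 1
      obtain ⟨b00, hb00⟩ := hB 0 0
      obtain ⟨b01, hb01⟩ := hB 0 1
      obtain ⟨b10, hb10⟩ := hB 1 0
      obtain ⟨b11, hb11⟩ := hB 1 1
      have hdint : LinearMap.det f.linear.toLinearMap = ((a00 * a11 - a01 * a10 : ℤ) : ℝ) := by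
        rw [det_formula, ha00, ha01, ha10, ha11]; push_cast; ring
      have hdsint : LinearMap.det f.linear.symm.toLinearMap
          = ((b00 * b11 - b01 * b10 : ℤ) : ℝ) := by
        rw [det_formula, hb00, hb01, hb10, hb11]; push_cast; ring
      have hpr := det_mul_symm f.linear
      rw [hdint, hdsint] at hpr
      have hpz : (a00 * a11 - a01 * a10) * (b00 * b11 - b01 * b10) = 1 := by exact_mod_cast hpr
      rcases Int.eq_one_or_neg_one_of_mul_eq_one hpz with h1 | h1
      · left; rw [hdint]; exact_mod_cast h1
      · right; rw [hdint]; exact_mod_cast h1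
    · intro x
      have hf0 : f 0 = ((mz : ℝ) / 2) • ee 0 + ((nz : ℝ) / 2) • ee 1 := by
        apply euc_ext <;>
          simp only [PiLp.add_apply, PiLp.smul_apply, smul_eq_mul,
            EuclideanSpace.single_apply, Fin.isValue, if_true, reduceIte,
            one_ne_zero, zero_ne_one, mul_one, mul_zero, add_zero, zero_add] <;>
          linarith
      rw [aff_apply f x, hf0, add_assoc]
  · rintro ⟨mz, nz, A, hA, hdet, hfx⟩
    rw [Subgroup.mem_normalizer_iff]
    have hflin : ∀ x, f.linear x = A x := by
      intro x
      have h1 := aff_apply f x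
      rw [hfx x, hfx 0, map_zero, add_zero] at h1
      have h2 := h1.symm
      rw [add_assoc, add_assoc] at h2
      exact (add_left_cancel (add_left_cancel h2))
    have hAf : ∀ i j : Fin 2, ∃ k : ℤ, f.linear (ee j) i = (k : ℝ) := fun i j => by
      rw [hflin]; exact hA i j
    have hf0 : f 0 = ((mz : ℝ) / 2) • ee 0 + ((nz : ℝ) / 2) • ee 1 := by
      rw [hfx 0, map_zero, add_zero]
    have hcf : ∀ i, ∃ k : ℤ, 2 * f 0 i = (k : ℝ) := by
      intro i
      rw [hf0]
      fin_cases i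
      · refine ⟨mz, ?_⟩
        have h5 : (((mz : ℝ)/2) • ee 0 + ((nz : ℝ)/2) • ee 1) (0 : Fin 2) = (mz : ℝ)/2 := by simp
        show (2:ℝ) * (((mz : ℝ)/2) • ee 0 + ((nz : ℝ)/2) • ee 1) (0 : Fin 2) = (mz : ℝ)
        rw [h5]; ring
      · refine ⟨nz, ?_⟩
        have h5 : (((mz : ℝ)/2) • ee 0 + ((nz : ℝ)/2) • ee 1) (1 : Fin 2) = (nz : ℝ)/2 := by simp
        show (2:ℝ) * (((mz : ℝ)/2) • ee 0 + ((nz : ℝ)/2) • ee 1) (1 : Fin 2) = (nz : ℝ)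
        rw [h5]; ring
    have hsymm : ∀ x, f.linear.symm x = A.symm x := by
      intro x
      apply A.injective
      rw [A.apply_symm_apply, ← hflin, f.linear.apply_symm_apply]
    have hAfinv : ∀ i j : Fin 2, ∃ k : ℤ, f⁻¹.linear (ee j) i = (k : ℝ) := by
      intro i j
      rw [linear_inv_eq, hsymm]
      exact symm_int hA hdet i j
    have hinv0 : f⁻¹ 0 = f.linear.symm (-(f 0)) := by
      apply f.linear.injective
      rw [f.linear.apply_symm_apply, inv_zero]
    have hcfinv : ∀ i, ∃ k : ℤ, 2 * f⁻¹ 0 i = (k : ℝ) := by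
      have hkey : A.symm (-(f 0 + f 0)) = f⁻¹ 0 + f⁻¹ 0 := by
        rw [hinv0, hsymm, neg_add, map_add]
      intro i
      have hw : IsInt (-(f 0 + f 0)) := by
        intro i'
        obtain ⟨k, hk⟩ := hcf i'
        refine ⟨-k, ?_⟩
        have : (-(f 0 + f 0)) i' = -(f 0 i' + f 0 i') := rfl
        rw [this]; push_cast; linarith
      obtain ⟨k, hk⟩ := lin_isInt (symm_int hA hdet) hw i
      rw [hkey] at hk
      refine ⟨k, ?_⟩
      rw [PiLp.add_apply] at hk
      linarith
    intro h
    constructor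
    · exact fun hh => conj_mem hAf hcf hh
    · intro hh
      have h9 := conj_mem hAfinv hcfinv hh
      rwa [show f⁻¹ * (f * h * f⁻¹) * f⁻¹⁻¹ = h by group] at h9
end SA
end

/-- Lemma 44 (normalizer computation): for `M = ⟨e₁+I, e₂+I, -I⟩` acting on `ℝ²`, the
normalizer of `M` in the group of affinities of `ℝ²` is
`{(m/2)e₁ + (n/2)e₂ + A : m, n ∈ ℤ, A ∈ GL(2,ℤ)}`. -/
theorem stmt18 :
    ∀ f : AffG 2,
      f ∈ Subgroup.normalizer ((Subgroup.closure
        ({transl (EuclideanSpace.single (0 : Fin 2) (1 : ℝ)),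
          transl (EuclideanSpace.single (1 : Fin 2) (1 : ℝ)),
          (LinearEquiv.neg ℝ (M := Euc 2)).toAffineEquiv} : Set (AffG 2))) : Set (AffG 2)) ↔
      ∃ (mz nz : ℤ) (A : Euc 2 ≃ₗ[ℝ] Euc 2),
        (∀ i j : Fin 2, ∃ k : ℤ, A (EuclideanSpace.single j (1 : ℝ)) i = (k : ℝ)) ∧
        (LinearMap.det A.toLinearMap = 1 ∨ LinearMap.det A.toLinearMap = -1) ∧
        (∀ x : Euc 2, f x = ((mz : ℝ) / 2) • EuclideanSpace.single (0 : Fin 2) (1 : ℝ) +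
          ((nz : ℝ) / 2) • EuclideanSpace.single (1 : Fin 2) (1 : ℝ) + A x) :=
  SA.main
end
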